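/- arXiv:1609.03686 — 5 statements merged into one kernel-verified Lean document; each statement's English description precedes it below -/
import Mathlib

section
/- With the setup of the nearest-neighbor indicator a and random permutation π on N = 2n points, define D₁₂ = Σ_{i,j} a(i,j)·1[π(i) ∈ {1,...,n}]·1[π(j) ∈ {n+1,...,N}], let 2C₁ = Σ_{i,j} a(i,j)a(j,i) (twice the number of mutual nearest-neighbor pairs) and 2C₂ = Σ_{i,l,j: i≠l} a(i,j)a(l,j) (twice the number of pairs sharing a nearest neighbor). Then E(D₁₂²) = N²/(4(N−1)) + (N/(8(N−1)))·2C₂ + (N(N−2)/(16(N−1)(N−3)))·(N² − 3N + 2C₁ − 2C₂). -/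
open Finset
namespace NN4
variable (n : ℕ)

def gg (x : Fin (2*n)) : ℝ := if (x:ℕ) < n then 1 else 0
def hh (x : Fin (2*n)) : ℝ := if n ≤ (x:ℕ) then 1 else 0

lemma sum_gg : ∑ x : Fin (2*n), gg n x = n := by
  unfold gg
  rw [Fin.sum_univ_eq_sum_range (fun i => if i < n then (1:ℝ) else 0)]
  rw [Finset.sum_ite, Finset.sum_const, Finset.sum_const_zero]
  have : (Finset.range (2*n)).filter (fun i => i < n) = Finset.range n := by
    ext x; simp; omega
  simp [this]

lemma sum_hh : ∑ x : Fin (2*n), hh n x = n := by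
  unfold hh
  rw [Fin.sum_univ_eq_sum_range (fun i => if n ≤ i then (1:ℝ) else 0)]
  rw [Finset.sum_ite, Finset.sum_const, Finset.sum_const_zero]
  have : (Finset.range (2*n)).filter (fun i => n ≤ i) = (Finset.range (2*n)).filter (fun i => ¬ i < n) := by
    ext x; simp [not_lt]
  rw [this, Finset.filter_not, Finset.card_sdiff_of_subset (Finset.filter_subset _ _)]
  have : (Finset.range (2*n)).filter (fun i => i < n) = Finset.range n := by ext x; simp; omega
  simp [this]
  omega

lemma sum_gg_comp (σ : Equiv.Perm (Fin (2*n))) : ∑ i, gg n (σ i) = n := by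
  rw [Equiv.sum_comp σ (gg n), sum_gg]

lemma sum_hh_comp (σ : Equiv.Perm (Fin (2*n))) : ∑ i, hh n (σ i) = n := by
  rw [Equiv.sum_comp σ (hh n), sum_hh]

def S1 (l : Fin (2*n)) : ℝ := ∑ σ : Equiv.Perm (Fin (2*n)), hh n (σ l)
def S2 (k l : Fin (2*n)) : ℝ := ∑ σ : Equiv.Perm (Fin (2*n)), gg n (σ k) * hh n (σ l)
def S3 (j k l : Fin (2*n)) : ℝ := ∑ σ : Equiv.Perm (Fin (2*n)), hh n (σ j) * (gg n (σ k) * hh n (σ l))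
def S3b (i k j : Fin (2*n)) : ℝ := ∑ σ : Equiv.Perm (Fin (2*n)), gg n (σ i) * (gg n (σ k) * hh n (σ j))
def S4 (i j k l : Fin (2*n)) : ℝ := ∑ σ : Equiv.Perm (Fin (2*n)), gg n (σ i) * (hh n (σ j) * (gg n (σ k) * hh n (σ l)))

lemma sum_comp_perm (τ : Equiv.Perm (Fin (2*n))) (F : Equiv.Perm (Fin (2*n)) → ℝ) :
    ∑ σ : Equiv.Perm (Fin (2*n)), F (σ * τ) = ∑ σ : Equiv.Perm (Fin (2*n)), F σ :=
  Equiv.sum_comp (Equiv.mulRight τ) F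

lemma S1_comp (τ : Equiv.Perm (Fin (2*n))) (l : Fin (2*n)) : S1 n (τ l) = S1 n l := by
  have := sum_comp_perm n τ (fun σ => hh n (σ l))
  simp only [Equiv.Perm.mul_apply] at this
  exact this

lemma S2_comp (τ : Equiv.Perm (Fin (2*n))) (k l : Fin (2*n)) : S2 n (τ k) (τ l) = S2 n k l := by
  have := sum_comp_perm n τ (fun σ => gg n (σ k) * hh n (σ l))
  simp only [Equiv.Perm.mul_apply] at this
  exact this

lemma S3_comp (τ : Equiv.Perm (Fin (2*n))) (j k l : Fin (2*n)) : S3 n (τ j) (τ k) (τ l) = S3 n j k l := by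
  have := sum_comp_perm n τ (fun σ => hh n (σ j) * (gg n (σ k) * hh n (σ l)))
  simp only [Equiv.Perm.mul_apply] at this
  exact this

lemma S3b_comp (τ : Equiv.Perm (Fin (2*n))) (i k j : Fin (2*n)) : S3b n (τ i) (τ k) (τ j) = S3b n i k j := by
  have := sum_comp_perm n τ (fun σ => gg n (σ i) * (gg n (σ k) * hh n (σ j)))
  simp only [Equiv.Perm.mul_apply] at this
  exact this

lemma S4_comp (τ : Equiv.Perm (Fin (2*n))) (i j k l : Fin (2*n)) : S4 n (τ i) (τ j) (τ k) (τ l) = S4 n i j k l := by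
  have := sum_comp_perm n τ (fun σ => gg n (σ i) * (hh n (σ j) * (gg n (σ k) * hh n (σ l))))
  simp only [Equiv.Perm.mul_apply] at this
  exact this

-- constancy lemmas
lemma S1_const (l l' : Fin (2*n)) : S1 n l' = S1 n l := by
  have := S1_comp n (Equiv.swap l l') l'
  rw [Equiv.swap_apply_right] at this
  exact this.symm

lemma S2_const (k k' l : Fin (2*n)) (hk : k ≠ l) (hk' : k' ≠ l) : S2 n k' l = S2 n k l := by
  have := S2_comp n (Equiv.swap k k') k' l
  rw [Equiv.swap_apply_right,
    Equiv.swap_apply_of_ne_of_ne (Ne.symm hk) (Ne.symm hk')] at this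
  exact this.symm

lemma S3_const (j j' k l : Fin (2*n)) (h1 : j ≠ k) (h2 : j ≠ l) (h1' : j' ≠ k) (h2' : j' ≠ l) :
    S3 n j' k l = S3 n j k l := by
  have := S3_comp n (Equiv.swap j j') j' k l
  rw [Equiv.swap_apply_right,
    Equiv.swap_apply_of_ne_of_ne (Ne.symm h1) (Ne.symm h1'),
    Equiv.swap_apply_of_ne_of_ne (Ne.symm h2) (Ne.symm h2')] at this
  exact this.symm

lemma S3b_const (i i' k j : Fin (2*n)) (h1 : i ≠ k) (h2 : i ≠ j) (h1' : i' ≠ k) (h2' : i' ≠ j) :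
    S3b n i' k j = S3b n i k j := by
  have := S3b_comp n (Equiv.swap i i') i' k j
  rw [Equiv.swap_apply_right,
    Equiv.swap_apply_of_ne_of_ne (Ne.symm h1) (Ne.symm h1'),
    Equiv.swap_apply_of_ne_of_ne (Ne.symm h2) (Ne.symm h2')] at this
  exact this.symm

lemma S4_const (i i' j k l : Fin (2*n)) (h1 : i ≠ j) (h2 : i ≠ k) (h3 : i ≠ l)
    (h1' : i' ≠ j) (h2' : i' ≠ k) (h3' : i' ≠ l) :
    S4 n i' j k l = S4 n i j k l := by
  have := S4_comp n (Equiv.swap i i') i' j k l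
  rw [Equiv.swap_apply_right,
    Equiv.swap_apply_of_ne_of_ne (Ne.symm h1) (Ne.symm h1'),
    Equiv.swap_apply_of_ne_of_ne (Ne.symm h2) (Ne.symm h2'),
    Equiv.swap_apply_of_ne_of_ne (Ne.symm h3) (Ne.symm h3')] at this
  exact this.symm


-- pointwise lemmas
lemma pw2 (x : Fin (2*n)) : ((n:ℝ) - gg n x) * hh n x = n * hh n x := by
  unfold gg hh; split_ifs <;> first | ring1 | (exfalso; omega)

lemma pw3 (x y : Fin (2*n)) :
    ((n:ℝ) - hh n x - hh n y) * (gg n x * hh n y) = ((n:ℝ)-1) * (gg n x * hh n y) := by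
  unfold gg hh; split_ifs <;> first | ring1 | (exfalso; omega)

lemma pw3b (x y : Fin (2*n)) :
    ((n:ℝ) - gg n x - gg n y) * (gg n x * hh n y) = ((n:ℝ)-1) * (gg n x * hh n y) := by
  unfold gg hh; split_ifs <;> first | ring1 | (exfalso; omega)

lemma pw4 (x y z : Fin (2*n)) :
    ((n:ℝ) - gg n x - gg n y - gg n z) * (hh n x * (gg n y * hh n z)) =
      ((n:ℝ)-1) * (hh n x * (gg n y * hh n z)) := by
  unfold gg hh; split_ifs <;> first | ring1 | (exfalso; omega)

lemma pwW1 (x y : Fin (2*n)) : (gg n x * hh n y) * (gg n x * hh n y) = gg n x * hh n y := by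
  unfold gg hh; split_ifs <;> first | ring1 | (exfalso; omega)

lemma pwW2 (x y z : Fin (2*n)) : (gg n x * hh n y) * (gg n z * hh n y) = gg n x * (gg n z * hh n y) := by
  unfold gg hh; split_ifs <;> first | ring1 | (exfalso; omega)

lemma pwW3 (x y z : Fin (2*n)) : (gg n x * hh n y) * (gg n y * hh n z) = 0 := by
  unfold gg hh; split_ifs <;> first | ring1 | (exfalso; omega)

lemma pwW4 (x y z : Fin (2*n)) : (gg n x * hh n y) * (gg n z * hh n x) = 0 := by
  unfold gg hh; split_ifs <;> first | ring1 | (exfalso; omega)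


noncomputable def CP (n : ℕ) : ℝ := (Fintype.card (Equiv.Perm (Fin (2*n))) : ℝ)
noncomputable def V1 (n : ℕ) : ℝ := n * CP n / (2*n)
noncomputable def V2 (n : ℕ) : ℝ := n * V1 n / (2*n-1)
noncomputable def V3 (n : ℕ) : ℝ := ((n:ℝ)-1) * V2 n / (2*n-2)
noncomputable def V4 (n : ℕ) : ℝ := ((n:ℝ)-1) * V3 n / (2*n-3)

lemma hn_cast (hn : 2 ≤ n) : (2:ℝ) ≤ (n:ℝ) := by exact_mod_cast hn

lemma S1_val (hn : 2 ≤ n) (l : Fin (2*n)) : S1 n l = V1 n := by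
  have h1 : ∑ l' : Fin (2*n), S1 n l' = (2*(n:ℝ)) * S1 n l := by
    calc ∑ l' : Fin (2*n), S1 n l' = ∑ _l' : Fin (2*n), S1 n l :=
          Finset.sum_congr rfl (fun l' _ => S1_const n l l')
      _ = (univ : Finset (Fin (2*n))).card • S1 n l := Finset.sum_const _
      _ = (2*(n:ℝ)) * S1 n l := by
          rw [nsmul_eq_mul, Finset.card_univ, Fintype.card_fin]; push_cast; ring
  have h2 : ∑ l' : Fin (2*n), S1 n l' = (n:ℝ) * CP n := by
    unfold S1
    rw [Finset.sum_comm, Finset.sum_congr rfl (fun σ _ => sum_hh_comp n σ), Finset.sum_const,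
      nsmul_eq_mul, Finset.card_univ]
    unfold CP
    exact mul_comm _ _
  have h2n : (2*(n:ℝ)) ≠ 0 := by have := hn_cast n hn; linarith
  have hmain := h1.symm.trans h2
  unfold V1
  rw [eq_div_iff (by push_cast; exact h2n)]
  push_cast
  linarith [hmain]

lemma S2_val (hn : 2 ≤ n) (k l : Fin (2*n)) (hkl : k ≠ l) : S2 n k l = V2 n := by
  have hcard : (((univ : Finset (Fin (2*n))).erase l).card : ℝ) = 2*(n:ℝ) - 1 := by
    have hnat : ((univ : Finset (Fin (2*n))).erase l).card = 2*n - 1 := by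
      rw [Finset.card_erase_of_mem (Finset.mem_univ l), Finset.card_univ, Fintype.card_fin]
    rw [hnat, Nat.cast_sub (by omega)]; push_cast; ring
  have h1 : ∑ k' ∈ univ.erase l, S2 n k' l = (2*(n:ℝ) - 1) * S2 n k l := by
    calc ∑ k' ∈ univ.erase l, S2 n k' l = ∑ _k' ∈ univ.erase l, S2 n k l :=
          Finset.sum_congr rfl (fun k' hk' => S2_const n k k' l hkl (Finset.mem_erase.mp hk').1)
      _ = ((univ : Finset (Fin (2*n))).erase l).card • S2 n k l := Finset.sum_const _
      _ = (2*(n:ℝ) - 1) * S2 n k l := by rw [nsmul_eq_mul, hcard]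
  have h2 : ∑ k' ∈ univ.erase l, S2 n k' l = (n:ℝ) * S1 n l := by
    unfold S2 S1
    rw [Finset.sum_comm, Finset.mul_sum]
    refine Finset.sum_congr rfl (fun σ _ => ?_)
    rw [← Finset.sum_mul, Finset.sum_erase_eq_sub (Finset.mem_univ l), sum_gg_comp]
    exact pw2 n (σ l)
  have hne : (2*(n:ℝ) - 1) ≠ 0 := by have := hn_cast n hn; linarith
  have hmain := h1.symm.trans h2
  rw [S1_val n hn l] at hmain
  unfold V2
  rw [eq_div_iff (by push_cast; exact hne)]
  push_cast
  linarith [hmain]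

lemma S3_val (hn : 2 ≤ n) (j k l : Fin (2*n)) (hjk : j ≠ k) (hjl : j ≠ l) (hkl : k ≠ l) :
    S3 n j k l = V3 n := by
  have hlk : l ∈ (univ : Finset (Fin (2*n))).erase k := by
    rw [Finset.mem_erase]; exact ⟨Ne.symm hkl, Finset.mem_univ l⟩
  have hcard : ((((univ : Finset (Fin (2*n))).erase k).erase l).card : ℝ) = 2*(n:ℝ) - 2 := by
    have hnat : (((univ : Finset (Fin (2*n))).erase k).erase l).card = 2*n - 2 := by
      rw [Finset.card_erase_of_mem hlk, Finset.card_erase_of_mem (Finset.mem_univ k),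
        Finset.card_univ, Fintype.card_fin]
      omega
    rw [hnat, Nat.cast_sub (by omega)]; push_cast; ring
  have h1 : ∑ j' ∈ (univ.erase k).erase l, S3 n j' k l = (2*(n:ℝ) - 2) * S3 n j k l := by
    calc ∑ j' ∈ (univ.erase k).erase l, S3 n j' k l
        = ∑ _j' ∈ (univ.erase k).erase l, S3 n j k l := by
          refine Finset.sum_congr rfl (fun j' hj' => ?_)
          rw [Finset.mem_erase] at hj'
          exact S3_const n j j' k l hjk hjl (Finset.mem_erase.mp hj'.2).1 hj'.1
      _ = (((univ : Finset (Fin (2*n))).erase k).erase l).card • S3 n j k l := Finset.sum_const _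
      _ = (2*(n:ℝ) - 2) * S3 n j k l := by rw [nsmul_eq_mul, hcard]
  have h2 : ∑ j' ∈ (univ.erase k).erase l, S3 n j' k l = ((n:ℝ) - 1) * S2 n k l := by
    unfold S3 S2
    rw [Finset.sum_comm, Finset.mul_sum]
    refine Finset.sum_congr rfl (fun σ _ => ?_)
    rw [← Finset.sum_mul, Finset.sum_erase_eq_sub hlk,
      Finset.sum_erase_eq_sub (Finset.mem_univ k), sum_hh_comp]
    exact pw3 n (σ k) (σ l)
  have hne : (2*(n:ℝ) - 2) ≠ 0 := by have := hn_cast n hn; linarith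
  have hmain := h1.symm.trans h2
  rw [S2_val n hn k l hkl] at hmain
  unfold V3
  rw [eq_div_iff (by push_cast; exact hne)]
  push_cast
  linarith [hmain]

lemma S3b_val (hn : 2 ≤ n) (i k j : Fin (2*n)) (hik : i ≠ k) (hij : i ≠ j) (hkj : k ≠ j) :
    S3b n i k j = V3 n := by
  have hjk : j ∈ (univ : Finset (Fin (2*n))).erase k := by
    rw [Finset.mem_erase]; exact ⟨Ne.symm hkj, Finset.mem_univ j⟩
  have hcard : ((((univ : Finset (Fin (2*n))).erase k).erase j).card : ℝ) = 2*(n:ℝ) - 2 := by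
    have hnat : (((univ : Finset (Fin (2*n))).erase k).erase j).card = 2*n - 2 := by
      rw [Finset.card_erase_of_mem hjk, Finset.card_erase_of_mem (Finset.mem_univ k),
        Finset.card_univ, Fintype.card_fin]
      omega
    rw [hnat, Nat.cast_sub (by omega)]; push_cast; ring
  have h1 : ∑ i' ∈ (univ.erase k).erase j, S3b n i' k j = (2*(n:ℝ) - 2) * S3b n i k j := by
    calc ∑ i' ∈ (univ.erase k).erase j, S3b n i' k j
        = ∑ _i' ∈ (univ.erase k).erase j, S3b n i k j := by
          refine Finset.sum_congr rfl (fun i' hi' => ?_)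
          rw [Finset.mem_erase] at hi'
          exact S3b_const n i i' k j hik hij (Finset.mem_erase.mp hi'.2).1 hi'.1
      _ = (((univ : Finset (Fin (2*n))).erase k).erase j).card • S3b n i k j := Finset.sum_const _
      _ = (2*(n:ℝ) - 2) * S3b n i k j := by rw [nsmul_eq_mul, hcard]
  have h2 : ∑ i' ∈ (univ.erase k).erase j, S3b n i' k j = ((n:ℝ) - 1) * S2 n k j := by
    unfold S3b S2
    rw [Finset.sum_comm, Finset.mul_sum]
    refine Finset.sum_congr rfl (fun σ _ => ?_)
    rw [← Finset.sum_mul, Finset.sum_erase_eq_sub hjk,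
      Finset.sum_erase_eq_sub (Finset.mem_univ k), sum_gg_comp]
    exact pw3b n (σ k) (σ j)
  have hne : (2*(n:ℝ) - 2) ≠ 0 := by have := hn_cast n hn; linarith
  have hmain := h1.symm.trans h2
  rw [S2_val n hn k j hkj] at hmain
  unfold V3
  rw [eq_div_iff (by push_cast; exact hne)]
  push_cast
  linarith [hmain]

lemma S4_val (hn : 2 ≤ n) (i j k l : Fin (2*n)) (hij : i ≠ j) (hik : i ≠ k) (hil : i ≠ l)
    (hjk : j ≠ k) (hjl : j ≠ l) (hkl : k ≠ l) :
    S4 n i j k l = V4 n := by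
  have hkj : k ∈ (univ : Finset (Fin (2*n))).erase j := by
    rw [Finset.mem_erase]; exact ⟨Ne.symm hjk, Finset.mem_univ k⟩
  have hlj : l ∈ ((univ : Finset (Fin (2*n))).erase j).erase k := by
    rw [Finset.mem_erase, Finset.mem_erase]
    exact ⟨Ne.symm hkl, Ne.symm hjl, Finset.mem_univ l⟩
  have hcard : (((((univ : Finset (Fin (2*n))).erase j).erase k).erase l).card : ℝ)
      = 2*(n:ℝ) - 3 := by
    have hnat : ((((univ : Finset (Fin (2*n))).erase j).erase k).erase l).card = 2*n - 3 := by
      rw [Finset.card_erase_of_mem hlj, Finset.card_erase_of_mem hkj,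
        Finset.card_erase_of_mem (Finset.mem_univ j), Finset.card_univ, Fintype.card_fin]
      omega
    rw [hnat, Nat.cast_sub (by omega)]; push_cast; ring
  have h1 : ∑ i' ∈ ((univ.erase j).erase k).erase l, S4 n i' j k l
      = (2*(n:ℝ) - 3) * S4 n i j k l := by
    calc ∑ i' ∈ ((univ.erase j).erase k).erase l, S4 n i' j k l
        = ∑ _i' ∈ ((univ.erase j).erase k).erase l, S4 n i j k l := by
          refine Finset.sum_congr rfl (fun i' hi' => ?_)
          rw [Finset.mem_erase] at hi'
          have h2' := Finset.mem_erase.mp hi'.2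
          have h3' := Finset.mem_erase.mp h2'.2
          exact S4_const n i i' j k l hij hik hil h3'.1 h2'.1 hi'.1
      _ = ((((univ : Finset (Fin (2*n))).erase j).erase k).erase l).card • S4 n i j k l :=
          Finset.sum_const _
      _ = (2*(n:ℝ) - 3) * S4 n i j k l := by rw [nsmul_eq_mul, hcard]
  have h2 : ∑ i' ∈ ((univ.erase j).erase k).erase l, S4 n i' j k l
      = ((n:ℝ) - 1) * S3 n j k l := by
    unfold S4 S3
    rw [Finset.sum_comm, Finset.mul_sum]
    refine Finset.sum_congr rfl (fun σ _ => ?_)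
    rw [← Finset.sum_mul, Finset.sum_erase_eq_sub hlj, Finset.sum_erase_eq_sub hkj,
      Finset.sum_erase_eq_sub (Finset.mem_univ j), sum_gg_comp]
    exact pw4 n (σ j) (σ k) (σ l)
  have hne : (2*(n:ℝ) - 3) ≠ 0 := by have := hn_cast n hn; linarith
  have hmain := h1.symm.trans h2
  rw [S3_val n hn j k l hjk hjl hkl] at hmain
  unfold V4
  rw [eq_div_iff (by push_cast; exact hne)]
  push_cast
  linarith [hmain]

end NN4


set_option maxHeartbeats 2000000 in
theorem stmt4 (n : ℕ) (hn : 2 ≤ n) (a : Fin (2 * n) → Fin (2 * n) → ℕ)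
    (ha01 : ∀ i j, a i j ≤ 1) (hdiag : ∀ i, a i i = 0)
    (hrow : ∀ i, ∑ j, a i j = 1)
    (D : Equiv.Perm (Fin (2 * n)) → ℝ)
    (hD : ∀ σ, D σ = ∑ i, ∑ j, (a i j : ℝ) *
      (if (σ i : ℕ) < n then 1 else 0) * (if n ≤ (σ j : ℕ) then 1 else 0))
    (N twoC1 twoC2 : ℝ)
    (hN : N = (2 * n : ℕ))
    (hC1 : twoC1 = ∑ i, ∑ j, (a i j : ℝ) * (a j i : ℝ))
    (hC2 : twoC2 = ∑ i, ∑ l, ∑ j, if i ≠ l then (a i j : ℝ) * (a l j : ℝ) else 0) :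
    (∑ σ : Equiv.Perm (Fin (2 * n)), (D σ) ^ 2) /
      (Fintype.card (Equiv.Perm (Fin (2 * n))) : ℝ) =
    N ^ 2 / (4 * (N - 1)) + (N / (8 * (N - 1))) * twoC2 +
      (N * (N - 2) / (16 * (N - 1) * (N - 3))) * (N ^ 2 - 3 * N + twoC1 - twoC2) := by
  classical
  -- extract the nearest neighbor function
  have hex : ∀ i, ∃ j, a i j = 1 ∧ ∀ j', j' ≠ j → a i j' = 0 := by
    intro i
    obtain ⟨j, hj⟩ : ∃ j, a i j ≠ 0 := by
      by_contra hc; push_neg at hc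
      have h0 : ∑ j, a i j = 0 := Finset.sum_eq_zero (fun j _ => hc j)
      rw [hrow i] at h0; omega
    have hj1 : a i j = 1 := le_antisymm (ha01 i j) (Nat.one_le_iff_ne_zero.mpr hj)
    refine ⟨j, hj1, fun j' hj' => ?_⟩
    have hsplit := Finset.add_sum_erase Finset.univ (a i) (Finset.mem_univ j)
    rw [hrow i] at hsplit
    have h0 : ∑ x ∈ Finset.univ.erase j, a i x = 0 := by omega
    exact Finset.sum_eq_zero_iff.mp h0 j' (Finset.mem_erase.mpr ⟨hj', Finset.mem_univ j'⟩)
  choose nb hnb1 hnb2 using hex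
  have ha_eqR : ∀ i j, (a i j : ℝ) = if j = nb i then 1 else 0 := by
    intro i j
    by_cases h : j = nb i
    · subst h; simp [hnb1 i]
    · simp [h, hnb2 i j h]
  have hnbne : ∀ i, nb i ≠ i := by
    intro i h
    have h1 := hnb1 i
    rw [h, hdiag i] at h1
    omega
  -- rewrite D
  have hD2 : ∀ σ : Equiv.Perm (Fin (2*n)),
      D σ = ∑ i, NN4.gg n (σ i) * NN4.hh n (σ (nb i)) := by
    intro σ
    rw [hD σ]
    refine Finset.sum_congr rfl (fun i _ => ?_)
    calc ∑ j, (a i j : ℝ) * (if (σ i : ℕ) < n then 1 else 0) * (if n ≤ (σ j : ℕ) then 1 else 0)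
        = ∑ j, (if j = nb i then NN4.gg n (σ i) * NN4.hh n (σ j) else 0) := by
          refine Finset.sum_congr rfl (fun j _ => ?_)
          rw [ha_eqR i j]
          unfold NN4.gg NN4.hh
          split_ifs <;> ring
      _ = NN4.gg n (σ i) * NN4.hh n (σ (nb i)) := by
          rw [Finset.sum_ite_eq' Finset.univ (nb i) (fun j => NN4.gg n (σ i) * NN4.hh n (σ j))]
          simp
  -- counting identities
  have hC1' : twoC1 = ∑ i : Fin (2*n), (if nb (nb i) = i then (1:ℝ) else 0) := by
    rw [hC1]
    refine Finset.sum_congr rfl (fun i _ => ?_)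
    calc ∑ j, (a i j : ℝ) * (a j i : ℝ)
        = ∑ j, (if j = nb i then (if nb j = i then (1:ℝ) else 0) else 0) := by
          refine Finset.sum_congr rfl (fun j _ => ?_)
          rw [ha_eqR i j, ha_eqR j i]
          by_cases h1 : j = nb i
          · rw [if_pos h1, if_pos h1, one_mul]
            exact if_congr eq_comm rfl rfl
          · rw [if_neg h1, if_neg h1, zero_mul]
      _ = (if nb (nb i) = i then (1:ℝ) else 0) := by
          rw [Finset.sum_ite_eq' Finset.univ (nb i) (fun j => if nb j = i then (1:ℝ) else 0)]
          simp
  have hC2' : twoC2 = ∑ i : Fin (2*n), ∑ k : Fin (2*n),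
      (if i ≠ k ∧ nb i = nb k then (1:ℝ) else 0) := by
    rw [hC2]
    refine Finset.sum_congr rfl (fun i _ => ?_)
    refine Finset.sum_congr rfl (fun k _ => ?_)
    by_cases h : i = k
    · simp [h]
    · have hne : i ≠ k := h
      calc ∑ j, (if i ≠ k then (a i j : ℝ) * (a k j : ℝ) else 0)
          = ∑ j, (a i j : ℝ) * (a k j : ℝ) :=
            Finset.sum_congr rfl (fun j _ => if_pos hne)
        _ = ∑ j, (if j = nb i then (if nb i = nb k then (1:ℝ) else 0) else 0) := by
            refine Finset.sum_congr rfl (fun j _ => ?_)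
            rw [ha_eqR i j, ha_eqR k j]
            by_cases h1 : j = nb i
            · rw [if_pos h1, if_pos h1, one_mul, h1]
            · rw [if_neg h1, if_neg h1, zero_mul]
        _ = (if nb i = nb k then (1:ℝ) else 0) := by
            rw [Finset.sum_ite_eq' Finset.univ (nb i)
              (fun _ => if nb i = nb k then (1:ℝ) else 0)]
            simp
        _ = (if i ≠ k ∧ nb i = nb k then (1:ℝ) else 0) := by simp [hne]
  -- the master sum
  have hsum : ∑ σ : Equiv.Perm (Fin (2*n)), (D σ)^2
      = ∑ i : Fin (2*n), ∑ k : Fin (2*n),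
          (if i = k then NN4.V2 n else if nb i = nb k then NN4.V3 n
            else if nb i = k ∨ nb k = i then 0 else NN4.V4 n) := by
    have step1 : ∀ σ : Equiv.Perm (Fin (2*n)), (D σ)^2
        = ∑ i : Fin (2*n), ∑ k : Fin (2*n),
            (NN4.gg n (σ i) * NN4.hh n (σ (nb i))) * (NN4.gg n (σ k) * NN4.hh n (σ (nb k))) := by
      intro σ; rw [hD2 σ, sq, Finset.sum_mul_sum]
    rw [Finset.sum_congr rfl (fun σ _ => step1 σ), Finset.sum_comm]
    refine Finset.sum_congr rfl (fun i _ => ?_)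
    rw [Finset.sum_comm]
    refine Finset.sum_congr rfl (fun k _ => ?_)
    by_cases hik : i = k
    · subst hik
      rw [if_pos rfl]
      calc ∑ σ : Equiv.Perm (Fin (2*n)),
            (NN4.gg n (σ i) * NN4.hh n (σ (nb i))) * (NN4.gg n (σ i) * NN4.hh n (σ (nb i)))
          = NN4.S2 n i (nb i) := by
            unfold NN4.S2
            exact Finset.sum_congr rfl (fun σ _ => NN4.pwW1 n (σ i) (σ (nb i)))
        _ = NN4.V2 n := NN4.S2_val n hn i (nb i) (Ne.symm (hnbne i))
    · rw [if_neg hik]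
      by_cases hnn : nb i = nb k
      · rw [if_pos hnn]
        have hkni : k ≠ nb i := by
          intro h; rw [hnn] at h; exact hnbne k h.symm
        calc ∑ σ : Equiv.Perm (Fin (2*n)),
              (NN4.gg n (σ i) * NN4.hh n (σ (nb i))) * (NN4.gg n (σ k) * NN4.hh n (σ (nb k)))
            = NN4.S3b n i k (nb i) := by
              unfold NN4.S3b
              refine Finset.sum_congr rfl (fun σ _ => ?_)
              rw [← hnn]
              exact NN4.pwW2 n (σ i) (σ (nb i)) (σ k)
          _ = NN4.V3 n := NN4.S3b_val n hn i k (nb i) hik (Ne.symm (hnbne i)) hkni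
      · rw [if_neg hnn]
        by_cases hor : nb i = k ∨ nb k = i
        · rw [if_pos hor]
          rcases hor with h | h
          · refine Finset.sum_eq_zero (fun σ _ => ?_)
            rw [h]
            exact NN4.pwW3 n (σ i) (σ k) (σ (nb k))
          · refine Finset.sum_eq_zero (fun σ _ => ?_)
            rw [h]
            exact NN4.pwW4 n (σ i) (σ (nb i)) (σ k)
        · rw [if_neg hor]
          push_neg at hor
          calc ∑ σ : Equiv.Perm (Fin (2*n)),
                (NN4.gg n (σ i) * NN4.hh n (σ (nb i))) * (NN4.gg n (σ k) * NN4.hh n (σ (nb k)))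
              = NN4.S4 n i (nb i) k (nb k) := by
                unfold NN4.S4
                exact Finset.sum_congr rfl (fun σ _ => by ring)
            _ = NN4.V4 n := NN4.S4_val n hn i (nb i) k (nb k)
                (Ne.symm (hnbne i)) hik (Ne.symm hor.2) hor.1 hnn (Ne.symm (hnbne k))
  -- evaluate the double sum
  have hdecomp : ∀ i k : Fin (2*n),
      (if i = k then NN4.V2 n else if nb i = nb k then NN4.V3 n
        else if nb i = k ∨ nb k = i then 0 else NN4.V4 n)
      = NN4.V4 n + (if i = k then NN4.V2 n - NN4.V4 n else 0)
        + (if i ≠ k ∧ nb i = nb k then NN4.V3 n - NN4.V4 n else 0)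
        + (if nb i = k then -NN4.V4 n else 0) + (if nb k = i then -NN4.V4 n else 0)
        + (if nb i = k ∧ nb k = i then NN4.V4 n else 0) := by
    intro i k
    have h1 := hnbne i
    have h2 := hnbne k
    by_cases hik : i = k
    · subst hik
      simp [h1]
      try ring
    · by_cases hnn : nb i = nb k
      · have hb : nb i ≠ k := fun h => h2 (by rw [← hnn]; exact h)
        have hc : nb k ≠ i := fun h => h1 (by rw [hnn]; exact h)
        have hor : ¬ (nb i = k ∨ nb k = i) := by tauto
        simp [hik, hnn, hb, hc, h1, h2]
        try ring
      · by_cases hb : nb i = k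
        · by_cases hc : nb k = i
          · have hor : nb i = k ∨ nb k = i := Or.inl hb
            simp [hik, hnn, hb, hc, h1, h2, Ne.symm hik, Ne.symm h1, Ne.symm h2]
            try ring
          · have hor : nb i = k ∨ nb k = i := Or.inl hb
            have hand : ¬ (nb i = k ∧ nb k = i) := fun h => hc h.2
            simp [hik, hnn, hb, hc, h1, h2, Ne.symm hik, Ne.symm h1, Ne.symm h2]
            try ring
        · by_cases hc : nb k = i
          · have hor : nb i = k ∨ nb k = i := Or.inr hc
            have hand : ¬ (nb i = k ∧ nb k = i) := fun h => hb h.1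
            simp [hik, hnn, hb, hc, h1, h2, Ne.symm hik, Ne.symm h1, Ne.symm h2]
            try ring
          · have hor : ¬ (nb i = k ∨ nb k = i) := by tauto
            have hand : ¬ (nb i = k ∧ nb k = i) := fun h => hb h.1
            simp [hik, hnn, hb, hc, h1, h2, Ne.symm hik, Ne.symm h1, Ne.symm h2]
            try ring
  rw [hsum, Finset.sum_congr rfl (fun i _ => Finset.sum_congr rfl (fun k _ => hdecomp i k))]
  have hsplit : ∀ i : Fin (2*n),
    ∑ k : Fin (2*n), (NN4.V4 n + (if i = k then NN4.V2 n - NN4.V4 n else 0)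
        + (if i ≠ k ∧ nb i = nb k then NN4.V3 n - NN4.V4 n else 0)
        + (if nb i = k then -NN4.V4 n else 0) + (if nb k = i then -NN4.V4 n else 0)
        + (if nb i = k ∧ nb k = i then NN4.V4 n else 0))
      = (∑ _k : Fin (2*n), NN4.V4 n) + (∑ k : Fin (2*n), if i = k then NN4.V2 n - NN4.V4 n else 0)
        + (∑ k : Fin (2*n), if i ≠ k ∧ nb i = nb k then NN4.V3 n - NN4.V4 n else 0)
        + (∑ k : Fin (2*n), if nb i = k then -NN4.V4 n else 0)
        + (∑ k : Fin (2*n), if nb k = i then -NN4.V4 n else 0)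
        + (∑ k : Fin (2*n), if nb i = k ∧ nb k = i then NN4.V4 n else 0) := by
    intro i
    rw [Finset.sum_add_distrib, Finset.sum_add_distrib, Finset.sum_add_distrib,
      Finset.sum_add_distrib, Finset.sum_add_distrib]
  rw [Finset.sum_congr rfl (fun i _ => hsplit i)]
  rw [Finset.sum_add_distrib, Finset.sum_add_distrib, Finset.sum_add_distrib,
    Finset.sum_add_distrib, Finset.sum_add_distrib]
  -- evaluate each of the six pieces
  have hcardF : ((Finset.univ : Finset (Fin (2*n))).card : ℝ) = 2*(n:ℝ) := by
    rw [Finset.card_univ, Fintype.card_fin]; push_cast; ring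
  have e1 : ∑ _i : Fin (2*n), ∑ _k : Fin (2*n), NN4.V4 n = (2*(n:ℝ))^2 * NN4.V4 n := by
    rw [Finset.sum_const, Finset.sum_const, smul_smul, nsmul_eq_mul, Nat.cast_mul,
      Finset.card_univ, Fintype.card_fin]
    push_cast; ring
  have e2 : ∑ i : Fin (2*n), ∑ k : Fin (2*n), (if i = k then NN4.V2 n - NN4.V4 n else 0)
      = 2*(n:ℝ) * (NN4.V2 n - NN4.V4 n) := by
    have : ∀ i : Fin (2*n), ∑ k : Fin (2*n), (if i = k then NN4.V2 n - NN4.V4 n else 0)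
        = NN4.V2 n - NN4.V4 n := by
      intro i
      rw [Finset.sum_ite_eq Finset.univ i (fun _ => NN4.V2 n - NN4.V4 n)]
      simp
    rw [Finset.sum_congr rfl (fun i _ => this i), Finset.sum_const, nsmul_eq_mul, hcardF]
  have e3 : ∑ i : Fin (2*n), ∑ k : Fin (2*n),
      (if i ≠ k ∧ nb i = nb k then NN4.V3 n - NN4.V4 n else 0)
      = twoC2 * (NN4.V3 n - NN4.V4 n) := by
    rw [hC2', Finset.sum_mul]
    refine Finset.sum_congr rfl (fun i _ => ?_)
    rw [Finset.sum_mul]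
    refine Finset.sum_congr rfl (fun k _ => ?_)
    split_ifs <;> ring
  have e4 : ∑ i : Fin (2*n), ∑ k : Fin (2*n), (if nb i = k then -NN4.V4 n else 0)
      = 2*(n:ℝ) * (-NN4.V4 n) := by
    have : ∀ i : Fin (2*n), ∑ k : Fin (2*n), (if nb i = k then -NN4.V4 n else 0)
        = -NN4.V4 n := by
      intro i
      rw [Finset.sum_ite_eq Finset.univ (nb i) (fun _ => -NN4.V4 n)]
      simp
    rw [Finset.sum_congr rfl (fun i _ => this i), Finset.sum_const, nsmul_eq_mul, hcardF]
  have e5 : ∑ i : Fin (2*n), ∑ k : Fin (2*n), (if nb k = i then -NN4.V4 n else 0)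
      = 2*(n:ℝ) * (-NN4.V4 n) := by
    rw [Finset.sum_comm]
    have : ∀ k : Fin (2*n), ∑ i : Fin (2*n), (if nb k = i then -NN4.V4 n else 0)
        = -NN4.V4 n := by
      intro k
      rw [Finset.sum_ite_eq Finset.univ (nb k) (fun _ => -NN4.V4 n)]
      simp
    rw [Finset.sum_congr rfl (fun k _ => this k), Finset.sum_const, nsmul_eq_mul, hcardF]
  have e6 : ∑ i : Fin (2*n), ∑ k : Fin (2*n), (if nb i = k ∧ nb k = i then NN4.V4 n else 0)
      = twoC1 * NN4.V4 n := by
    rw [hC1', Finset.sum_mul]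
    refine Finset.sum_congr rfl (fun i _ => ?_)
    have hptw : ∀ k : Fin (2*n), (if nb i = k ∧ nb k = i then NN4.V4 n else 0)
        = (if nb i = k then (if nb k = i then NN4.V4 n else 0) else 0) := by
      intro k; split_ifs <;> tauto
    rw [Finset.sum_congr rfl (fun k _ => hptw k)]
    rw [Finset.sum_ite_eq Finset.univ (nb i) (fun k => if nb k = i then NN4.V4 n else 0)]
    simp only [Finset.mem_univ, if_true]
    split_ifs <;> ring
  rw [e1, e2, e3, e4, e5, e6]
  -- final algebra
  have hCP : (Fintype.card (Equiv.Perm (Fin (2 * n))) : ℝ) = NN4.CP n := rfl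
  rw [hCP]
  have hNn : N = 2*(n:ℝ) := by rw [hN]; push_cast; ring
  have hn2 : (2:ℝ) ≤ (n:ℝ) := by exact_mod_cast hn
  have hCP0 : 0 < NN4.CP n := by
    unfold NN4.CP
    exact_mod_cast Fintype.card_pos
  unfold NN4.V4 NN4.V3 NN4.V2 NN4.V1
  rw [hNn]
  have d1 : (2*(n:ℝ)) ≠ 0 := by linarith
  have d2 : (2*(n:ℝ) - 1) ≠ 0 := by linarith
  have d3 : (2*(n:ℝ) - 2) ≠ 0 := by linarith
  have d4 : (2*(n:ℝ) - 3) ≠ 0 := by linarith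
  have d5 : NN4.CP n ≠ 0 := ne_of_gt hCP0
  have d6 : ((n:ℝ) - 1) ≠ 0 := by linarith
  field_simp
  ring
end

section
/- With the setup of the nearest-neighbor indicator a on N = 2n points and a uniformly random permutation π, with D₁₂ as before and C₁, C₂ defined as the number of mutual nearest-neighbor pairs and the number of pairs sharing a nearest neighbor, Var(D₁₂) = (1/16)·( N²/(N−1) − N²/(N−1)² + 2C₁·N(N−2)/((N−1)(N−3)) + 2C₂·N(N−4)/((N−1)(N−3)) ). -/
open Finset

def fG (n : ℕ) (x : Fin (2*n)) : ℝ := if (x : ℕ) < n then 1 else 0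

lemma fG_mul_self (n : ℕ) (x : Fin (2*n)) : fG n x * fG n x = fG n x := by
  unfold fG; split <;> norm_num

lemma exists_extend {k N : ℕ} (e v : Fin k ↪ Fin N) :
    ∃ τ : Equiv.Perm (Fin N), ∀ m, τ (e m) = v m := by
  classical
  have h1 : Fintype.card {x // x ∈ Set.range e} = k :=
    (Fintype.card_congr (Equiv.ofInjective e e.injective)).symm.trans (Fintype.card_fin k)
  have h2 : Fintype.card {x // x ∈ Set.range v} = k :=
    (Fintype.card_congr (Equiv.ofInjective v v.injective)).symm.trans (Fintype.card_fin k)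
  have hcard : Fintype.card {x // ¬ x ∈ Set.range e} = Fintype.card {x // ¬ x ∈ Set.range v} := by
    rw [Fintype.card_subtype_compl, Fintype.card_subtype_compl, h1, h2]
  let e1 : {x // x ∈ Set.range e} ≃ {x // x ∈ Set.range v} :=
    (Equiv.ofInjective e e.injective).symm.trans (Equiv.ofInjective v v.injective)
  let e2 : {x // ¬ x ∈ Set.range e} ≃ {x // ¬ x ∈ Set.range v} := Fintype.equivOfCardEq hcard
  refine ⟨Equiv.subtypeCongr e1 e2, fun m => ?_⟩
  have hp : e m ∈ Set.range e := ⟨m, rfl⟩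
  have h3 : Equiv.subtypeCongr e1 e2 (e m) = (e1 ⟨e m, hp⟩ : Fin N) := by
    simp [Equiv.subtypeCongr, hp]
  rw [h3]
  simp only [e1, Equiv.trans_apply]
  have h4 : (Equiv.ofInjective e e.injective).symm ⟨e m, hp⟩ = m :=
    (Equiv.ofInjective e e.injective).injective (by simp)
  rw [h4]; simp

lemma sum_perm_comp {k N : ℕ} (h : Fin k → Fin N → ℝ) (e v : Fin k ↪ Fin N) :
    ∑ σ : Equiv.Perm (Fin N), ∏ m, h m (σ (e m))
      = ∑ σ : Equiv.Perm (Fin N), ∏ m, h m (σ (v m)) := by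
  obtain ⟨τ, hτ⟩ := exists_extend e v
  refine Fintype.sum_equiv (Equiv.mulRight τ⁻¹) _ _ fun σ => ?_
  refine Finset.prod_congr rfl fun m _ => ?_
  have : τ⁻¹ (v m) = e m := by rw [← hτ m]; simp
  simp [Equiv.Perm.mul_apply, this]

lemma sum_emb_fn (n k : ℕ) :
    ∑ w : Fin k ↪ Fin (2*n), ∏ m, fG n (w m) = (n.descFactorial k : ℝ) := by
  classical
  have h1 : ∀ w : Fin k ↪ Fin (2*n), ∏ m, fG n (w m)
      = if (∀ m, (w m : ℕ) < n) then (1:ℝ) else 0 := by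
    intro w; unfold fG; rw [Fintype.prod_boole]; congr
  have h2 : (∑ w : Fin k ↪ Fin (2*n), ∏ m, fG n (w m))
      = ∑ w : Fin k ↪ Fin (2*n), if (∀ m, (w m : ℕ) < n) then (1:ℝ) else 0 :=
    Finset.sum_congr rfl fun w _ => h1 w
  rw [h2, Finset.sum_boole]
  norm_num
  rw [← Fintype.card_subtype]
  have eq : {w : Fin k ↪ Fin (2*n) // ∀ m, (w m : ℕ) < n} ≃ (Fin k ↪ Fin n) :=
    { toFun := fun w => ⟨fun m => ⟨w.1 m, w.2 m⟩, fun x y hxy => by apply w.1.injective; apply Fin.ext; simpa using hxy⟩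
      invFun := fun u => ⟨⟨fun m => ⟨u m, by have := (u m).2; omega⟩,
        fun x y hxy => by apply u.injective; apply Fin.ext; simpa using hxy⟩, fun m => (u m).2⟩
      left_inv := fun w => by ext m : 3; rfl
      right_inv := fun u => by ext m : 2; rfl }
  rw [Fintype.card_congr eq, Fintype.card_embedding_eq, Fintype.card_fin, Fintype.card_fin]

noncomputable def mm (n r : ℕ) : ℝ :=
  ((2*n).factorial : ℝ) * (n.descFactorial r : ℝ) / ((2*n).descFactorial r : ℝ)

lemma master (n k : ℕ) (e : Fin k ↪ Fin (2*n)) :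
    ∑ σ : Equiv.Perm (Fin (2*n)), ∏ m, fG n (σ (e m)) = mm n k := by
  classical
  have hk : k ≤ 2*n := by simpa using Fintype.card_le_of_embedding e
  have hswap : ∑ v : Fin k ↪ Fin (2*n), ∑ σ : Equiv.Perm (Fin (2*n)), ∏ m, fG n (σ (v m))
      = ((2*n).factorial : ℝ) * (n.descFactorial k : ℝ) := by
    rw [Finset.sum_comm]
    have hσ : ∀ σ : Equiv.Perm (Fin (2*n)),
        ∑ v : Fin k ↪ Fin (2*n), ∏ m, fG n (σ (v m)) = (n.descFactorial k : ℝ) := by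
      intro σ
      rw [← sum_emb_fn n k]
      refine Fintype.sum_equiv (Equiv.embeddingCongr (Equiv.refl (Fin k)) σ) _ _ fun v => ?_
      refine Finset.prod_congr rfl fun m _ => ?_
      simp [Equiv.embeddingCongr]
    rw [Finset.sum_congr rfl fun σ _ => hσ σ]
    simp [Fintype.card_perm, mul_comm]
  have hconst : ∀ v : Fin k ↪ Fin (2*n),
      (∑ σ : Equiv.Perm (Fin (2*n)), ∏ m, fG n (σ (v m)))
        = ∑ σ : Equiv.Perm (Fin (2*n)), ∏ m, fG n (σ (e m)) := fun v =>
    sum_perm_comp (fun _ x => fG n x) v e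
  rw [Finset.sum_congr rfl fun v _ => hconst v, Finset.sum_const, Finset.card_univ,
    Fintype.card_embedding_eq] at hswap
  have hd : (((2*n).descFactorial k : ℕ) : ℝ) ≠ 0 := by
    have h0 : (2*n).descFactorial k ≠ 0 := by
      rw [Ne, Nat.descFactorial_eq_zero_iff_lt]; omega
    exact_mod_cast h0
  rw [mm, eq_div_iff hd]
  rw [nsmul_eq_mul] at hswap
  simp only [Fintype.card_fin] at hswap
  linarith [hswap]

lemma L2 (n : ℕ) (i j : Fin (2*n)) (hij : i ≠ j) :
    ∑ σ : Equiv.Perm (Fin (2*n)), fG n (σ i) * fG n (σ j) = mm n 2 := by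
  have hinj : Function.Injective ![i, j] := by
    intro a b hab
    fin_cases a <;> fin_cases b <;> simp_all
  have := master n 2 ⟨![i, j], hinj⟩
  simpa [Fin.prod_univ_two] using this

lemma L3 (n : ℕ) (i j k : Fin (2*n)) (hij : i ≠ j) (hik : i ≠ k) (hjk : j ≠ k) :
    ∑ σ : Equiv.Perm (Fin (2*n)), fG n (σ i) * fG n (σ j) * fG n (σ k) = mm n 3 := by
  have hinj : Function.Injective ![i, j, k] := by
    intro a b hab
    fin_cases a <;> fin_cases b <;> simp_all [hij, hik, hjk]
  have := master n 3 ⟨![i, j, k], hinj⟩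
  simpa [Fin.prod_univ_three, mul_assoc] using this

lemma L4 (n : ℕ) (i j k l : Fin (2*n)) (hij : i ≠ j) (hik : i ≠ k) (hil : i ≠ l)
    (hjk : j ≠ k) (hjl : j ≠ l) (hkl : k ≠ l) :
    ∑ σ : Equiv.Perm (Fin (2*n)), fG n (σ i) * fG n (σ j) * fG n (σ k) * fG n (σ l) = mm n 4 := by
  have hinj : Function.Injective ![i, j, k, l] := by
    intro a b hab
    fin_cases a <;> fin_cases b <;> simp_all
  have := master n 4 ⟨![i, j, k, l], hinj⟩
  simpa [Fin.prod_univ_four, mul_assoc] using this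

noncomputable def dl {N : ℕ} (x y : Fin N) : ℝ := if x = y then 1 else 0

lemma core (n : ℕ) (i j k l : Fin (2*n)) (hij : i ≠ j) (hkl : k ≠ l) :
    ∑ σ : Equiv.Perm (Fin (2*n)), fG n (σ i) * fG n (σ j) * fG n (σ k) * fG n (σ l)
      = mm n 4 + (mm n 3 - mm n 4) * (dl i k + dl i l + dl j k + dl j l)
        + (mm n 2 - 2 * mm n 3 + mm n 4) * (dl i k * dl j l + dl i l * dl j k) := by
  have sq := fG_mul_self n
  by_cases h1 : i = k <;> by_cases h2 : i = l <;> by_cases h3 : j = k <;> by_cases h4 : j = l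
  · exact absurd (h1 ▸ h2 : k = l).symm.symm hkl
  · exact absurd (h1 ▸ h2 : k = l) hkl
  · exact absurd (h1 ▸ h2 : k = l) hkl
  · exact absurd (h1 ▸ h2 : k = l) hkl
  · exact absurd (h3 ▸ h4 : k = l) hkl
  · exact absurd (h1 ▸ h3 ▸ rfl : i = j) hij
  · -- i = k, j = l
    obtain rfl := h1
    obtain rfl := h4
    have hs : ∀ σ : Equiv.Perm (Fin (2*n)),
        fG n (σ i) * fG n (σ j) * fG n (σ i) * fG n (σ j) = fG n (σ i) * fG n (σ j) := fun σ => by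
      linear_combination fG n (σ j) * fG n (σ j) * sq (σ i) + fG n (σ i) * sq (σ j)
    rw [Finset.sum_congr rfl fun σ _ => hs σ, L2 n i j hij]
    simp [dl, hij, hij.symm]; ring
  · -- i = k only
    obtain rfl := h1
    have hs : ∀ σ : Equiv.Perm (Fin (2*n)),
        fG n (σ i) * fG n (σ j) * fG n (σ i) * fG n (σ l)
          = fG n (σ i) * fG n (σ j) * fG n (σ l) := fun σ => by
      linear_combination fG n (σ j) * fG n (σ l) * sq (σ i)
    rw [Finset.sum_congr rfl fun σ _ => hs σ, L3 n i j l hij h2 h4]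
    simp [dl, hij.symm, h2, h4]
  · exact absurd (h3 ▸ h4 : k = l) hkl
  · -- i = l, j = k
    obtain rfl := h2
    obtain rfl := h3
    have hs : ∀ σ : Equiv.Perm (Fin (2*n)),
        fG n (σ i) * fG n (σ j) * fG n (σ j) * fG n (σ i) = fG n (σ i) * fG n (σ j) := fun σ => by
      linear_combination fG n (σ j) * fG n (σ j) * sq (σ i) + fG n (σ i) * sq (σ j)
    rw [Finset.sum_congr rfl fun σ _ => hs σ, L2 n i j hij]
    simp [dl, hij, hij.symm]; ring
  · exact absurd (h2 ▸ h4 ▸ rfl : i = j) hij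
  · -- i = l only
    obtain rfl := h2
    have hs : ∀ σ : Equiv.Perm (Fin (2*n)),
        fG n (σ i) * fG n (σ j) * fG n (σ k) * fG n (σ i)
          = fG n (σ i) * fG n (σ j) * fG n (σ k) := fun σ => by
      linear_combination fG n (σ j) * fG n (σ k) * sq (σ i)
    rw [Finset.sum_congr rfl fun σ _ => hs σ, L3 n i j k hij h1 h3]
    simp [dl, hij.symm, h1, h3]
  · exact absurd (h3 ▸ h4 : k = l) hkl
  · -- j = k only
    obtain rfl := h3
    have hs : ∀ σ : Equiv.Perm (Fin (2*n)),
        fG n (σ i) * fG n (σ j) * fG n (σ j) * fG n (σ l)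
          = fG n (σ i) * fG n (σ j) * fG n (σ l) := fun σ => by
      linear_combination fG n (σ i) * fG n (σ l) * sq (σ j)
    rw [Finset.sum_congr rfl fun σ _ => hs σ, L3 n i j l hij h2 h4]
    simp [dl, hij, h2, h4]
  · -- j = l only
    obtain rfl := h4
    have hs : ∀ σ : Equiv.Perm (Fin (2*n)),
        fG n (σ i) * fG n (σ j) * fG n (σ k) * fG n (σ j)
          = fG n (σ i) * fG n (σ j) * fG n (σ k) := fun σ => by
      linear_combination fG n (σ i) * fG n (σ k) * sq (σ j)
    rw [Finset.sum_congr rfl fun σ _ => hs σ, L3 n i j k hij h1 h3]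
    simp [dl, hij, h1, h3]
  · -- all distinct
    rw [L4 n i j k l hij h1 h2 h3 h4 hkl]
    simp [dl, h1, h2, h3, h4]

lemma sum_fG (n : ℕ) : ∑ x : Fin (2*n), fG n x = (n : ℝ) := by
  unfold fG
  rw [Fin.sum_univ_eq_sum_range (fun m => if m < n then (1:ℝ) else 0) (2*n)]
  rw [Finset.sum_boole]
  have : Finset.filter (fun m => m < n) (Finset.range (2*n)) = Finset.range n := by
    ext m; simp; omega
  rw [this, Finset.card_range]

lemma swap2 {M : Type*} [Fintype M] [DecidableEq M] (F : M → M → Equiv.Perm M → ℝ) :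
    ∑ σ : Equiv.Perm M, ∑ i, ∑ j, F i j σ = ∑ i, ∑ j, ∑ σ : Equiv.Perm M, F i j σ := by
  rw [Finset.sum_comm]
  exact Finset.sum_congr rfl fun i _ => Finset.sum_comm

lemma swap4 {M : Type*} [Fintype M] [DecidableEq M] (F : M → M → M → M → Equiv.Perm M → ℝ) :
    ∑ σ : Equiv.Perm M, ∑ i, ∑ k, ∑ j, ∑ l, F i k j l σ
      = ∑ i, ∑ k, ∑ j, ∑ l, ∑ σ : Equiv.Perm M, F i k j l σ := by
  rw [Finset.sum_comm]
  refine Finset.sum_congr rfl fun i _ => ?_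
  rw [Finset.sum_comm]
  refine Finset.sum_congr rfl fun k _ => ?_
  rw [Finset.sum_comm]
  exact Finset.sum_congr rfl fun j _ => Finset.sum_comm

section moments
variable {n : ℕ} {a : Fin (2*n) → Fin (2*n) → ℕ}

lemma haR (hrow : ∀ i, ∑ j, a i j = 1) : ∀ i, ∑ j, (a i j : ℝ) = 1 := by
  intro i
  rw [← Nat.cast_sum, hrow i, Nat.cast_one]

lemma haTot (hrow : ∀ i, ∑ j, a i j = 1) : ∑ i, ∑ j, (a i j : ℝ) = (2*n : ℝ) := by
  rw [Finset.sum_congr rfl fun i _ => haR hrow i]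
  simp [Finset.card_univ]

lemma hcol {n : ℕ} (g : Fin (2*n) → ℝ) (t : Fin (2*n)) : ∑ l, g l * dl t l = g t := by
  simp [dl, mul_ite, mul_one, mul_zero, Finset.sum_ite_eq]

lemma hcol' {n : ℕ} (g : Fin (2*n) → ℝ) (t : Fin (2*n)) : ∑ l, g l * dl l t = g t := by
  simp [dl, mul_ite, mul_one, mul_zero, Finset.sum_ite_eq']

lemma sum_dl {n : ℕ} : ∑ i : Fin (2*n), ∑ k : Fin (2*n), dl i k = (2*n : ℝ) := by
  have : ∀ i : Fin (2*n), ∑ k, dl i k = 1 := fun i => by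
    simpa using hcol (fun _ => (1:ℝ)) i
  rw [Finset.sum_congr rfl fun i _ => this i]
  simp [Finset.card_univ]

lemma momentsQ1 (hrow : ∀ i, ∑ j, a i j = 1) (hdiag : ∀ i, a i i = 0) :
    ∑ σ : Equiv.Perm (Fin (2*n)), ∑ i, ∑ j, (a i j : ℝ) * (fG n (σ i) * fG n (σ j))
      = (2*n : ℝ) * mm n 2 := by
  rw [swap2]
  have h1 : ∀ i j : Fin (2*n), ∑ σ : Equiv.Perm (Fin (2*n)),
      (a i j : ℝ) * (fG n (σ i) * fG n (σ j)) = (a i j : ℝ) * mm n 2 := by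
    intro i j
    rw [← Finset.mul_sum]
    rcases eq_or_ne i j with rfl | hij
    · simp [hdiag i]
    · rw [L2 n i j hij]
  rw [Finset.sum_congr rfl fun i _ => Finset.sum_congr rfl fun j _ => h1 i j]
  simp only [← Finset.sum_mul]
  rw [haTot hrow]

lemma hasq (ha01 : ∀ i j, a i j ≤ 1) (i j : Fin (2*n)) :
    (a i j : ℝ) * (a i j : ℝ) = (a i j : ℝ) := by
  rcases Nat.le_one_iff_eq_zero_or_eq_one.mp (ha01 i j) with h | h <;> rw [h] <;> norm_num

lemma momentsQ2 (hrow : ∀ i, ∑ j, a i j = 1) (hdiag : ∀ i, a i i = 0)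
    (ha01 : ∀ i j, a i j ≤ 1) :
    ∑ σ : Equiv.Perm (Fin (2*n)), (∑ i, ∑ j, (a i j : ℝ) * (fG n (σ i) * fG n (σ j)))^2
      = mm n 4 * ((2*n:ℝ)*(2*n:ℝ))
        + (mm n 3 - mm n 4) * (3*(2*n:ℝ)
            + ((∑ i, ∑ l, ∑ j, if i ≠ l then (a i j : ℝ)*(a l j : ℝ) else 0) + (2*n:ℝ)))
        + (mm n 2 - 2*mm n 3 + mm n 4) * ((2*n:ℝ) + ∑ i, ∑ j, (a i j : ℝ)*(a j i : ℝ)) := by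
  have hexp : ∀ σ : Equiv.Perm (Fin (2*n)),
      (∑ i, ∑ j, (a i j : ℝ) * (fG n (σ i) * fG n (σ j)))^2
        = ∑ i, ∑ k, ∑ j, ∑ l, (a i j : ℝ) * (a k l : ℝ)
            * (fG n (σ i) * fG n (σ j) * fG n (σ k) * fG n (σ l)) := by
    intro σ
    rw [sq, Finset.sum_mul_sum]
    refine Finset.sum_congr rfl fun i _ => Finset.sum_congr rfl fun k _ => ?_
    rw [Finset.sum_mul_sum]
    exact Finset.sum_congr rfl fun j _ => Finset.sum_congr rfl fun l _ => by ring
  rw [Finset.sum_congr rfl fun σ _ => hexp σ, swap4]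
  have hpoint : ∀ i k j l : Fin (2*n),
      ∑ σ : Equiv.Perm (Fin (2*n)), (a i j : ℝ) * (a k l : ℝ)
          * (fG n (σ i) * fG n (σ j) * fG n (σ k) * fG n (σ l))
        = (a i j : ℝ) * (a k l : ℝ)
            * (mm n 4 + (mm n 3 - mm n 4) * (dl i k + dl i l + dl j k + dl j l)
              + (mm n 2 - 2 * mm n 3 + mm n 4) * (dl i k * dl j l + dl i l * dl j k)) := by
    intro i k j l
    rw [← Finset.mul_sum]
    rcases eq_or_ne i j with rfl | hij
    · simp [hdiag i]
    rcases eq_or_ne k l with rfl | hkl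
    · simp [hdiag k]
    rw [core n i j k l hij hkl]
  rw [Finset.sum_congr rfl fun i _ => Finset.sum_congr rfl fun k _ =>
    Finset.sum_congr rfl fun j _ => Finset.sum_congr rfl fun l _ => hpoint i k j l]
  have split : ∑ i, ∑ k, ∑ j, ∑ l, (a i j : ℝ) * (a k l : ℝ)
          * (mm n 4 + (mm n 3 - mm n 4) * (dl i k + dl i l + dl j k + dl j l)
            + (mm n 2 - 2 * mm n 3 + mm n 4) * (dl i k * dl j l + dl i l * dl j k))
      = mm n 4 * (∑ i, ∑ k, ∑ j, ∑ l, (a i j : ℝ) * (a k l : ℝ))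
        + (mm n 3 - mm n 4) * ((∑ i, ∑ k, ∑ j, ∑ l, (a i j : ℝ) * (a k l : ℝ) * dl i k)
          + (∑ i, ∑ k, ∑ j, ∑ l, (a i j : ℝ) * (a k l : ℝ) * dl i l)
          + (∑ i, ∑ k, ∑ j, ∑ l, (a i j : ℝ) * (a k l : ℝ) * dl j k)
          + (∑ i, ∑ k, ∑ j, ∑ l, (a i j : ℝ) * (a k l : ℝ) * dl j l))
        + (mm n 2 - 2*mm n 3 + mm n 4)
          * ((∑ i, ∑ k, ∑ j, ∑ l, (a i j : ℝ) * (a k l : ℝ) * (dl i k * dl j l))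
            + (∑ i, ∑ k, ∑ j, ∑ l, (a i j : ℝ) * (a k l : ℝ) * (dl i l * dl j k))) := by
    simp only [Finset.mul_sum, ← Finset.sum_add_distrib]
    exact Finset.sum_congr rfl fun i _ => Finset.sum_congr rfl fun k _ =>
      Finset.sum_congr rfl fun j _ => Finset.sum_congr rfl fun l _ => by ring
  rw [split]
  have E0 : ∑ i, ∑ k, ∑ j, ∑ l, (a i j : ℝ) * (a k l : ℝ) = (2*n:ℝ)*(2*n:ℝ) := by
    have h : ∀ i k : Fin (2*n), ∑ j, ∑ l, (a i j : ℝ) * (a k l : ℝ) = 1 := by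
      intro i k
      rw [← Finset.sum_mul_sum, haR hrow i, haR hrow k, mul_one]
    rw [Finset.sum_congr rfl fun i _ => Finset.sum_congr rfl fun k _ => h i k]
    simp [Finset.card_univ]
  have E1a : ∑ i, ∑ k, ∑ j, ∑ l, (a i j : ℝ) * (a k l : ℝ) * dl i k = (2*n:ℝ) := by
    have h1 : ∀ i k j : Fin (2*n), ∑ l, (a i j : ℝ) * (a k l : ℝ) * dl i k
        = (a i j : ℝ) * dl i k := by
      intro i k j
      rw [Finset.sum_congr rfl fun l _ =>
        (by ring : (a i j : ℝ) * (a k l : ℝ) * dl i k = ((a i j : ℝ) * dl i k) * (a k l : ℝ)),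
        ← Finset.mul_sum, haR hrow k, mul_one]
    have h2 : ∀ i k : Fin (2*n), ∑ j, (a i j : ℝ) * dl i k = dl i k := by
      intro i k; rw [← Finset.sum_mul, haR hrow i, one_mul]
    rw [Finset.sum_congr rfl fun i _ => Finset.sum_congr rfl fun k _ =>
      (Finset.sum_congr rfl fun j _ => h1 i k j).trans (h2 i k)]
    exact sum_dl
  have E1b : ∑ i, ∑ k, ∑ j, ∑ l, (a i j : ℝ) * (a k l : ℝ) * dl i l = (2*n:ℝ) := by
    have h1 : ∀ i k j : Fin (2*n), ∑ l, (a i j : ℝ) * (a k l : ℝ) * dl i l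
        = (a i j : ℝ) * (a k i : ℝ) := by
      intro i k j
      have := hcol (fun l => (a i j : ℝ) * (a k l : ℝ)) i
      simpa using this
    have h2 : ∀ i k : Fin (2*n), ∑ j, (a i j : ℝ) * (a k i : ℝ) = (a k i : ℝ) := by
      intro i k; rw [← Finset.sum_mul, haR hrow i, one_mul]
    rw [Finset.sum_congr rfl fun i _ => Finset.sum_congr rfl fun k _ =>
      (Finset.sum_congr rfl fun j _ => h1 i k j).trans (h2 i k)]
    rw [Finset.sum_comm]
    exact haTot hrow
  have E1c : ∑ i, ∑ k, ∑ j, ∑ l, (a i j : ℝ) * (a k l : ℝ) * dl j k = (2*n:ℝ) := by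
    have h1 : ∀ i k j : Fin (2*n), ∑ l, (a i j : ℝ) * (a k l : ℝ) * dl j k
        = (a i j : ℝ) * dl j k := by
      intro i k j
      rw [Finset.sum_congr rfl fun l _ =>
        (by ring : (a i j : ℝ) * (a k l : ℝ) * dl j k = ((a i j : ℝ) * dl j k) * (a k l : ℝ)),
        ← Finset.mul_sum, haR hrow k, mul_one]
    have h2 : ∀ i k : Fin (2*n), ∑ j, (a i j : ℝ) * dl j k = (a i k : ℝ) :=
      fun i k => hcol' (fun j => (a i j : ℝ)) k
    have h3 : ∀ i : Fin (2*n), ∑ k, (a i k : ℝ) = 1 := haR hrow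
    rw [Finset.sum_congr rfl fun i _ => (Finset.sum_congr rfl fun k _ =>
      (Finset.sum_congr rfl fun j _ => h1 i k j).trans (h2 i k)).trans (h3 i)]
    simp [Finset.card_univ]
  have E1d : ∑ i, ∑ k, ∑ j, ∑ l, (a i j : ℝ) * (a k l : ℝ) * dl j l
      = (∑ i, ∑ l, ∑ j, if i ≠ l then (a i j : ℝ)*(a l j : ℝ) else 0) + (2*n:ℝ) := by
    have h1 : ∀ i k j : Fin (2*n), ∑ l, (a i j : ℝ) * (a k l : ℝ) * dl j l
        = (a i j : ℝ) * (a k j : ℝ) := by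
      intro i k j
      have := hcol (fun l => (a i j : ℝ) * (a k l : ℝ)) j
      simpa using this
    rw [Finset.sum_congr rfl fun i _ => Finset.sum_congr rfl fun k _ =>
      Finset.sum_congr rfl fun j _ => h1 i k j]
    have h2 : ∀ i k j : Fin (2*n), (a i j : ℝ) * (a k j : ℝ)
        = (if i ≠ k then (a i j : ℝ)*(a k j : ℝ) else 0)
          + (if i = k then (a i j : ℝ)*(a i j : ℝ) else 0) := by
      intro i k j; by_cases h : i = k <;> simp [h]
    rw [Finset.sum_congr rfl fun i _ => Finset.sum_congr rfl fun k _ =>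
      Finset.sum_congr rfl fun j _ => h2 i k j]
    simp only [Finset.sum_add_distrib]
    congr 1
    have h3 : ∀ i k : Fin (2*n), ∑ j, (if i = k then (a i j : ℝ)*(a i j : ℝ) else 0)
        = dl i k := by
      intro i k
      by_cases h : i = k
      · simp only [h, if_true]
        rw [Finset.sum_congr rfl fun j _ => hasq ha01 k j, haR hrow k]
        simp [dl, h]
      · simp [h, dl]
    rw [Finset.sum_congr rfl fun i _ => Finset.sum_congr rfl fun k _ => h3 i k]
    exact sum_dl
  have E2a : ∑ i, ∑ k, ∑ j, ∑ l, (a i j : ℝ) * (a k l : ℝ) * (dl i k * dl j l) = (2*n:ℝ) := by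
    have h1 : ∀ i k j : Fin (2*n), ∑ l, (a i j : ℝ) * (a k l : ℝ) * (dl i k * dl j l)
        = (a i j : ℝ) * (a k j : ℝ) * dl i k := by
      intro i k j
      rw [Finset.sum_congr rfl fun l _ =>
        (by ring : (a i j : ℝ) * (a k l : ℝ) * (dl i k * dl j l)
          = ((a k l : ℝ) * dl j l) * ((a i j : ℝ) * dl i k)), ← Finset.sum_mul,
        hcol (fun l => (a k l : ℝ)) j]
      ring
    have h2 : ∀ i k : Fin (2*n), ∑ j, (a i j : ℝ) * (a k j : ℝ) * dl i k
        = (∑ j, (a i j : ℝ) * (a k j : ℝ)) * dl i k := fun i k => (Finset.sum_mul ..).symm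
    have h3 : ∀ i : Fin (2*n), ∑ k, (∑ j, (a i j : ℝ) * (a k j : ℝ)) * dl i k = 1 := by
      intro i
      rw [hcol (fun k => ∑ j, (a i j : ℝ) * (a k j : ℝ)) i,
        Finset.sum_congr rfl fun j _ => hasq ha01 i j, haR hrow i]
    rw [Finset.sum_congr rfl fun i _ => (Finset.sum_congr rfl fun k _ =>
      (Finset.sum_congr rfl fun j _ => h1 i k j).trans (h2 i k)).trans (h3 i)]
    simp [Finset.card_univ]
  have E2b : ∑ i, ∑ k, ∑ j, ∑ l, (a i j : ℝ) * (a k l : ℝ) * (dl i l * dl j k)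
      = ∑ i, ∑ j, (a i j : ℝ)*(a j i : ℝ) := by
    have h1 : ∀ i k j : Fin (2*n), ∑ l, (a i j : ℝ) * (a k l : ℝ) * (dl i l * dl j k)
        = (a i j : ℝ) * (a k i : ℝ) * dl j k := by
      intro i k j
      rw [Finset.sum_congr rfl fun l _ =>
        (by ring : (a i j : ℝ) * (a k l : ℝ) * (dl i l * dl j k)
          = ((a k l : ℝ) * dl i l) * ((a i j : ℝ) * dl j k)), ← Finset.sum_mul,
        hcol (fun l => (a k l : ℝ)) i]
      ring
    have h2 : ∀ i k : Fin (2*n), ∑ j, (a i j : ℝ) * (a k i : ℝ) * dl j k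
        = (a i k : ℝ) * (a k i : ℝ) := by
      intro i k
      rw [Finset.sum_congr rfl fun j _ =>
        (by ring : (a i j : ℝ) * (a k i : ℝ) * dl j k = ((a i j : ℝ) * (a k i : ℝ)) * dl j k),
        hcol' (fun j => (a i j : ℝ) * (a k i : ℝ)) k]
    exact Finset.sum_congr rfl fun i _ => (Finset.sum_congr rfl fun k _ =>
      (Finset.sum_congr rfl fun j _ => h1 i k j).trans (h2 i k))
  rw [E0, E1a, E1b, E1c, E1d, E2a, E2b]
  ring
end moments

lemma cast_df (m k : ℕ) :
    ((m.descFactorial k : ℕ) : ℝ) = ∏ i ∈ Finset.range k, ((m : ℝ) - i) := by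
  induction k with
  | zero => simp
  | succ k ih =>
    rw [Nat.descFactorial_succ, Finset.prod_range_succ, Nat.cast_mul, ih]
    by_cases h : k ≤ m
    · rw [Nat.cast_sub h]; ring
    · have h1 : m - k = 0 := by omega
      have h2 : (m : ℕ) ∈ Finset.range k := Finset.mem_range.mpr (by omega)
      rw [h1]
      rw [Finset.prod_eq_zero h2 (by simp)]
      simp

set_option maxHeartbeats 2000000 in
theorem stmt5 (n : ℕ) (hn : 2 ≤ n) (a : Fin (2 * n) → Fin (2 * n) → ℕ)
    (ha01 : ∀ i j, a i j ≤ 1) (hdiag : ∀ i, a i i = 0)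
    (hrow : ∀ i, ∑ j, a i j = 1)
    (D : Equiv.Perm (Fin (2 * n)) → ℝ)
    (hD : ∀ σ, D σ = ∑ i, ∑ j, (a i j : ℝ) *
      (if (σ i : ℕ) < n then 1 else 0) * (if n ≤ (σ j : ℕ) then 1 else 0))
    (N twoC1 twoC2 : ℝ)
    (hN : N = (2 * n : ℕ))
    (hC1 : twoC1 = ∑ i, ∑ j, (a i j : ℝ) * (a j i : ℝ))
    (hC2 : twoC2 = ∑ i, ∑ l, ∑ j, if i ≠ l then (a i j : ℝ) * (a l j : ℝ) else 0) :
    (∑ σ : Equiv.Perm (Fin (2 * n)), (D σ) ^ 2) /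
        (Fintype.card (Equiv.Perm (Fin (2 * n))) : ℝ) -
      ((∑ σ : Equiv.Perm (Fin (2 * n)), D σ) /
        (Fintype.card (Equiv.Perm (Fin (2 * n))) : ℝ)) ^ 2 =
    (1 / 16) * (N ^ 2 / (N - 1) - N ^ 2 / (N - 1) ^ 2 +
      twoC1 * (N * (N - 2) / ((N - 1) * (N - 3))) +
      twoC2 * (N * (N - 4) / ((N - 1) * (N - 3)))) := by
  have hg : ∀ x : Fin (2*n), (if n ≤ (x : ℕ) then (1:ℝ) else 0) = 1 - fG n x := by
    intro x; unfold fG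
    by_cases h : (x : ℕ) < n
    · rw [if_pos h, if_neg (by omega)]; norm_num
    · rw [if_neg h, if_pos (by omega)]; norm_num
  have hDQ : ∀ σ : Equiv.Perm (Fin (2*n)),
      D σ = (n : ℝ) - ∑ i, ∑ j, (a i j : ℝ) * (fG n (σ i) * fG n (σ j)) := by
    intro σ
    rw [hD σ]
    have hpt : ∀ i j : Fin (2*n), (a i j : ℝ) * (if ((σ i : ℕ) < n) then (1:ℝ) else 0)
          * (if n ≤ (σ j : ℕ) then (1:ℝ) else 0)
        = (a i j : ℝ) * fG n (σ i) - (a i j : ℝ) * (fG n (σ i) * fG n (σ j)) := by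
      intro i j; rw [hg (σ j)]; unfold fG; ring
    rw [Finset.sum_congr rfl fun i _ => Finset.sum_congr rfl fun j _ => hpt i j]
    simp only [Finset.sum_sub_distrib]
    have h1 : ∀ i : Fin (2*n), ∑ j, (a i j : ℝ) * fG n (σ i) = fG n (σ i) := by
      intro i; rw [← Finset.sum_mul, haR hrow i, one_mul]
    rw [Finset.sum_congr rfl fun i _ => h1 i, Equiv.sum_comp σ (fG n), sum_fG n]
  have hcard : (Fintype.card (Equiv.Perm (Fin (2*n))) : ℝ) = ((2*n).factorial : ℝ) := by
    rw [Fintype.card_perm, Fintype.card_fin]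
  have hM1 := momentsQ1 hrow hdiag
  have hM2 := momentsQ2 hrow hdiag ha01
  rw [← hC2, ← hC1] at hM2
  set F : ℝ := ((2*n).factorial : ℝ) with hF
  set SQ : ℝ := ∑ σ : Equiv.Perm (Fin (2*n)), ∑ i, ∑ j,
    (a i j : ℝ) * (fG n (σ i) * fG n (σ j)) with hSQdef
  set SQ2 : ℝ := ∑ σ : Equiv.Perm (Fin (2*n)),
    (∑ i, ∑ j, (a i j : ℝ) * (fG n (σ i) * fG n (σ j)))^2 with hSQ2def
  have hSD : ∑ σ : Equiv.Perm (Fin (2*n)), D σ = F * n - SQ := by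
    rw [Finset.sum_congr rfl fun σ _ => hDQ σ, Finset.sum_sub_distrib]
    simp [Finset.sum_const, Finset.card_univ, Fintype.card_perm, Fintype.card_fin,
      nsmul_eq_mul, hSQdef, hF]
  have hSD2 : ∑ σ : Equiv.Perm (Fin (2*n)), (D σ)^2
      = F * (n:ℝ)^2 - 2*(n:ℝ)*SQ + SQ2 := by
    have hpt : ∀ σ : Equiv.Perm (Fin (2*n)), (D σ)^2
        = ((n:ℝ)^2 - 2*(n:ℝ)*(∑ i, ∑ j, (a i j : ℝ) * (fG n (σ i) * fG n (σ j))))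
          + (∑ i, ∑ j, (a i j : ℝ) * (fG n (σ i) * fG n (σ j)))^2 := by
      intro σ; rw [hDQ σ]; ring
    rw [Finset.sum_congr rfl fun σ _ => hpt σ]
    simp only [Finset.sum_add_distrib, Finset.sum_sub_distrib, ← Finset.mul_sum]
    simp [Finset.sum_const, Finset.card_univ, Fintype.card_perm, Fintype.card_fin,
      nsmul_eq_mul, hSQdef, hSQ2def, hF]
  rw [hSD, hSD2, hcard, hM1, hM2]
  have hFpos : (0:ℝ) < F := by
    rw [hF]; exact_mod_cast Nat.factorial_pos (2*n)
  have hx : (2:ℝ) ≤ (n:ℝ) := by exact_mod_cast hn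
  have hNx : N = 2*(n:ℝ) := by rw [hN]; push_cast; ring
  unfold mm
  rw [cast_df, cast_df, cast_df, cast_df, cast_df, cast_df]
  simp only [Finset.prod_range_succ, Finset.prod_range_zero, one_mul]
  rw [hNx, ← hF]
  push_cast
  have d1 : (2*(n:ℝ)) ≠ 0 := by nlinarith
  have d2 : (2*(n:ℝ) - 1) ≠ 0 := by nlinarith
  have d3 : (2*(n:ℝ) - 2) ≠ 0 := by nlinarith
  have d4 : (2*(n:ℝ) - 3) ≠ 0 := by nlinarith
  have dF : F ≠ 0 := ne_of_gt hFpos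
  have d5 : ((n:ℝ) - 1) ≠ 0 := by nlinarith
  have d6 : (n:ℝ) ≠ 0 := by nlinarith
  have d7 : ((n:ℝ) * 2 - 1) ≠ 0 := by nlinarith
  have d8 : ((n:ℝ) * 2 - 3) ≠ 0 := by nlinarith
  field_simp
  ring
end

section
/- With the nearest-neighbor setup on N = 2n points, the covariance of D₁₂ and D₂₁ under the uniform random permutation satisfies Cov(D₁₂, D₂₁) = (1/16)·( N²/(N−1) − N²/(N−1)² + (2C₁ − 2C₂)·N(N−2)/((N−1)(N−3)) ). -/
set_option maxHeartbeats 1000000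
open Finset

lemma card_fiber {α : Type*} [Fintype α] [DecidableEq α] {m : ℕ} (p q : Fin m → α)
    (hp : Function.Injective p) (hq : Function.Injective q) :
    (Finset.univ.filter fun σ : Equiv.Perm α => ∀ t, σ (p t) = q t).card
      = (Fintype.card α - m).factorial := by
  classical
  let e0 : (Set.range p) ≃ (Set.range q) :=
    (Equiv.ofInjective p hp).symm.trans (Equiv.ofInjective q hq)
  have he0 : ∀ t (h : p t ∈ Set.range p), (e0 ⟨p t, h⟩ : α) = q t := by
    intro t h
    show (Equiv.ofInjective q hq ((Equiv.ofInjective p hp).symm ⟨p t, h⟩) : α) = q t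
    have h1 : (Equiv.ofInjective p hp).symm ⟨p t, h⟩ = t := by
      rw [Equiv.symm_apply_eq]; exact Subtype.ext rfl
    rw [h1, Equiv.ofInjective_apply]
  have key : (Finset.univ.filter fun σ : Equiv.Perm α => ∀ t, σ (p t) = q t).card
      = Fintype.card {e : α ≃ α // ∀ x : Set.range p, e x = e0 x} := by
    rw [Fintype.card_subtype]
    congr 1
    apply Finset.filter_congr
    intro σ _
    constructor
    · intro h x
      obtain ⟨x, t, rfl⟩ := x
      exact (h t).trans (he0 t _).symm
    · intro h t
      have := h ⟨p t, ⟨t, rfl⟩⟩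
      exact this.trans (he0 t _)
  rw [key, Fintype.card_congr (Equiv.Set.compl e0)]
  have hc : Fintype.card ((Set.range p)ᶜ : Set α) = Fintype.card α - m := by
    rw [Fintype.card_compl_set, Set.card_range_of_injective hp, Fintype.card_fin]
  have hc' : Fintype.card ((Set.range q)ᶜ : Set α) = Fintype.card α - m := by
    rw [Fintype.card_compl_set, Set.card_range_of_injective hq, Fintype.card_fin]
  rw [Fintype.card_equiv (Fintype.equivOfCardEq (hc.trans hc'.symm)), hc]


lemma inj2 {α : Type*} {i j : α} (hij : i ≠ j) : Function.Injective ![i, j] := by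
  intro s t h
  fin_cases s <;> fin_cases t <;> simp_all

lemma sum_perm2 {α : Type*} [Fintype α] [DecidableEq α] (i j : α) (hij : i ≠ j)
    (F : α → α → ℝ) (hF : ∀ x, F x x = 0) :
    ∑ σ : Equiv.Perm α, F (σ i) (σ j)
      = (Fintype.card α - 2).factorial * ∑ x, ∑ y, F x y := by
  classical
  rw [← Finset.sum_fiberwise' Finset.univ (fun σ : Equiv.Perm α => (σ i, σ j))
    (fun v : α × α => F v.1 v.2)]
  rw [Fintype.sum_prod_type, Finset.mul_sum]
  refine Finset.sum_congr rfl fun x _ => ?_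
  rw [Finset.mul_sum]
  refine Finset.sum_congr rfl fun y _ => ?_
  rw [Finset.sum_const, nsmul_eq_mul]
  by_cases hxy : x = y
  · subst hxy; rw [hF, mul_zero, mul_zero]
  · congr 1
    rw [← card_fiber ![i,j] ![x,y] (inj2 hij) (inj2 hxy)]
    norm_cast
    congr 1
    apply Finset.filter_congr
    intro σ _
    simp [Prod.ext_iff, Fin.forall_fin_two]


lemma inj3 {α : Type*} {i j k : α} (hij : i ≠ j) (hik : i ≠ k) (hjk : j ≠ k) :
    Function.Injective ![i, j, k] := by
  intro s t h
  fin_cases s <;> fin_cases t <;> simp_all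

lemma inj4 {α : Type*} {i j k l : α} (hij : i ≠ j) (hik : i ≠ k) (hil : i ≠ l)
    (hjk : j ≠ k) (hjl : j ≠ l) (hkl : k ≠ l) : Function.Injective ![i, j, k, l] := by
  intro s t h
  fin_cases s <;> fin_cases t <;> simp_all

lemma sum_perm3 {α : Type*} [Fintype α] [DecidableEq α] (i j k : α)
    (hij : i ≠ j) (hik : i ≠ k) (hjk : j ≠ k)
    (F : α → α → α → ℝ) (hF : ∀ x y z, x = y ∨ x = z ∨ y = z → F x y z = 0) :
    ∑ σ : Equiv.Perm α, F (σ i) (σ j) (σ k)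
      = (Fintype.card α - 3).factorial * ∑ x, ∑ y, ∑ z, F x y z := by
  classical
  rw [← Finset.sum_fiberwise' Finset.univ (fun σ : Equiv.Perm α => (σ i, σ j, σ k))
    (fun v : α × α × α => F v.1 v.2.1 v.2.2)]
  rw [Fintype.sum_prod_type, Finset.mul_sum]
  refine Finset.sum_congr rfl fun x _ => ?_
  rw [Fintype.sum_prod_type, Finset.mul_sum]
  refine Finset.sum_congr rfl fun y _ => ?_
  rw [Finset.mul_sum]
  refine Finset.sum_congr rfl fun z _ => ?_
  rw [Finset.sum_const, nsmul_eq_mul]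
  by_cases hd : x = y ∨ x = z ∨ y = z
  · rw [hF _ _ _ hd, mul_zero, mul_zero]
  · push_neg at hd
    congr 1
    rw [← card_fiber ![i,j,k] ![x,y,z] (inj3 hij hik hjk) (inj3 hd.1 hd.2.1 hd.2.2)]
    norm_cast
    congr 1
    apply Finset.filter_congr
    intro σ _
    simp [Prod.ext_iff, Fin.forall_fin_succ]

lemma sum_perm4 {α : Type*} [Fintype α] [DecidableEq α] (i j k l : α)
    (hij : i ≠ j) (hik : i ≠ k) (hil : i ≠ l) (hjk : j ≠ k) (hjl : j ≠ l) (hkl : k ≠ l)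
    (F : α → α → α → α → ℝ)
    (hF : ∀ x y z w, x = y ∨ x = z ∨ x = w ∨ y = z ∨ y = w ∨ z = w → F x y z w = 0) :
    ∑ σ : Equiv.Perm α, F (σ i) (σ j) (σ k) (σ l)
      = (Fintype.card α - 4).factorial * ∑ x, ∑ y, ∑ z, ∑ w, F x y z w := by
  classical
  rw [← Finset.sum_fiberwise' Finset.univ (fun σ : Equiv.Perm α => (σ i, σ j, σ k, σ l))
    (fun v : α × α × α × α => F v.1 v.2.1 v.2.2.1 v.2.2.2)]
  rw [Fintype.sum_prod_type, Finset.mul_sum]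
  refine Finset.sum_congr rfl fun x _ => ?_
  rw [Fintype.sum_prod_type, Finset.mul_sum]
  refine Finset.sum_congr rfl fun y _ => ?_
  rw [Fintype.sum_prod_type, Finset.mul_sum]
  refine Finset.sum_congr rfl fun z _ => ?_
  rw [Finset.mul_sum]
  refine Finset.sum_congr rfl fun w _ => ?_
  rw [Finset.sum_const, nsmul_eq_mul]
  by_cases hd : x = y ∨ x = z ∨ x = w ∨ y = z ∨ y = w ∨ z = w
  · rw [hF _ _ _ _ hd, mul_zero, mul_zero]
  · push_neg at hd
    obtain ⟨h1, h2, h3, h4, h5, h6⟩ := hd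
    congr 1
    rw [← card_fiber ![i,j,k,l] ![x,y,z,w] (inj4 hij hik hil hjk hjl hkl)
      (inj4 h1 h2 h3 h4 h5 h6)]
    norm_cast
    congr 1
    apply Finset.filter_congr
    intro σ _
    simp [Prod.ext_iff, Fin.forall_fin_succ]


noncomputable def fI (n : ℕ) (x : Fin (2*n)) : ℝ := if (x : ℕ) < n then 1 else 0
noncomputable def gI (n : ℕ) (x : Fin (2*n)) : ℝ := if n ≤ (x : ℕ) then 1 else 0

lemma fgI0 (n : ℕ) (x : Fin (2*n)) : fI n x * gI n x = 0 := by
  unfold fI gI; split_ifs with h1 h2 <;> simp_all <;> omega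

lemma ffI (n : ℕ) (x : Fin (2*n)) : fI n x * fI n x = fI n x := by
  unfold fI; split_ifs <;> simp

lemma ggI (n : ℕ) (x : Fin (2*n)) : gI n x * gI n x = gI n x := by
  unfold gI; split_ifs <;> simp

lemma sum_fI (n : ℕ) : ∑ x, fI n x = n := by
  unfold fI
  rw [Finset.sum_boole]
  have hcard : (univ.filter (fun x : Fin (2*n) => (x:ℕ) < n)).card = (univ : Finset (Fin n)).card := by
    refine Finset.card_bij (fun (x : Fin (2*n)) (hx : x ∈ univ.filter (fun x : Fin (2*n) => (x:ℕ) < n)) => (⟨(x:ℕ), (Finset.mem_filter.1 hx).2⟩ : Fin n)) ?_ ?_ ?_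
    · intro a ha; exact Finset.mem_univ _
    · intro a ha b hb h
      simp only [Fin.mk.injEq] at h
      exact Fin.ext h
    · intro b _
      refine ⟨⟨(b:ℕ), by omega⟩, Finset.mem_filter.2 ⟨Finset.mem_univ _, by simpa using b.2⟩, rfl⟩
  have : (univ.filter (fun x : Fin (2*n) => (x:ℕ) < n)).card = n := by
    rw [hcard]; simp
  exact_mod_cast this

lemma sum_gI (n : ℕ) : ∑ x, gI n x = n := by
  unfold gI
  rw [Finset.sum_boole]
  have h1 := Finset.card_filter_add_card_filter_not
    (s := (univ : Finset (Fin (2*n)))) (p := fun x => (x:ℕ) < n)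
  have h2 : (univ.filter (fun x : Fin (2*n) => n ≤ (x:ℕ))) =
      (univ.filter (fun x : Fin (2*n) => ¬ ((x:ℕ) < n))) := by
    apply Finset.filter_congr; intro x _; simp [not_lt]
  have hcard : (univ.filter (fun x : Fin (2*n) => (x:ℕ) < n)).card = (univ : Finset (Fin n)).card := by
    refine Finset.card_bij (fun (x : Fin (2*n)) (hx : x ∈ univ.filter (fun x : Fin (2*n) => (x:ℕ) < n)) => (⟨(x:ℕ), (Finset.mem_filter.1 hx).2⟩ : Fin n)) ?_ ?_ ?_
    · intro a ha; exact Finset.mem_univ _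
    · intro a ha b hb h
      simp only [Fin.mk.injEq] at h
      exact Fin.ext h
    · intro b _
      refine ⟨⟨(b:ℕ), by omega⟩, Finset.mem_filter.2 ⟨Finset.mem_univ _, by simpa using b.2⟩, rfl⟩
  have h3 : (univ.filter (fun x : Fin (2*n) => (x:ℕ) < n)).card = n := by
    rw [hcard]; simp
  have h4 : Finset.card (univ : Finset (Fin (2*n))) = 2*n := by simp
  have : (univ.filter (fun x : Fin (2*n) => n ≤ (x:ℕ))).card = n := by
    rw [h2]; omega
  exact_mod_cast this

lemma sum_e1 {ι : Type*} [Fintype ι] [DecidableEq ι] (i : ι) (h : ι → ℝ) :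
    ∑ x, (if x = i then 0 else 1) * h x = (∑ x, h x) - h i := by
  have : ∀ x, (if x = i then (0:ℝ) else 1) * h x = h x - (if i = x then h x else 0) := by
    intro x; by_cases hx : x = i
    · subst hx; simp
    · simp [hx, Ne.symm hx]
  simp_rw [this]
  rw [Finset.sum_sub_distrib, Finset.sum_ite_eq univ i h, if_pos (Finset.mem_univ i)]

lemma sum_e2 {ι : Type*} [Fintype ι] [DecidableEq ι] {i j : ι} (hij : i ≠ j) (h : ι → ℝ) :
    ∑ x, (if x = i then 0 else 1) * (if x = j then 0 else 1) * h x
      = (∑ x, h x) - h i - h j := by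
  have : ∀ x, (if x = i then (0:ℝ) else 1) * (if x = j then 0 else 1) * h x
      = (if x = i then 0 else 1) * ((if x = j then 0 else 1) * h x) := fun x => by ring
  simp_rw [this, sum_e1 i (fun x => (if x = j then (0:ℝ) else 1) * h x), sum_e1 j h]
  rw [if_neg hij]
  ring

lemma erase_to_e {ι : Type*} [Fintype ι] [DecidableEq ι] (i : ι) (h : ι → ℝ) :
    ∑ x ∈ univ.erase i, h x = ∑ x, (if x = i then 0 else 1) * h x := by
  rw [sum_e1, Finset.sum_erase_eq_sub (Finset.mem_univ i)]

lemma dsum {ι : Type*} [Fintype ι] [DecidableEq ι] (h : ι → ℝ) :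
    ∑ x, ∑ z, h x * h z * (if x = z then 0 else 1)
      = (∑ x, h x) * (∑ x, h x) - ∑ x, h x * h x := by
  have : ∀ x z, h x * h z * (if x = z then (0:ℝ) else 1)
      = h x * h z - (if x = z then h x * h z else 0) := by
    intro x z; split_ifs <;> ring
  simp_rw [this]
  simp only [Finset.sum_sub_distrib]
  congr 1
  · rw [← Finset.sum_mul_sum]
  · apply Finset.sum_congr rfl
    intro x _
    rw [Finset.sum_ite_eq univ x (fun z => h x * h z), if_pos (Finset.mem_univ x)]


lemma T2v (n : ℕ) (i j : Fin (2*n)) (hij : i ≠ j) :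
    ∑ σ : Equiv.Perm (Fin (2*n)), fI n (σ i) * gI n (σ j)
      = ((2*n-2).factorial : ℝ) * ((n:ℝ)*n) := by
  rw [sum_perm2 i j hij (fun x y => fI n x * gI n y) (fun x => fgI0 n x)]
  rw [← Finset.sum_mul_sum, sum_fI, sum_gI, Fintype.card_fin]

lemma T3av (n : ℕ) (i j l : Fin (2*n)) (hij : i ≠ j) (hil : i ≠ l) (hjl : j ≠ l) :
    ∑ σ : Equiv.Perm (Fin (2*n)), fI n (σ i) * gI n (σ j) * gI n (σ l)
      = ((2*n-3).factorial : ℝ) * ((n:ℝ) * ((n:ℝ)*n - n)) := by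
  have step : ∑ σ : Equiv.Perm (Fin (2*n)), fI n (σ i) * gI n (σ j) * gI n (σ l)
      = ∑ σ : Equiv.Perm (Fin (2*n)),
        fI n (σ i) * gI n (σ j) * gI n (σ l) * (if σ j = σ l then 0 else 1) := by
    apply Finset.sum_congr rfl
    intro σ _
    rw [if_neg (fun h => hjl (σ.injective h)), mul_one]
  rw [step, sum_perm3 i j l hij hil hjl
    (fun x y z => fI n x * gI n y * gI n z * (if y = z then 0 else 1))]
  · rw [Fintype.card_fin]
    congr 1
    have inner : ∀ x : Fin (2*n), ∑ y, ∑ z, fI n x * gI n y * gI n z * (if y = z then 0 else 1)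
        = fI n x * ((n:ℝ)*n - n) := by
      intro x
      have : ∀ y z : Fin (2*n), fI n x * gI n y * gI n z * (if y = z then (0:ℝ) else 1)
          = fI n x * (gI n y * gI n z * (if y = z then 0 else 1)) := fun y z => by ring
      simp_rw [this, ← Finset.mul_sum]
      rw [dsum (gI n), sum_gI]
      congr 2
      rw [Finset.sum_congr rfl (fun x _ => ggI n x), sum_gI]
    simp_rw [inner, ← Finset.sum_mul, sum_fI]
  · intro x y z h
    rcases h with h|h|h
    · subst h
      rw [show fI n x * gI n x * gI n z * (if x = z then (0:ℝ) else 1)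
        = (fI n x * gI n x) * (gI n z * (if x = z then 0 else 1)) from by ring, fgI0, zero_mul]
    · subst h
      rw [show fI n x * gI n y * gI n x * (if y = x then (0:ℝ) else 1)
        = (fI n x * gI n x) * (gI n y * (if y = x then 0 else 1)) from by ring, fgI0, zero_mul]
    · subst h
      simp

lemma sum_ffI (n : ℕ) : ∑ x, fI n x * fI n x = (n:ℝ) := by
  rw [Finset.sum_congr rfl (fun x _ => ffI n x), sum_fI]

lemma sum_ggI (n : ℕ) : ∑ x, gI n x * gI n x = (n:ℝ) := by
  rw [Finset.sum_congr rfl (fun x _ => ggI n x), sum_gI]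

lemma T3bv (n : ℕ) (i j k : Fin (2*n)) (hij : i ≠ j) (hik : i ≠ k) (hjk : j ≠ k) :
    ∑ σ : Equiv.Perm (Fin (2*n)), fI n (σ i) * fI n (σ k) * gI n (σ j)
      = ((2*n-3).factorial : ℝ) * (((n:ℝ)*n - n) * n) := by
  have step : ∑ σ : Equiv.Perm (Fin (2*n)), fI n (σ i) * fI n (σ k) * gI n (σ j)
      = ∑ σ : Equiv.Perm (Fin (2*n)),
        fI n (σ i) * fI n (σ k) * gI n (σ j) * (if σ i = σ k then 0 else 1) := by
    apply Finset.sum_congr rfl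
    intro σ _
    rw [if_neg (fun h => hik (σ.injective h)), mul_one]
  rw [step, sum_perm3 i j k hij hik hjk
    (fun x y z => fI n x * fI n z * gI n y * (if x = z then 0 else 1))]
  · rw [Fintype.card_fin]
    congr 1
    have h1 : ∀ x : Fin (2*n), ∑ y, ∑ z, fI n x * fI n z * gI n y * (if x = z then (0:ℝ) else 1)
        = (∑ y, gI n y) * (∑ z, fI n x * fI n z * (if x = z then (0:ℝ) else 1)) := by
      intro x
      rw [Finset.sum_mul_sum]
      exact Finset.sum_congr rfl fun y _ => Finset.sum_congr rfl fun z _ => by ring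
    simp_rw [h1, sum_gI, ← Finset.mul_sum]
    rw [dsum (fI n), sum_fI, sum_ffI]
    ring
  · intro x y z h
    rcases h with h|h|h
    · subst h
      rw [show fI n x * fI n z * gI n x * (if x = z then (0:ℝ) else 1)
        = (fI n x * gI n x) * (fI n z * (if x = z then 0 else 1)) from by ring, fgI0, zero_mul]
    · subst h
      simp
    · subst h
      rw [show fI n x * fI n y * gI n y * (if x = y then (0:ℝ) else 1)
        = (fI n y * gI n y) * (fI n x * (if x = y then 0 else 1)) from by ring, fgI0, zero_mul]

lemma T4v (n : ℕ) (i j k l : Fin (2*n)) (hij : i ≠ j) (hik : i ≠ k) (hil : i ≠ l)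
    (hjk : j ≠ k) (hjl : j ≠ l) (hkl : k ≠ l) :
    ∑ σ : Equiv.Perm (Fin (2*n)), fI n (σ i) * gI n (σ j) * (fI n (σ k) * gI n (σ l))
      = ((2*n-4).factorial : ℝ) * (((n:ℝ)*n - n) * ((n:ℝ)*n - n)) := by
  have step : ∑ σ : Equiv.Perm (Fin (2*n)), fI n (σ i) * gI n (σ j) * (fI n (σ k) * gI n (σ l))
      = ∑ σ : Equiv.Perm (Fin (2*n)),
        fI n (σ i) * gI n (σ j) * (fI n (σ k) * gI n (σ l)) *
          ((if σ i = σ k then 0 else 1) * (if σ j = σ l then 0 else 1)) := by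
    apply Finset.sum_congr rfl
    intro σ _
    rw [if_neg (fun h => hik (σ.injective h)), if_neg (fun h => hjl (σ.injective h))]
    ring
  rw [step, sum_perm4 i j k l hij hik hil hjk hjl hkl
    (fun x y z w => fI n x * gI n y * (fI n z * gI n w) *
      ((if x = z then 0 else 1) * (if y = w then 0 else 1)))]
  · rw [Fintype.card_fin]
    congr 1
    have h2 : ∀ (x y : Fin (2*n)),
        ∑ z, ∑ w, fI n x * gI n y * (fI n z * gI n w) *
          ((if x = z then (0:ℝ) else 1) * (if y = w then 0 else 1))
        = (∑ z, fI n x * fI n z * (if x = z then (0:ℝ) else 1)) *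
          (∑ w, gI n y * gI n w * (if y = w then (0:ℝ) else 1)) := by
      intro x y
      rw [Finset.sum_mul_sum]
      exact Finset.sum_congr rfl fun z _ => Finset.sum_congr rfl fun w _ => by ring
    simp_rw [h2]
    rw [← Finset.sum_mul_sum, dsum (fI n), dsum (gI n), sum_fI, sum_gI, sum_ffI, sum_ggI]
  · intro x y z w h
    rcases h with h|h|h|h|h|h
    · subst h
      rw [show fI n x * gI n x * (fI n z * gI n w) * ((if x = z then (0:ℝ) else 1) * (if x = w then 0 else 1))
        = (fI n x * gI n x) * ((fI n z * gI n w) * ((if x = z then (0:ℝ) else 1) * (if x = w then 0 else 1))) from by ring,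
        fgI0, zero_mul]
    · subst h
      simp
    · subst h
      rw [show fI n x * gI n y * (fI n z * gI n x) * ((if x = z then (0:ℝ) else 1) * (if y = x then 0 else 1))
        = (fI n x * gI n x) * ((fI n z * gI n y) * ((if x = z then (0:ℝ) else 1) * (if y = x then 0 else 1))) from by ring,
        fgI0, zero_mul]
    · subst h
      rw [show fI n x * gI n y * (fI n y * gI n w) * ((if x = y then (0:ℝ) else 1) * (if y = w then 0 else 1))
        = (fI n y * gI n y) * ((fI n x * gI n w) * ((if x = y then (0:ℝ) else 1) * (if y = w then 0 else 1))) from by ring,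
        fgI0, zero_mul]
    · subst h
      simp
    · subst h
      rw [show fI n x * gI n y * (fI n z * gI n z) * ((if x = z then (0:ℝ) else 1) * (if y = z then 0 else 1))
        = (fI n z * gI n z) * ((fI n x * gI n y) * ((if x = z then (0:ℝ) else 1) * (if y = z then 0 else 1))) from by ring,
        fgI0, zero_mul]


lemma meanD (n : ℕ) (b : Fin (2 * n) → Fin (2 * n) → ℕ)
    (hdiag : ∀ i, b i i = 0)
    (htot : ∑ i : Fin (2*n), ∑ j, (b i j : ℝ) = 2*(n:ℝ))
    (D : Equiv.Perm (Fin (2 * n)) → ℝ)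
    (hD : ∀ σ, D σ = ∑ i, ∑ j, (b i j : ℝ) * fI n (σ i) * gI n (σ j)) :
    ∑ σ : Equiv.Perm (Fin (2*n)), D σ
      = ((2*n-2).factorial : ℝ) * ((n:ℝ)*n) * (2*(n:ℝ)) := by
  have hA0 : ∀ i, (b i i : ℝ) = 0 := by
    intro i; rw [hdiag i, Nat.cast_zero]
  calc ∑ σ : Equiv.Perm (Fin (2*n)), D σ
      = ∑ σ : Equiv.Perm (Fin (2*n)), ∑ i, ∑ j, (b i j : ℝ) * fI n (σ i) * gI n (σ j) :=
        Finset.sum_congr rfl fun σ _ => hD σ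
    _ = ∑ i, ∑ σ : Equiv.Perm (Fin (2*n)), ∑ j, (b i j : ℝ) * fI n (σ i) * gI n (σ j) :=
        Finset.sum_comm
    _ = ∑ i, ∑ j, ∑ σ : Equiv.Perm (Fin (2*n)), (b i j : ℝ) * fI n (σ i) * gI n (σ j) :=
        Finset.sum_congr rfl fun i _ => Finset.sum_comm
    _ = ∑ i, ∑ j, (b i j : ℝ) * (((2*n-2).factorial : ℝ) * ((n:ℝ)*n)) := by
        apply Finset.sum_congr rfl; intro i _
        apply Finset.sum_congr rfl; intro j _
        simp_rw [mul_assoc, ← Finset.mul_sum]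
        by_cases hij : i = j
        · subst hij; rw [hA0, zero_mul, zero_mul]
        · rw [T2v n i j hij]
    _ = ((2*n-2).factorial : ℝ) * ((n:ℝ)*n) * (2*(n:ℝ)) := by
        simp_rw [← Finset.sum_mul]
        rw [htot]
        ring


lemma bigP (n : ℕ) (hn : 2 ≤ n) (a : Fin (2 * n) → Fin (2 * n) → ℕ)
    (ha01 : ∀ i j, a i j ≤ 1) (hdiag : ∀ i, a i i = 0)
    (hrow : ∀ i, ∑ j, a i j = 1)
    (D12 D21 : Equiv.Perm (Fin (2 * n)) → ℝ)
    (hD12 : ∀ σ, D12 σ = ∑ i, ∑ j, (a i j : ℝ) *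
      (if (σ i : ℕ) < n then 1 else 0) * (if n ≤ (σ j : ℕ) then 1 else 0))
    (hD21 : ∀ σ, D21 σ = ∑ i, ∑ j, (a j i : ℝ) *
      (if (σ i : ℕ) < n then 1 else 0) * (if n ≤ (σ j : ℕ) then 1 else 0))
    (twoC1 twoC2 : ℝ)
    (hC1 : twoC1 = ∑ i, ∑ j, (a i j : ℝ) * (a j i : ℝ))
    (hC2 : twoC2 = ∑ i, ∑ l, ∑ j, if i ≠ l then (a i j : ℝ) * (a l j : ℝ) else 0) :
    ∑ σ : Equiv.Perm (Fin (2*n)), D12 σ * D21 σ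
      = (((2*n-2).factorial : ℝ) * ((n:ℝ)*n)) * twoC1
        + (((2*n-3).factorial : ℝ) * ((n:ℝ) * ((n:ℝ)*n - n))) * (2*(n:ℝ) - twoC1)
        + (((2*n-3).factorial : ℝ) * (((n:ℝ)*n - n) * (n:ℝ))) * (2*(n:ℝ) - twoC1)
        + (((2*n-4).factorial : ℝ) * (((n:ℝ)*n - n) * ((n:ℝ)*n - n)))
            * ((2*(n:ℝ))*(2*(n:ℝ)) - 3*(2*(n:ℝ)) + twoC1 - twoC2) := by
  have hA1 : ∀ i, ∑ j, (a i j : ℝ) = 1 := by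
    intro i; rw [← Nat.cast_sum, hrow i, Nat.cast_one]
  have hA0 : ∀ i, (a i i : ℝ) = 0 := by
    intro i; rw [hdiag i, Nat.cast_zero]
  have hAsq : ∀ i j, (a i j : ℝ) * (a i j : ℝ) = (a i j : ℝ) := by
    intro i j
    rcases Nat.le_one_iff_eq_zero_or_eq_one.1 (ha01 i j) with h|h <;> rw [h] <;> norm_num
  have hAtot : ∑ i : Fin (2*n), ∑ j, (a i j : ℝ) = 2*(n:ℝ) := by
    simp_rw [hA1]
    rw [Finset.sum_const, Finset.card_univ, Fintype.card_fin, nsmul_eq_mul]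
    push_cast; ring
  have hCtot : ∑ k : Fin (2*n), (∑ l, (a l k : ℝ)) = 2*(n:ℝ) := by
    rw [Finset.sum_comm]
    simpa using hAtot
  -- ∑_{i,j} A i j * C i = 2n
  have hS1 : ∑ i : Fin (2*n), ∑ j, (a i j : ℝ) * (∑ l, (a l i : ℝ)) = 2*(n:ℝ) := by
    have : ∀ i : Fin (2*n), ∑ j, (a i j : ℝ) * (∑ l, (a l i : ℝ)) = ∑ l, (a l i : ℝ) := by
      intro i; rw [← Finset.sum_mul, hA1, one_mul]
    simp_rw [this]
    exact hCtot
  -- ∑_{i,j} A i j * C j = twoC2 + 2n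
  have hS2 : ∑ i : Fin (2*n), ∑ j, (a i j : ℝ) * (∑ l, (a l j : ℝ)) = twoC2 + 2*(n:ℝ) := by
    have hdiagsum : ∑ i : Fin (2*n), ∑ j, (a i j : ℝ) * (a i j : ℝ) = 2*(n:ℝ) := by
      simp_rw [hAsq]; exact hAtot
    have hsplit : ∀ i l : Fin (2*n), (∑ j, if i ≠ l then (a i j : ℝ) * (a l j : ℝ) else 0)
        = (∑ j, (a i j : ℝ) * (a l j : ℝ))
          - (if i = l then (∑ j, (a i j : ℝ) * (a l j : ℝ)) else 0) := by
      intro i l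
      by_cases h : i = l
      · simp [h]
      · simp [h]
    have hC2' : twoC2 = (∑ i : Fin (2*n), ∑ l, ∑ j, (a i j : ℝ) * (a l j : ℝ)) - 2*(n:ℝ) := by
      rw [hC2]
      simp_rw [hsplit]
      simp only [Finset.sum_sub_distrib]
      congr 1
      have : ∀ i : Fin (2*n),
          (∑ l, if i = l then (∑ j, (a i j : ℝ) * (a l j : ℝ)) else 0)
            = ∑ j, (a i j : ℝ) * (a i j : ℝ) := by
        intro i
        rw [Finset.sum_ite_eq univ i (fun l => ∑ j, (a i j : ℝ) * (a l j : ℝ)),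
          if_pos (Finset.mem_univ i)]
      simp_rw [this]
      exact hdiagsum
    have hswap : ∑ i : Fin (2*n), ∑ j, (a i j : ℝ) * (∑ l, (a l j : ℝ))
        = ∑ i : Fin (2*n), ∑ l, ∑ j, (a i j : ℝ) * (a l j : ℝ) := by
      have h1 : ∀ i : Fin (2*n), ∑ l : Fin (2*n), ∑ j, (a i j : ℝ) * (a l j : ℝ)
          = ∑ j, (a i j : ℝ) * (∑ l, (a l j : ℝ)) := by
        intro i
        rw [Finset.sum_comm]
        exact Finset.sum_congr rfl fun j _ => by rw [← Finset.mul_sum]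
      simp_rw [h1]
    rw [hswap, hC2']
    ring
  have hC1R : ∑ i : Fin (2*n), ∑ j, (a i j : ℝ) * (a j i : ℝ) = twoC1 := hC1.symm
  have hD12' : ∀ σ, D12 σ = ∑ i, ∑ j, (a i j : ℝ) * fI n (σ i) * gI n (σ j) := hD12
  have hD21' : ∀ σ, D21 σ = ∑ k, ∑ l, (a l k : ℝ) * fI n (σ k) * gI n (σ l) := hD21
  have hexp : ∀ σ : Equiv.Perm (Fin (2*n)), D12 σ * D21 σ = ∑ i, ∑ k, ∑ j, ∑ l,
      ((a i j : ℝ) * fI n (σ i) * gI n (σ j)) * ((a l k : ℝ) * fI n (σ k) * gI n (σ l)) := by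
    intro σ
    rw [hD12' σ, hD21' σ, Finset.sum_mul_sum]
    exact Finset.sum_congr rfl fun i _ => Finset.sum_congr rfl fun k _ => by
      rw [Finset.sum_mul_sum]
  -- the sigma-summed V
  have hVfac : ∀ i k j l : Fin (2*n),
      (∑ σ : Equiv.Perm (Fin (2*n)),
        ((a i j : ℝ) * fI n (σ i) * gI n (σ j)) * ((a l k : ℝ) * fI n (σ k) * gI n (σ l)))
      = (a i j : ℝ) * (a l k : ℝ) *
        ∑ σ : Equiv.Perm (Fin (2*n)), fI n (σ i) * gI n (σ j) * (fI n (σ k) * gI n (σ l)) := by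
    intro i k j l
    rw [Finset.mul_sum]
    exact Finset.sum_congr rfl fun σ _ => by ring
  have hswapP : ∑ σ : Equiv.Perm (Fin (2*n)), D12 σ * D21 σ
      = ∑ i, ∑ k, ∑ j, ∑ l, ∑ σ : Equiv.Perm (Fin (2*n)),
        ((a i j : ℝ) * fI n (σ i) * gI n (σ j)) * ((a l k : ℝ) * fI n (σ k) * gI n (σ l)) := by
    calc ∑ σ : Equiv.Perm (Fin (2*n)), D12 σ * D21 σ
        = ∑ σ : Equiv.Perm (Fin (2*n)), ∑ i, ∑ k, ∑ j, ∑ l,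
          ((a i j : ℝ) * fI n (σ i) * gI n (σ j)) * ((a l k : ℝ) * fI n (σ k) * gI n (σ l)) :=
          Finset.sum_congr rfl fun σ _ => hexp σ
      _ = ∑ i, ∑ σ : Equiv.Perm (Fin (2*n)), ∑ k, ∑ j, ∑ l, _ := Finset.sum_comm
      _ = ∑ i, ∑ k, ∑ σ : Equiv.Perm (Fin (2*n)), ∑ j, ∑ l, _ :=
          Finset.sum_congr rfl fun i _ => Finset.sum_comm
      _ = ∑ i, ∑ k, ∑ j, ∑ σ : Equiv.Perm (Fin (2*n)), ∑ l, _ :=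
          Finset.sum_congr rfl fun i _ => Finset.sum_congr rfl fun k _ => Finset.sum_comm
      _ = ∑ i, ∑ k, ∑ j, ∑ l, ∑ σ : Equiv.Perm (Fin (2*n)), _ :=
          Finset.sum_congr rfl fun i _ => Finset.sum_congr rfl fun k _ =>
            Finset.sum_congr rfl fun j _ => Finset.sum_comm
  set V : Fin (2*n) → Fin (2*n) → Fin (2*n) → Fin (2*n) → ℝ := fun i k j l =>
    ∑ σ : Equiv.Perm (Fin (2*n)),
      ((a i j : ℝ) * fI n (σ i) * gI n (σ j)) * ((a l k : ℝ) * fI n (σ k) * gI n (σ l))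
    with hVdef
  have hswapP' : ∑ σ : Equiv.Perm (Fin (2*n)), D12 σ * D21 σ
      = ∑ i, ∑ k, ∑ j, ∑ l, V i k j l := hswapP
  have hVfac' : ∀ i k j l : Fin (2*n), V i k j l = (a i j : ℝ) * (a l k : ℝ) *
      ∑ σ : Equiv.Perm (Fin (2*n)), fI n (σ i) * gI n (σ j) * (fI n (σ k) * gI n (σ l)) :=
    hVfac
  have hsplit : ∑ i, ∑ k, ∑ j, ∑ l, V i k j l
      = (∑ i, ∑ j, V i i j j)
        + (∑ i, ∑ j, ∑ l ∈ univ.erase j, V i i j l)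
        + ((∑ i, ∑ k ∈ univ.erase i, ∑ j, V i k j j)
        + (∑ i, ∑ k ∈ univ.erase i, ∑ j, ∑ l ∈ univ.erase j, V i k j l)) := by
    have h1 : ∀ i k j : Fin (2*n), ∑ l, V i k j l
        = V i k j j + ∑ l ∈ univ.erase j, V i k j l :=
      fun i k j => (Finset.add_sum_erase univ (V i k j) (Finset.mem_univ j)).symm
    simp_rw [h1]
    have h2 : ∀ i : Fin (2*n), (∑ k, ∑ j, (V i k j j + ∑ l ∈ univ.erase j, V i k j l))
        = (∑ j, (V i i j j + ∑ l ∈ univ.erase j, V i i j l))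
          + ∑ k ∈ univ.erase i, ∑ j, (V i k j j + ∑ l ∈ univ.erase j, V i k j l) :=
      fun i => (Finset.add_sum_erase univ
        (fun k => ∑ j, (V i k j j + ∑ l ∈ univ.erase j, V i k j l))
        (Finset.mem_univ i)).symm
    simp_rw [h2]
    simp only [Finset.sum_add_distrib]
  have hG1 : ∑ i, ∑ j, V i i j j
      = (((2*n-2).factorial : ℝ) * ((n:ℝ)*n)) * twoC1 := by
    have hptw : ∀ i j : Fin (2*n), V i i j j
        = (a i j : ℝ) * (a j i : ℝ) * (((2*n-2).factorial : ℝ) * ((n:ℝ)*n)) := by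
      intro i j
      rw [hVfac']
      by_cases hij : i = j
      · subst hij; rw [hA0]; ring
      · congr 1
        have hpt : ∀ σ : Equiv.Perm (Fin (2*n)),
            fI n (σ i) * gI n (σ j) * (fI n (σ i) * gI n (σ j)) = fI n (σ i) * gI n (σ j) := by
          intro σ
          rw [show fI n (σ i) * gI n (σ j) * (fI n (σ i) * gI n (σ j))
            = (fI n (σ i) * fI n (σ i)) * (gI n (σ j) * gI n (σ j)) from by ring, ffI, ggI]
        rw [Finset.sum_congr rfl fun σ _ => hpt σ, T2v n i j hij]
    simp_rw [hptw, ← Finset.sum_mul]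
    rw [hC1R]
    ring
  have hG2 : ∑ i, ∑ j, ∑ l ∈ univ.erase j, V i i j l
      = (((2*n-3).factorial : ℝ) * ((n:ℝ) * ((n:ℝ)*n - n))) * (2*(n:ℝ) - twoC1) := by
    have hptw : ∀ i j l : Fin (2*n), l ≠ j → V i i j l
        = (a i j : ℝ) * (a l i : ℝ) * (((2*n-3).factorial : ℝ) * ((n:ℝ) * ((n:ℝ)*n - n))) := by
      intro i j l hlj
      rw [hVfac']
      by_cases hij : i = j
      · subst hij; rw [hA0]; ring
      · by_cases hil : i = l
        · subst hil; rw [hA0]; ring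
        · congr 1
          have hpt : ∀ σ : Equiv.Perm (Fin (2*n)),
              fI n (σ i) * gI n (σ j) * (fI n (σ i) * gI n (σ l))
                = fI n (σ i) * gI n (σ j) * gI n (σ l) := by
            intro σ
            rw [show fI n (σ i) * gI n (σ j) * (fI n (σ i) * gI n (σ l))
              = fI n (σ i) * fI n (σ i) * gI n (σ j) * gI n (σ l) from by ring, ffI]
          rw [Finset.sum_congr rfl fun σ _ => hpt σ,
            T3av n i j l hij hil (fun h => hlj h.symm)]
    have h2 : ∀ i j : Fin (2*n), ∑ l ∈ univ.erase j, V i i j l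
        = (((2*n-3).factorial : ℝ) * ((n:ℝ) * ((n:ℝ)*n - n)))
          * ((a i j : ℝ) * (∑ l, (a l i : ℝ)) - (a i j : ℝ) * (a j i : ℝ)) := by
      intro i j
      rw [Finset.sum_congr rfl (fun l hl => hptw i j l (Finset.mem_erase.1 hl).1)]
      rw [Finset.sum_congr rfl (fun l _ => show (a i j : ℝ) * (a l i : ℝ)
        * (((2*n-3).factorial : ℝ) * ((n:ℝ) * ((n:ℝ)*n - n)))
        = ((((2*n-3).factorial : ℝ) * ((n:ℝ) * ((n:ℝ)*n - n))) * (a i j : ℝ)) * (a l i : ℝ)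
        from by ring)]
      rw [← Finset.mul_sum, Finset.sum_erase_eq_sub (Finset.mem_univ j)]
      ring
    simp_rw [h2, ← Finset.mul_sum]
    simp only [Finset.sum_sub_distrib]
    rw [hS1, hC1R]
  have hG3 : ∑ i, ∑ k ∈ univ.erase i, ∑ j, V i k j j
      = (((2*n-3).factorial : ℝ) * (((n:ℝ)*n - n) * (n:ℝ))) * (2*(n:ℝ) - twoC1) := by
    have hptw : ∀ i k j : Fin (2*n), k ≠ i → V i k j j
        = (a i j : ℝ) * (a j k : ℝ) * (((2*n-3).factorial : ℝ) * (((n:ℝ)*n - n) * (n:ℝ))) := by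
      intro i k j hki
      rw [hVfac']
      by_cases hij : i = j
      · subst hij; rw [hA0]; ring
      · by_cases hjk : j = k
        · subst hjk; rw [hA0]; ring
        · congr 1
          have hpt : ∀ σ : Equiv.Perm (Fin (2*n)),
              fI n (σ i) * gI n (σ j) * (fI n (σ k) * gI n (σ j))
                = fI n (σ i) * fI n (σ k) * gI n (σ j) := by
            intro σ
            rw [show fI n (σ i) * gI n (σ j) * (fI n (σ k) * gI n (σ j))
              = fI n (σ i) * fI n (σ k) * (gI n (σ j) * gI n (σ j)) from by ring, ggI]
          rw [Finset.sum_congr rfl fun σ _ => hpt σ,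
            T3bv n i j k hij (fun h => hki h.symm) hjk]
    have h2 : ∀ i : Fin (2*n), ∑ k ∈ univ.erase i, ∑ j, V i k j j
        = ∑ j, ∑ k ∈ univ.erase i, V i k j j := fun i => Finset.sum_comm
    simp_rw [h2]
    have h3 : ∀ i j : Fin (2*n), ∑ k ∈ univ.erase i, V i k j j
        = (((2*n-3).factorial : ℝ) * (((n:ℝ)*n - n) * (n:ℝ)))
          * ((a i j : ℝ) - (a i j : ℝ) * (a j i : ℝ)) := by
      intro i j
      rw [Finset.sum_congr rfl (fun k hk => hptw i k j (Finset.mem_erase.1 hk).1)]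
      rw [Finset.sum_congr rfl (fun k _ => show (a i j : ℝ) * (a j k : ℝ)
        * (((2*n-3).factorial : ℝ) * (((n:ℝ)*n - n) * (n:ℝ)))
        = ((((2*n-3).factorial : ℝ) * (((n:ℝ)*n - n) * (n:ℝ))) * (a i j : ℝ)) * (a j k : ℝ)
        from by ring)]
      rw [← Finset.mul_sum, Finset.sum_erase_eq_sub (Finset.mem_univ i), hA1]
      ring
    simp_rw [h3, ← Finset.mul_sum]
    simp only [Finset.sum_sub_distrib]
    rw [hAtot, hC1R]
  have hG4 : ∑ i, ∑ k ∈ univ.erase i, ∑ j, ∑ l ∈ univ.erase j, V i k j l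
      = (((2*n-4).factorial : ℝ) * (((n:ℝ)*n - n) * ((n:ℝ)*n - n)))
          * ((2*(n:ℝ))*(2*(n:ℝ)) - 3*(2*(n:ℝ)) + twoC1 - twoC2) := by
    have hptw : ∀ i k j l : Fin (2*n), k ≠ i → l ≠ j → V i k j l
        = (((2*n-4).factorial : ℝ) * (((n:ℝ)*n - n) * ((n:ℝ)*n - n)))
          * ((a i j : ℝ) * ((a l k : ℝ) * (if l = i then (0:ℝ) else 1)
              * (if k = j then (0:ℝ) else 1))) := by
      intro i k j l hki hlj
      rw [hVfac']
      by_cases h1 : i = l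
      · subst h1
        have hz : ∑ σ : Equiv.Perm (Fin (2*n)),
            fI n (σ i) * gI n (σ j) * (fI n (σ k) * gI n (σ i)) = 0 := by
          apply Finset.sum_eq_zero
          intro σ _
          rw [show fI n (σ i) * gI n (σ j) * (fI n (σ k) * gI n (σ i))
            = (fI n (σ i) * gI n (σ i)) * (gI n (σ j) * fI n (σ k)) from by ring,
            fgI0, zero_mul]
        rw [hz, if_pos rfl]
        ring
      · by_cases h2 : j = k
        · subst h2
          have hz : ∑ σ : Equiv.Perm (Fin (2*n)),
              fI n (σ i) * gI n (σ j) * (fI n (σ j) * gI n (σ l)) = 0 := by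
            apply Finset.sum_eq_zero
            intro σ _
            rw [show fI n (σ i) * gI n (σ j) * (fI n (σ j) * gI n (σ l))
              = (fI n (σ j) * gI n (σ j)) * (fI n (σ i) * gI n (σ l)) from by ring,
              fgI0, zero_mul]
          rw [hz, if_pos rfl]
          ring
        · rw [if_neg (fun h => h1 h.symm), if_neg (fun h => h2 h.symm)]
          by_cases h3 : i = j
          · subst h3; rw [hA0]; ring
          · by_cases h4 : k = l
            · subst h4; rw [hA0]; ring
            · rw [T4v n i j k l h3 (fun h => hki h.symm) h1 h2 (fun h => hlj h.symm) h4]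
              ring
    have h4sum : ∀ i j : Fin (2*n), i ≠ j →
        ∑ k ∈ univ.erase i, ∑ l ∈ univ.erase j,
          ((a l k : ℝ) * (if l = i then (0:ℝ) else 1) * (if k = j then (0:ℝ) else 1))
        = 2*(n:ℝ) - 2 - (∑ l, (a l i : ℝ)) - (∑ l, (a l j : ℝ))
            + (a i j : ℝ) + (a j i : ℝ) := by
      intro i j hij
      have hinner : ∀ k : Fin (2*n), ∑ l ∈ univ.erase j,
          ((a l k : ℝ) * (if l = i then (0:ℝ) else 1) * (if k = j then (0:ℝ) else 1))
          = (if k = j then (0:ℝ) else 1)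
            * ((∑ l, (a l k : ℝ)) - (a i k : ℝ) - (a j k : ℝ)) := by
        intro k
        rw [erase_to_e j (fun l => ((a l k : ℝ) * (if l = i then (0:ℝ) else 1)
          * (if k = j then (0:ℝ) else 1)))]
        rw [Finset.sum_congr rfl (fun l _ => show
          (if l = j then (0:ℝ) else 1) * ((a l k : ℝ) * (if l = i then (0:ℝ) else 1)
            * (if k = j then (0:ℝ) else 1))
          = (if k = j then (0:ℝ) else 1)
            * ((if l = i then (0:ℝ) else 1) * (if l = j then (0:ℝ) else 1) * (a l k : ℝ))
          from by ring)]
        rw [← Finset.mul_sum, sum_e2 hij (fun l => (a l k : ℝ))]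
      rw [erase_to_e i (fun k => ∑ l ∈ univ.erase j,
        ((a l k : ℝ) * (if l = i then (0:ℝ) else 1) * (if k = j then (0:ℝ) else 1)))]
      simp_rw [hinner]
      rw [Finset.sum_congr rfl (fun k _ => show
        (if k = i then (0:ℝ) else 1) * ((if k = j then (0:ℝ) else 1)
          * ((∑ l, (a l k : ℝ)) - (a i k : ℝ) - (a j k : ℝ)))
        = (if k = i then (0:ℝ) else 1) * (if k = j then (0:ℝ) else 1)
          * ((∑ l, (a l k : ℝ)) - (a i k : ℝ) - (a j k : ℝ)) from by ring)]
      rw [sum_e2 hij (fun k => (∑ l, (a l k : ℝ)) - (a i k : ℝ) - (a j k : ℝ))]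
      simp only [Finset.sum_sub_distrib]
      rw [hCtot, hA1, hA1, hA0, hA0]
      ring
    have hcomm : ∀ i : Fin (2*n), ∑ k ∈ univ.erase i, ∑ j, ∑ l ∈ univ.erase j, V i k j l
        = ∑ j, ∑ k ∈ univ.erase i, ∑ l ∈ univ.erase j, V i k j l :=
      fun i => Finset.sum_comm
    simp_rw [hcomm]
    have hper : ∀ i j : Fin (2*n), ∑ k ∈ univ.erase i, ∑ l ∈ univ.erase j, V i k j l
        = (((2*n-4).factorial : ℝ) * (((n:ℝ)*n - n) * ((n:ℝ)*n - n)))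
          * ((a i j : ℝ) * (2*(n:ℝ) - 2 - (∑ l, (a l i : ℝ)) - (∑ l, (a l j : ℝ))
              + (a i j : ℝ) + (a j i : ℝ))) := by
      intro i j
      rw [Finset.sum_congr rfl (fun k hk => Finset.sum_congr rfl
        (fun l hl => hptw i k j l (Finset.mem_erase.1 hk).1 (Finset.mem_erase.1 hl).1))]
      simp_rw [← Finset.mul_sum]
      by_cases hij : i = j
      · subst hij; rw [hA0]; ring
      · rw [h4sum i j hij]
    simp_rw [hper, ← Finset.mul_sum]
    congr 1
    have expand : ∀ i j : Fin (2*n), (a i j : ℝ) * (2*(n:ℝ) - 2 - (∑ l, (a l i : ℝ))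
        - (∑ l, (a l j : ℝ)) + (a i j : ℝ) + (a j i : ℝ))
        = (a i j : ℝ) * (2*(n:ℝ) - 2) - (a i j : ℝ) * (∑ l, (a l i : ℝ))
          - (a i j : ℝ) * (∑ l, (a l j : ℝ)) + (a i j : ℝ) * (a i j : ℝ)
          + (a i j : ℝ) * (a j i : ℝ) := fun i j => by ring
    simp_rw [expand]
    simp only [Finset.sum_add_distrib, Finset.sum_sub_distrib]
    have hconst : ∑ i : Fin (2*n), ∑ j, (a i j : ℝ) * (2*(n:ℝ) - 2)
        = 2*(n:ℝ) * (2*(n:ℝ) - 2) := by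
      simp_rw [← Finset.sum_mul]
      rw [hAtot]
    have hsq : ∑ i : Fin (2*n), ∑ j, (a i j : ℝ) * (a i j : ℝ) = 2*(n:ℝ) := by
      simp_rw [hAsq]; exact hAtot
    rw [hconst, hS1, hS2, hsq, hC1R]
    ring
  rw [hswapP', hsplit, hG1, hG2, hG3, hG4]
  ring




theorem stmt7 (n : ℕ) (hn : 2 ≤ n) (a : Fin (2 * n) → Fin (2 * n) → ℕ)
    (ha01 : ∀ i j, a i j ≤ 1) (hdiag : ∀ i, a i i = 0)
    (hrow : ∀ i, ∑ j, a i j = 1)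
    (D12 D21 : Equiv.Perm (Fin (2 * n)) → ℝ)
    (hD12 : ∀ σ, D12 σ = ∑ i, ∑ j, (a i j : ℝ) *
      (if (σ i : ℕ) < n then 1 else 0) * (if n ≤ (σ j : ℕ) then 1 else 0))
    (hD21 : ∀ σ, D21 σ = ∑ i, ∑ j, (a j i : ℝ) *
      (if (σ i : ℕ) < n then 1 else 0) * (if n ≤ (σ j : ℕ) then 1 else 0))
    (N twoC1 twoC2 : ℝ)
    (hN : N = (2 * n : ℕ))
    (hC1 : twoC1 = ∑ i, ∑ j, (a i j : ℝ) * (a j i : ℝ))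
    (hC2 : twoC2 = ∑ i, ∑ l, ∑ j, if i ≠ l then (a i j : ℝ) * (a l j : ℝ) else 0) :
    (∑ σ : Equiv.Perm (Fin (2 * n)), D12 σ * D21 σ) /
        (Fintype.card (Equiv.Perm (Fin (2 * n))) : ℝ) -
      ((∑ σ : Equiv.Perm (Fin (2 * n)), D12 σ) /
          (Fintype.card (Equiv.Perm (Fin (2 * n))) : ℝ)) *
        ((∑ σ : Equiv.Perm (Fin (2 * n)), D21 σ) /
          (Fintype.card (Equiv.Perm (Fin (2 * n))) : ℝ)) =
    (1 / 16) * (N ^ 2 / (N - 1) - N ^ 2 / (N - 1) ^ 2 +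
      (twoC1 - twoC2) * (N * (N - 2) / ((N - 1) * (N - 3)))) := by
  have hA1 : ∀ i, ∑ j, (a i j : ℝ) = 1 := by
    intro i; rw [← Nat.cast_sum, hrow i, Nat.cast_one]
  have hAtot : ∑ i : Fin (2*n), ∑ j, (a i j : ℝ) = 2*(n:ℝ) := by
    simp_rw [hA1]
    rw [Finset.sum_const, Finset.card_univ, Fintype.card_fin, nsmul_eq_mul]
    push_cast; ring
  have hM12 : ∑ σ : Equiv.Perm (Fin (2*n)), D12 σ
      = ((2*n-2).factorial : ℝ) * ((n:ℝ)*n) * (2*(n:ℝ)) :=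
    meanD n a hdiag hAtot D12 hD12
  have hM21 : ∑ σ : Equiv.Perm (Fin (2*n)), D21 σ
      = ((2*n-2).factorial : ℝ) * ((n:ℝ)*n) * (2*(n:ℝ)) := by
    refine meanD n (fun i j => a j i) (fun i => hdiag i) ?_ D21 hD21
    rw [Finset.sum_comm]
    exact hAtot
  have hP := bigP n hn a ha01 hdiag hrow D12 D21 hD12 hD21 twoC1 twoC2 hC1 hC2
  have hcard : (Fintype.card (Equiv.Perm (Fin (2*n))) : ℝ) = ((2*n).factorial : ℝ) := by
    rw [Fintype.card_perm, Fintype.card_fin]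
  rw [hM12, hM21, hP, hcard, hN]
  obtain ⟨m, rfl⟩ : ∃ m, n = m + 2 := ⟨n - 2, by omega⟩
  have h2 : 2*(m+2)-2 = 2*m+2 := by omega
  have h3 : 2*(m+2)-3 = 2*m+1 := by omega
  have h4 : 2*(m+2)-4 = 2*m := by omega
  have e2 : 2*m+2 = (2*m+1)+1 := by omega
  have eN : 2*(m+2) = (2*m+3)+1 := by omega
  have e3 : 2*m+3 = (2*m+2)+1 := by omega
  have hf3 : ((2*(m+2)-3).factorial : ℝ) = ((m:ℝ)*2+1) * ((2*m).factorial : ℝ) := by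
    rw [h3, Nat.factorial_succ]
    push_cast; ring
  have hf2 : ((2*(m+2)-2).factorial : ℝ)
      = ((m:ℝ)*2+2) * ((m:ℝ)*2+1) * ((2*m).factorial : ℝ) := by
    rw [h2, e2, Nat.factorial_succ, Nat.factorial_succ]
    push_cast; ring
  have hfN : ((2*(m+2)).factorial : ℝ)
      = ((m:ℝ)*2+4) * ((m:ℝ)*2+3) * ((m:ℝ)*2+2) * ((m:ℝ)*2+1) * ((2*m).factorial : ℝ) := by
    rw [eN, Nat.factorial_succ, e3, Nat.factorial_succ, e2, Nat.factorial_succ,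
      Nat.factorial_succ]
    push_cast; ring
  rw [h4, hf3, hf2, hfN]
  have hr : ((2*m).factorial : ℝ) ≠ 0 := by
    exact_mod_cast Nat.factorial_ne_zero (2*m)
  have hx : (0:ℝ) ≤ (m:ℝ) := Nat.cast_nonneg m
  push_cast
  set x := (m:ℝ)
  set r := ((2*m).factorial : ℝ)
  have d1 : x*2+4 ≠ 0 := by positivity
  have d2 : x*2+3 ≠ 0 := by positivity
  have d3 : x*2+2 ≠ 0 := by positivity
  have d4 : x*2+1 ≠ 0 := by positivity
  have dA : 2*(x+2)-1 ≠ 0 := by intro h; nlinarith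
  have dC : 2*(x+2)-3 ≠ 0 := by intro h; nlinarith
  field_simp
  ring
end

section
/- Suppose each of N = 2n points is independently assigned to the treatment group with probability 1/2 (the bootstrap null). Then the between-group nearest-neighbor count D₁₂ = Σ_{i,j} a(i,j)·1[i treated]·1[j control] satisfies E_B(D₁₂) = N/4 and E_B(D₁₂²) = (1/16)(N² + N + 2C₁ + 2C₂). -/
open Finset

noncomputable def chi (b : Bool) : ℝ := if b then 1 else -1

lemma chi_true : chi true = 1 := rfl
lemma chi_false : chi false = -1 := rfl

lemma master_s9 {m : ℕ} (f : Fin m → Bool → ℝ) :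
    ∑ ε : Fin m → Bool, ∏ i, f i (ε i) = ∏ i, (f i true + f i false) := by
  classical
  have h := Finset.prod_univ_sum (fun _ : Fin m => (Finset.univ : Finset Bool)) f
  rw [Fintype.piFinset_univ] at h
  rw [← h]
  exact Finset.prod_congr rfl fun i _ => by rw [Fintype.sum_bool]

lemma momGen {m : ℕ} (c : Fin m → ℕ) :
    ∑ ε : Fin m → Bool, ∏ i, (chi (ε i)) ^ (c i) =
      if ∀ i, Even (c i) then (2:ℝ)^m else 0 := by
  rw [master_s9 fun i b => (chi b) ^ (c i)]
  by_cases h : ∀ i, Even (c i)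
  · rw [if_pos h]
    have h2 : ∀ i : Fin m, chi true ^ c i + chi false ^ c i = 2 := by
      intro i
      rw [chi_true, chi_false, one_pow, (h i).neg_one_pow]; norm_num
    rw [Finset.prod_congr rfl fun i _ => h2 i, Finset.prod_const]
    simp
  · rw [if_neg h]
    push_neg at h
    obtain ⟨i, hi⟩ := h
    apply Finset.prod_eq_zero (Finset.mem_univ i)
    rw [Nat.not_even_iff_odd] at hi
    rw [chi_true, chi_false, one_pow, hi.neg_one_pow]; norm_num

lemma chi_prod_single {m : ℕ} (ε : Fin m → Bool) (i : Fin m) :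
    ∏ k, (chi (ε k)) ^ (if k = i then 1 else 0) = chi (ε i) := by
  simp [pow_ite]

lemma mom1 {m : ℕ} (i : Fin m) : ∑ ε : Fin m → Bool, chi (ε i) = 0 := by
  rw [Finset.sum_congr rfl fun ε _ => (chi_prod_single ε i).symm, momGen, if_neg]
  push_neg
  exact ⟨i, by simp⟩

lemma mom2 {m : ℕ} (i j : Fin m) :
    ∑ ε : Fin m → Bool, chi (ε i) * chi (ε j) = if i = j then (2:ℝ)^m else 0 := by
  have h : ∀ ε : Fin m → Bool, chi (ε i) * chi (ε j) =
      ∏ k, (chi (ε k)) ^ ((if k = i then 1 else 0) + (if k = j then 1 else 0)) := by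
    intro ε
    simp only [pow_add, Finset.prod_mul_distrib, chi_prod_single]
  rw [Finset.sum_congr rfl fun ε _ => h ε, momGen]
  by_cases hij : i = j
  · subst hij
    rw [if_pos rfl, if_pos]
    intro k
    by_cases hk : k = i <;> simp [hk]
  · rw [if_neg hij, if_neg]
    push_neg
    exact ⟨i, by simp [hij]⟩

lemma mom3 {m : ℕ} (p i j : Fin m) (hij : i ≠ j) :
    ∑ ε : Fin m → Bool, chi (ε p) * (chi (ε i) * chi (ε j)) = 0 := by
  have h : ∀ ε : Fin m → Bool, chi (ε p) * (chi (ε i) * chi (ε j)) =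
      ∏ k, (chi (ε k)) ^
        ((if k = p then 1 else 0) + ((if k = i then 1 else 0) + (if k = j then 1 else 0))) := by
    intro ε
    simp only [pow_add, Finset.prod_mul_distrib, chi_prod_single]
  rw [Finset.sum_congr rfl fun ε _ => h ε, momGen, if_neg]
  push_neg
  by_cases hpi : p = i
  · subst hpi
    exact ⟨j, by simp [hij.symm, Ne.symm hij]⟩
  · exact ⟨i, by simp [Ne.symm hpi, hij]⟩

lemma mom4 {m : ℕ} (i j k l : Fin m) (hij : i ≠ j) (hkl : k ≠ l) :
    ∑ ε : Fin m → Bool, (chi (ε i) * chi (ε j)) * (chi (ε k) * chi (ε l)) =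
      if (i = k ∧ j = l) ∨ (i = l ∧ j = k) then (2:ℝ)^m else 0 := by
  have h : ∀ ε : Fin m → Bool, (chi (ε i) * chi (ε j)) * (chi (ε k) * chi (ε l)) =
      ∏ p, (chi (ε p)) ^
        (((if p = i then 1 else 0) + (if p = j then 1 else 0)) +
         ((if p = k then 1 else 0) + (if p = l then 1 else 0))) := by
    intro ε
    simp only [pow_add, Finset.prod_mul_distrib, chi_prod_single]
  rw [Finset.sum_congr rfl fun ε _ => h ε, momGen]
  refine if_congr ?_ rfl rfl
  constructor
  · intro h'
    have h1 := h' i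
    have h2 := h' j
    rw [Nat.even_iff] at h1 h2
    by_cases hik : i = k <;> by_cases hil : i = l <;> by_cases hjk : j = k <;>
      by_cases hjl : j = l <;> simp_all
  · rintro (⟨rfl, rfl⟩ | ⟨rfl, rfl⟩) <;> intro p <;>
      by_cases h1 : p = i <;> by_cases h2 : p = j <;> simp_all [Nat.even_iff]

theorem stmt9 (n : ℕ) (hn : 1 ≤ n) (a : Fin (2 * n) → Fin (2 * n) → ℕ)
    (ha01 : ∀ i j, a i j ≤ 1) (hdiag : ∀ i, a i i = 0)
    (hrow : ∀ i, ∑ j, a i j = 1)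
    (D : (Fin (2 * n) → Bool) → ℝ)
    (hD : ∀ ε, D ε = ∑ i, ∑ j, (a i j : ℝ) *
      (if ε i = true then 1 else 0) * (if ε j = false then 1 else 0))
    (N twoC1 twoC2 : ℝ)
    (hN : N = (2 * n : ℕ))
    (hC1 : twoC1 = ∑ i, ∑ j, (a i j : ℝ) * (a j i : ℝ))
    (hC2 : twoC2 = ∑ i, ∑ l, ∑ j, if i ≠ l then (a i j : ℝ) * (a l j : ℝ) else 0) :
    (∑ ε : Fin (2 * n) → Bool, D ε) /
        (Fintype.card (Fin (2 * n) → Bool) : ℝ) = N / 4 ∧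
    (∑ ε : Fin (2 * n) → Bool, (D ε) ^ 2) /
        (Fintype.card (Fin (2 * n) → Bool) : ℝ) =
      (1 / 16) * (N ^ 2 + N + twoC1 + twoC2) := by
  classical
  set K : ℝ := (2:ℝ)^(2*n) with hK
  have hK0 : K ≠ 0 := by positivity
  have hcard : (Fintype.card (Fin (2 * n) → Bool) : ℝ) = K := by
    rw [Fintype.card_fun]
    push_cast
    simp [hK]
  -- basic facts about a
  have haR : ∀ i j, (a i j : ℝ) * (a i j : ℝ) = (a i j : ℝ) := by
    intro i j
    rcases Nat.le_one_iff_eq_zero_or_eq_one.mp (ha01 i j) with h | h <;> simp [h]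
  have hdiagR : ∀ i, (a i i : ℝ) = 0 := fun i => by rw [hdiag i]; simp
  have hrowR : ∀ i, ∑ j, (a i j : ℝ) = 1 := by
    intro i
    rw [← Nat.cast_sum, hrow i, Nat.cast_one]
  have hNval : ∑ i, ∑ j, (a i j : ℝ) = N := by
    rw [Finset.sum_congr rfl fun i _ => hrowR i, hN]
    simp [Finset.card_univ]
  set d : Fin (2*n) → ℝ := fun j => ∑ i, (a i j : ℝ) with hd
  set w : Fin (2*n) → ℝ := fun i => 1 - d i with hw
  have hsumd : ∑ j, d j = N := by
    rw [hd, Finset.sum_comm]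
    exact hNval
  have hd2 : ∑ j, d j * d j = N + twoC2 := by
    have h1 : ∀ j, d j * d j = ∑ i, ∑ l, (a i j : ℝ) * (a l j : ℝ) := by
      intro j
      rw [hd, Finset.sum_mul_sum]
    rw [Finset.sum_congr rfl fun j _ => h1 j, Finset.sum_comm]
    have h2 : ∀ i, ∑ j, ∑ l, (a i j : ℝ) * (a l j : ℝ) = ∑ l, ∑ j, (a i j : ℝ) * (a l j : ℝ) :=
      fun i => Finset.sum_comm
    rw [Finset.sum_congr rfl fun i _ => h2 i]
    have h3 : ∀ i l j : Fin (2*n), (a i j : ℝ) * (a l j : ℝ) =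
        (if i ≠ l then (a i j : ℝ) * (a l j : ℝ) else 0) +
        (if i = l then (a i j : ℝ) * (a l j : ℝ) else 0) := by
      intro i l j
      by_cases h : i = l <;> simp [h]
    calc ∑ i, ∑ l, ∑ j, (a i j : ℝ) * (a l j : ℝ)
        = ∑ i, ∑ l, ∑ j, ((if i ≠ l then (a i j : ℝ) * (a l j : ℝ) else 0) +
            (if i = l then (a i j : ℝ) * (a l j : ℝ) else 0)) := by
          refine Finset.sum_congr rfl fun i _ => Finset.sum_congr rfl fun l _ =>
            Finset.sum_congr rfl fun j _ => h3 i l j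
      _ = twoC2 + ∑ i, ∑ l, ∑ j, (if i = l then (a i j : ℝ) * (a l j : ℝ) else 0) := by
          simp only [Finset.sum_add_distrib]
          rw [hC2]
      _ = N + twoC2 := by
          have h4 : ∀ i : Fin (2*n), ∑ l, ∑ j, (if i = l then (a i j : ℝ) * (a l j : ℝ) else 0)
              = ∑ j, (a i j : ℝ) := by
            intro i
            have : ∀ l, ∑ j, (if i = l then (a i j : ℝ) * (a l j : ℝ) else 0)
                = if i = l then ∑ j, (a i j : ℝ) * (a l j : ℝ) else 0 := by
              intro l; by_cases h : i = l <;> simp [h]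
            rw [Finset.sum_congr rfl fun l _ => this l, Finset.sum_ite_eq]
            simp [Finset.sum_congr rfl fun j _ => haR i j]
          rw [Finset.sum_congr rfl fun i _ => h4 i, hNval]
          ring
  have hw2 : ∑ i, w i * w i = twoC2 := by
    have h1 : ∀ i, w i * w i = 1 - 2 * d i + d i * d i := by
      intro i; rw [hw]; ring
    rw [Finset.sum_congr rfl fun i _ => h1 i]
    rw [Finset.sum_add_distrib, Finset.sum_sub_distrib, ← Finset.mul_sum, hsumd, hd2]
    have : ∑ _i : Fin (2*n), (1:ℝ) = N := by
      rw [hN]; simp [Finset.card_univ]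
    rw [this]; ring
  -- Fourier form of D
  set W : (Fin (2*n) → Bool) → ℝ := fun ε => ∑ i, w i * chi (ε i) with hW
  set Cf : (Fin (2*n) → Bool) → ℝ := fun ε => ∑ i, ∑ j, (a i j : ℝ) * (chi (ε i) * chi (ε j))
    with hCf
  have hind1 : ∀ b : Bool, (if b = true then (1:ℝ) else 0) = (1 + chi b)/2 := by
    intro b; cases b <;> simp [chi] <;> norm_num
  have hind0 : ∀ b : Bool, (if b = false then (1:ℝ) else 0) = (1 - chi b)/2 := by
    intro b; cases b <;> simp [chi] <;> norm_num
  have hDf : ∀ ε, D ε = (1/4) * (N + W ε - Cf ε) := by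
    intro ε
    rw [hD]
    have e1 : ∀ i j : Fin (2*n),
        (a i j : ℝ) * (if ε i = true then 1 else 0) * (if ε j = false then 1 else 0)
        = (1/4) * ((a i j : ℝ) + (a i j : ℝ) * chi (ε i) - (a i j : ℝ) * chi (ε j)
            - (a i j : ℝ) * (chi (ε i) * chi (ε j))) := by
      intro i j; rw [hind1, hind0]; ring
    rw [Finset.sum_congr rfl fun i _ => Finset.sum_congr rfl fun j _ => e1 i j]
    have e2 : ∀ i : Fin (2*n),
        ∑ j, (1/4) * ((a i j : ℝ) + (a i j : ℝ) * chi (ε i) - (a i j : ℝ) * chi (ε j)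
            - (a i j : ℝ) * (chi (ε i) * chi (ε j)))
        = (1/4) * ((∑ j, (a i j : ℝ)) + (∑ j, (a i j : ℝ)) * chi (ε i)
            - (∑ j, (a i j : ℝ) * chi (ε j))
            - ∑ j, (a i j : ℝ) * (chi (ε i) * chi (ε j))) := by
      intro i
      rw [← Finset.mul_sum]
      congr 1
      rw [Finset.sum_sub_distrib, Finset.sum_sub_distrib, Finset.sum_add_distrib,
        ← Finset.sum_mul]
    rw [Finset.sum_congr rfl fun i _ => e2 i]
    rw [← Finset.mul_sum]
    congr 1
    have e3 : ∀ i : Fin (2*n),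
        (∑ j, (a i j : ℝ)) + (∑ j, (a i j : ℝ)) * chi (ε i)
            - (∑ j, (a i j : ℝ) * chi (ε j))
            - ∑ j, (a i j : ℝ) * (chi (ε i) * chi (ε j))
        = ((∑ j, (a i j : ℝ)) + chi (ε i) - (∑ j, (a i j : ℝ) * chi (ε j)))
            - ∑ j, (a i j : ℝ) * (chi (ε i) * chi (ε j)) := by
      intro i
      rw [hrowR i]
      ring
    rw [Finset.sum_congr rfl fun i _ => e3 i]
    rw [Finset.sum_sub_distrib, Finset.sum_sub_distrib, Finset.sum_add_distrib]
    rw [hNval, hCf]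
    have e4 : ∑ i, ∑ j, (a i j : ℝ) * chi (ε j) = ∑ i, d i * chi (ε i) := by
      rw [Finset.sum_comm]
      refine Finset.sum_congr rfl fun j _ => ?_
      rw [hd, Finset.sum_mul]
    rw [e4, hW]
    beta_reduce
    have e5 : ∀ x : Fin (2*n), w x * chi (ε x) = chi (ε x) - d x * chi (ε x) := by
      intro x; rw [hw]; ring
    rw [Finset.sum_congr rfl fun x _ => e5 x, Finset.sum_sub_distrib]
    ring
  -- basic sums over ε
  have hconst : ∀ x : ℝ, ∑ _ε : Fin (2*n) → Bool, x = K * x := by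
    intro x
    rw [Finset.sum_const, Finset.card_univ, nsmul_eq_mul, ← hcard]
  have hA : ∑ ε : Fin (2*n) → Bool, W ε = 0 := by
    simp only [hW]
    rw [Finset.sum_comm]
    refine Finset.sum_eq_zero fun i _ => ?_
    rw [← Finset.mul_sum, mom1, mul_zero]
  have hC0 : ∑ ε : Fin (2*n) → Bool, Cf ε = 0 := by
    simp only [hCf]
    rw [Finset.sum_comm]
    refine Finset.sum_eq_zero fun i _ => ?_
    rw [Finset.sum_comm]
    refine Finset.sum_eq_zero fun j _ => ?_
    rw [← Finset.mul_sum, mom2]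
    by_cases h : i = j
    · subst h; simp [hdiagR i]
    · simp [h]
  have hWW : ∑ ε : Fin (2*n) → Bool, W ε * W ε = K * twoC2 := by
    simp only [hW]
    have e : ∀ ε : Fin (2*n) → Bool,
        (∑ i, w i * chi (ε i)) * (∑ i, w i * chi (ε i)) =
          ∑ i, ∑ p, (w i * w p) * (chi (ε i) * chi (ε p)) := by
      intro ε
      rw [Finset.sum_mul_sum]
      exact Finset.sum_congr rfl fun i _ => Finset.sum_congr rfl fun p _ => by ring
    rw [Finset.sum_congr rfl fun ε _ => e ε, Finset.sum_comm]
    have e2 : ∀ i : Fin (2*n),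
        ∑ ε : Fin (2*n) → Bool, ∑ p, (w i * w p) * (chi (ε i) * chi (ε p)) = w i * w i * K := by
      intro i
      rw [Finset.sum_comm]
      have e3 : ∀ p, ∑ ε : Fin (2*n) → Bool, (w i * w p) * (chi (ε i) * chi (ε p)) =
          if i = p then w i * w p * K else 0 := by
        intro p
        rw [← Finset.mul_sum, mom2]
        by_cases h : i = p <;> simp [h, hK]
      rw [Finset.sum_congr rfl fun p _ => e3 p, Finset.sum_ite_eq]
      simp
    rw [Finset.sum_congr rfl fun i _ => e2 i, ← Finset.sum_mul, hw2]
    ring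
  have hWC : ∑ ε : Fin (2*n) → Bool, W ε * Cf ε = 0 := by
    simp only [hW, hCf]
    have e : ∀ ε : Fin (2*n) → Bool,
        (∑ p, w p * chi (ε p)) * (∑ i, ∑ j, (a i j : ℝ) * (chi (ε i) * chi (ε j))) =
          ∑ p, ∑ i, ∑ j, (w p * (a i j : ℝ)) * (chi (ε p) * (chi (ε i) * chi (ε j))) := by
      intro ε
      rw [Finset.sum_mul]
      refine Finset.sum_congr rfl fun p _ => ?_
      rw [Finset.mul_sum]
      refine Finset.sum_congr rfl fun i _ => ?_
      rw [Finset.mul_sum]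
      exact Finset.sum_congr rfl fun j _ => by ring
    rw [Finset.sum_congr rfl fun ε _ => e ε, Finset.sum_comm]
    refine Finset.sum_eq_zero fun p _ => ?_
    rw [Finset.sum_comm]
    refine Finset.sum_eq_zero fun i _ => ?_
    rw [Finset.sum_comm]
    refine Finset.sum_eq_zero fun j _ => ?_
    rw [← Finset.mul_sum]
    by_cases h : i = j
    · subst h; simp [hdiagR i]
    · rw [mom3 p i j h, mul_zero]
  have hCC : ∑ ε : Fin (2*n) → Bool, Cf ε * Cf ε = K * (N + twoC1) := by
    simp only [hCf]
    have e : ∀ ε : Fin (2*n) → Bool,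
        (∑ i, ∑ j, (a i j : ℝ) * (chi (ε i) * chi (ε j))) *
          (∑ k, ∑ l, (a k l : ℝ) * (chi (ε k) * chi (ε l))) =
        ∑ i, ∑ j, ∑ k, ∑ l, ((a i j : ℝ) * (a k l : ℝ)) *
          ((chi (ε i) * chi (ε j)) * (chi (ε k) * chi (ε l))) := by
      intro ε
      rw [Finset.sum_mul]
      refine Finset.sum_congr rfl fun i _ => ?_
      rw [Finset.sum_mul]
      refine Finset.sum_congr rfl fun j _ => ?_
      rw [Finset.mul_sum]
      refine Finset.sum_congr rfl fun k _ => ?_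
      rw [Finset.mul_sum]
      exact Finset.sum_congr rfl fun l _ => by ring
    rw [Finset.sum_congr rfl fun ε _ => e ε, Finset.sum_comm]
    have key : ∀ i j k l : Fin (2*n),
        ((a i j : ℝ) * (a k l : ℝ)) *
            (∑ ε : Fin (2*n) → Bool, (chi (ε i) * chi (ε j)) * (chi (ε k) * chi (ε l))) =
          if (i = k ∧ j = l) ∨ (i = l ∧ j = k) then ((a i j : ℝ) * (a k l : ℝ)) * K else 0 := by
      intro i j k l
      by_cases hij : i = j
      · subst hij; simp [hdiagR i]
      · by_cases hkl : k = l
        · subst hkl; simp [hdiagR k]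
        · rw [mom4 i j k l hij hkl]
          by_cases h : (i = k ∧ j = l) ∨ (i = l ∧ j = k) <;> simp [h, hK]
    have e2 : ∀ i : Fin (2*n),
        ∑ ε : Fin (2*n) → Bool, ∑ j, ∑ k, ∑ l, ((a i j : ℝ) * (a k l : ℝ)) *
            ((chi (ε i) * chi (ε j)) * (chi (ε k) * chi (ε l))) =
          ∑ j, ∑ k, ∑ l, (if (i = k ∧ j = l) ∨ (i = l ∧ j = k) then
            ((a i j : ℝ) * (a k l : ℝ)) * K else 0) := by
      intro i
      rw [Finset.sum_comm]
      refine Finset.sum_congr rfl fun j _ => ?_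
      rw [Finset.sum_comm]
      refine Finset.sum_congr rfl fun k _ => ?_
      rw [Finset.sum_comm]
      refine Finset.sum_congr rfl fun l _ => ?_
      rw [← Finset.mul_sum]
      exact key i j k l
    rw [Finset.sum_congr rfl fun i _ => e2 i]
    have inner : ∀ i j : Fin (2*n),
        ∑ k, ∑ l, (if (i = k ∧ j = l) ∨ (i = l ∧ j = k) then
            ((a i j : ℝ) * (a k l : ℝ)) * K else 0) =
          ((a i j : ℝ) * (a i j : ℝ)) * K + ((a i j : ℝ) * (a j i : ℝ)) * K := by
      intro i j
      by_cases hij : i = j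
      · subst hij
        rw [hdiagR i]
        simp
      · have split : ∀ k l : Fin (2*n),
            (if (i = k ∧ j = l) ∨ (i = l ∧ j = k) then ((a i j : ℝ) * (a k l : ℝ)) * K else 0) =
              (if i = k ∧ j = l then ((a i j : ℝ) * (a k l : ℝ)) * K else 0) +
              (if i = l ∧ j = k then ((a i j : ℝ) * (a k l : ℝ)) * K else 0) := by
          intro k l
          by_cases h1 : i = k ∧ j = l
          · by_cases h2 : i = l ∧ j = k
            · exact absurd (h2.1.trans h1.2.symm) hij
            · rw [if_pos (Or.inl h1), if_pos h1, if_neg h2, add_zero]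
          · by_cases h2 : i = l ∧ j = k
            · rw [if_pos (Or.inr h2), if_neg h1, if_pos h2, zero_add]
            · rw [if_neg (by tauto), if_neg h1, if_neg h2, add_zero]
        rw [Finset.sum_congr rfl fun k _ => Finset.sum_congr rfl fun l _ => split k l]
        simp only [Finset.sum_add_distrib]
        congr 1
        · simp only [ite_and]
          have t1 : ∀ k : Fin (2*n),
              ∑ l, (if i = k then (if j = l then ((a i j : ℝ) * (a k l : ℝ)) * K else 0) else 0) =
                if i = k then ((a i j : ℝ) * (a k j : ℝ)) * K else 0 := by
            intro k
            by_cases h : i = k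
            · simp only [if_pos h]
              rw [Finset.sum_ite_eq]
              simp
            · simp [h]
          rw [Finset.sum_congr rfl fun k _ => t1 k, Finset.sum_ite_eq]
          simp
        · simp only [ite_and]
          have t2 : ∀ k : Fin (2*n),
              ∑ l, (if i = l then (if j = k then ((a i j : ℝ) * (a k l : ℝ)) * K else 0) else 0) =
                if j = k then ((a i j : ℝ) * (a k i : ℝ)) * K else 0 := by
            intro k
            by_cases h : j = k
            · simp only [if_pos h]
              rw [Finset.sum_ite_eq]
              simp
            · simp [h]
          rw [Finset.sum_congr rfl fun k _ => t2 k, Finset.sum_ite_eq]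
          simp
    rw [Finset.sum_congr rfl fun i _ => Finset.sum_congr rfl fun j _ => inner i j]
    simp only [Finset.sum_add_distrib]
    have q1 : ∑ i, ∑ j, ((a i j : ℝ) * (a i j : ℝ)) * K = N * K := by
      rw [Finset.sum_congr rfl fun i _ => Finset.sum_congr rfl fun j _ => by rw [haR i j]]
      rw [Finset.sum_congr rfl fun i _ => (Finset.sum_mul ..).symm, ← Finset.sum_mul, hNval]
    have q2 : ∑ i, ∑ j, ((a i j : ℝ) * (a j i : ℝ)) * K = twoC1 * K := by
      rw [Finset.sum_congr rfl fun i _ => (Finset.sum_mul ..).symm, ← Finset.sum_mul, ← hC1]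
    rw [q1, q2]
    ring
  -- conclusion
  have p1 : ∑ ε : Fin (2*n) → Bool, 2*N*(W ε) = 0 := by
    rw [← Finset.mul_sum, hA, mul_zero]
  have p2 : ∑ ε : Fin (2*n) → Bool, 2*N*(Cf ε) = 0 := by
    rw [← Finset.mul_sum, hC0, mul_zero]
  have p3 : ∑ ε : Fin (2*n) → Bool, 2*(W ε * Cf ε) = 0 := by
    rw [← Finset.mul_sum, hWC, mul_zero]
  constructor
  · rw [Finset.sum_congr rfl fun ε _ => hDf ε, ← Finset.mul_sum]
    rw [Finset.sum_sub_distrib, Finset.sum_add_distrib, hA, hC0, hconst, hcard]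
    field_simp
    ring
  · have hsq : ∀ ε, (D ε)^2 = (1/16) * ((N*N + W ε * W ε + Cf ε * Cf ε)
        + 2*N*(W ε) - 2*N*(Cf ε) - 2*(W ε * Cf ε)) := by
      intro ε; rw [hDf ε]; ring
    rw [Finset.sum_congr rfl fun ε _ => hsq ε, ← Finset.mul_sum]
    rw [Finset.sum_sub_distrib, Finset.sum_sub_distrib, Finset.sum_add_distrib,
      Finset.sum_add_distrib, Finset.sum_add_distrib]
    rw [p1, p2, p3, hconst, hWW, hCC, hcard]
    field_simp
    ring
end

section
/- Let G be a spanning tree on N = 2n vertices with C₃ pairs of edges sharing a common node. Under the uniform random permutation labeling (first n labels = treated), the number R₁ of edges with both endpoints treated satisfies Var(R₁) = (1/(16(N−3)))·( −(N−2)(N−6) + 2C₃·N(N−4)/(N−1) ). -/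
open Finset

namespace Stmt15Aux

noncomputable def ind (n : ℕ) (σ : Equiv.Perm (Fin (2 * n))) (x : Fin (2 * n)) : ℝ :=
  if (σ x : ℕ) < n then 1 else 0

noncomputable def P (n : ℕ) (s : Finset (Fin (2 * n))) : ℝ :=
  ∑ σ : Equiv.Perm (Fin (2 * n)), ∏ x ∈ s, ind n σ x

noncomputable def q (n k : ℕ) : ℝ :=
  P n (univ.filter (fun x : Fin (2 * n) => (x : ℕ) < k))

variable {n : ℕ}

lemma card_filter_lt (hn : 0 < n) {k : ℕ} (hk : k ≤ 2 * n) :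
    #(univ.filter (fun x : Fin (2 * n) => (x : ℕ) < k)) = k := by
  have h : #(univ.filter (fun x : Fin (2 * n) => (x : ℕ) < k)) = #(Finset.range k) := by
    have h2n : 0 < 2 * n := by omega
    refine Finset.card_nbij' (fun (x : Fin (2 * n)) => (x : ℕ))
        (fun m => (⟨m % (2 * n), Nat.mod_lt m h2n⟩ : Fin (2 * n))) ?_ ?_ ?_ ?_
    · intro a ha
      simp only [mem_coe, mem_filter, mem_univ, true_and] at ha
      simpa using ha
    · intro m hm
      simp only [mem_coe, mem_range] at hm
      simp only [mem_coe, mem_filter, mem_univ, true_and]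
      simpa [Nat.mod_eq_of_lt (by omega : m < 2 * n)] using hm
    · intro a ha
      ext
      simp [Nat.mod_eq_of_lt a.isLt]
    · intro m hm
      simp only [mem_coe, mem_range] at hm
      simp [Nat.mod_eq_of_lt (by omega : m < 2 * n)]
  rw [h, Finset.card_range]

lemma sum_ind (hn : 0 < n) (σ : Equiv.Perm (Fin (2 * n))) :
    ∑ x, ind n σ x = (n : ℝ) := by
  unfold ind
  rw [Finset.sum_boole]
  have h : #(univ.filter fun x : Fin (2 * n) => ((σ x : ℕ) < n))
      = #(univ.filter fun x : Fin (2 * n) => (x : ℕ) < n) := by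
    refine Finset.card_nbij' (fun a => σ a) (fun a => σ.symm a) ?_ ?_ ?_ ?_
    · intro a ha; simp only [mem_coe, mem_filter, mem_univ, true_and] at *; exact ha
    · intro a ha; simp only [mem_coe, mem_filter, mem_univ, true_and] at *
      simpa using ha
    · intro a _; simp
    · intro a _; simp
  rw [h, card_filter_lt hn (by omega)]

lemma P_congr {s t : Finset (Fin (2 * n))} (h : #s = #t) : P n s = P n t := by
  classical
  let e := Finset.equivOfCardEq h
  set τ := Equiv.extendSubtype e with hτdef
  have hτ : ∀ x ∈ s, τ x ∈ t := by
    intro x hx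
    rw [hτdef, Equiv.extendSubtype_apply_of_mem e x hx]
    exact (e ⟨x, hx⟩).2
  have himg : s.image τ = t := by
    apply Finset.eq_of_subset_of_card_le
    · intro y hy
      rw [Finset.mem_image] at hy
      obtain ⟨x, hx, rfl⟩ := hy
      exact hτ x hx
    · rw [Finset.card_image_of_injective _ τ.injective, h]
  calc P n s = ∑ σ : Equiv.Perm (Fin (2 * n)), ∏ x ∈ s, ind n σ x := rfl
    _ = ∑ σ : Equiv.Perm (Fin (2 * n)), ∏ x ∈ s, ind n (σ * τ) x := by
        exact (Equiv.sum_comp (Equiv.mulRight τ)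
          (fun σ => ∏ x ∈ s, ind n σ x)).symm
    _ = ∑ σ : Equiv.Perm (Fin (2 * n)), ∏ x ∈ s, ind n σ (τ x) := rfl
    _ = ∑ σ : Equiv.Perm (Fin (2 * n)), ∏ y ∈ t, ind n σ y := by
        refine Finset.sum_congr rfl fun σ _ => ?_
        rw [← himg, Finset.prod_image
          (fun a _ b _ hab => τ.injective hab)]
    _ = P n t := rfl

lemma P_eq_q (hn : 0 < n) (s : Finset (Fin (2 * n))) : P n s = q n (#s) := by
  apply P_congr
  rw [card_filter_lt hn]
  calc #s ≤ Fintype.card (Fin (2 * n)) := Finset.card_le_univ s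
    _ = 2 * n := Fintype.card_fin _

lemma q_zero : q n 0 = ((2 * n).factorial : ℝ) := by
  unfold q P
  have h : (univ.filter (fun x : Fin (2 * n) => (x : ℕ) < 0)) = ∅ := by
    simp
  rw [h]
  simp [Fintype.card_perm, Fintype.card_fin]

lemma q_step (hn : 0 < n) {k : ℕ} (hk : k < 2 * n) :
    ((2 * n : ℝ) - k) * q n (k + 1) = ((n : ℝ) - k) * q n k := by
  classical
  set s := univ.filter (fun x : Fin (2 * n) => (x : ℕ) < k) with hs
  have hcard : #s = k := card_filter_lt hn hk.le
  have h1 : ∑ j : Fin (2 * n), ∑ σ : Equiv.Perm (Fin (2 * n)),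
      (∏ x ∈ s, ind n σ x) * ind n σ j = (n : ℝ) * P n s := by
    rw [Finset.sum_comm]
    unfold P
    rw [Finset.mul_sum]
    refine Finset.sum_congr rfl fun σ _ => ?_
    rw [← Finset.mul_sum, sum_ind hn σ, mul_comm]
  have h2 : ∀ j ∈ s, ∑ σ : Equiv.Perm (Fin (2 * n)),
      (∏ x ∈ s, ind n σ x) * ind n σ j = P n s := by
    intro j hj
    unfold P
    refine Finset.sum_congr rfl fun σ _ => ?_
    calc (∏ x ∈ s, ind n σ x) * ind n σ j
        = (∏ x ∈ s.erase j, ind n σ x) * (ind n σ j * ind n σ j) := by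
          rw [← Finset.prod_erase_mul s _ hj]; ring
      _ = (∏ x ∈ s.erase j, ind n σ x) * ind n σ j := by
          congr 1
          unfold ind; split_ifs <;> ring
      _ = ∏ x ∈ s, ind n σ x := Finset.prod_erase_mul s _ hj
  have h3 : ∀ j ∈ sᶜ, ∑ σ : Equiv.Perm (Fin (2 * n)),
      (∏ x ∈ s, ind n σ x) * ind n σ j = q n (k + 1) := by
    intro j hj
    have hj' : j ∉ s := by simpa using hj
    have heq : ∑ σ : Equiv.Perm (Fin (2 * n)),
        (∏ x ∈ s, ind n σ x) * ind n σ j = P n (insert j s) := by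
      unfold P
      refine Finset.sum_congr rfl fun σ _ => ?_
      rw [Finset.prod_insert hj']; ring
    rw [heq, P_eq_q hn, Finset.card_insert_of_notMem hj', hcard]
  have hcompl : #(sᶜ) = 2 * n - k := by
    rw [Finset.card_compl, hcard, Fintype.card_fin]
  have h4 : (n : ℝ) * P n s = (k : ℝ) * P n s + ((2 * n - k : ℕ) : ℝ) * q n (k + 1) := by
    rw [← h1, ← Finset.sum_add_sum_compl s, Finset.sum_congr rfl h2,
      Finset.sum_congr rfl h3, Finset.sum_const, Finset.sum_const, hcard, hcompl,
      nsmul_eq_mul, nsmul_eq_mul]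
  have hPq : P n s = q n k := by rw [P_eq_q hn, hcard]
  rw [hPq] at h4
  have hcast : ((2 * n - k : ℕ) : ℝ) = (2 * n : ℝ) - k := by
    push_cast [Nat.cast_sub hk.le]; ring
  rw [hcast] at h4
  linarith

lemma sum_ind_two (hn : 0 < n) {i j : Fin (2 * n)} (hij : i ≠ j) :
    ∑ σ : Equiv.Perm (Fin (2 * n)), ind n σ i * ind n σ j = q n 2 := by
  have h : ∑ σ : Equiv.Perm (Fin (2 * n)), ind n σ i * ind n σ j = P n {i, j} := by
    unfold P
    refine Finset.sum_congr rfl fun σ _ => ?_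
    rw [Finset.prod_pair hij]
  rw [h, P_eq_q hn, Finset.card_pair hij]

lemma sum_ind_three (hn : 0 < n) {i j k : Fin (2 * n)} (hij : i ≠ j) (hik : i ≠ k)
    (hjk : j ≠ k) :
    ∑ σ : Equiv.Perm (Fin (2 * n)), ind n σ i * ind n σ j * ind n σ k = q n 3 := by
  have hmem : i ∉ ({j, k} : Finset (Fin (2 * n))) := by simp [hij, hik]
  have h : ∑ σ : Equiv.Perm (Fin (2 * n)), ind n σ i * ind n σ j * ind n σ k
      = P n {i, j, k} := by
    unfold P
    refine Finset.sum_congr rfl fun σ _ => ?_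
    rw [show ({i, j, k} : Finset (Fin (2 * n))) = insert i {j, k} from rfl,
      Finset.prod_insert hmem, Finset.prod_pair hjk]
    ring
  rw [h, P_eq_q hn, show #({i, j, k} : Finset (Fin (2 * n))) = 3 by
    rw [show ({i, j, k} : Finset (Fin (2 * n))) = insert i {j, k} from rfl,
      Finset.card_insert_of_notMem hmem, Finset.card_pair hjk]]

lemma sum_ind_four (hn : 0 < n) {i j k l : Fin (2 * n)} (hij : i ≠ j) (hik : i ≠ k)
    (hil : i ≠ l) (hjk : j ≠ k) (hjl : j ≠ l) (hkl : k ≠ l) :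
    ∑ σ : Equiv.Perm (Fin (2 * n)),
      ind n σ i * ind n σ j * (ind n σ k * ind n σ l) = q n 4 := by
  have hmem1 : i ∉ ({j, k, l} : Finset (Fin (2 * n))) := by simp [hij, hik, hil]
  have hmem2 : j ∉ ({k, l} : Finset (Fin (2 * n))) := by simp [hjk, hjl]
  have h : ∑ σ : Equiv.Perm (Fin (2 * n)),
      ind n σ i * ind n σ j * (ind n σ k * ind n σ l) = P n {i, j, k, l} := by
    unfold P
    refine Finset.sum_congr rfl fun σ _ => ?_
    rw [show ({i, j, k, l} : Finset (Fin (2 * n))) = insert i (insert j {k, l}) from rfl,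
      Finset.prod_insert hmem1, Finset.prod_insert hmem2, Finset.prod_pair hkl]
    ring
  rw [h, P_eq_q hn, show #({i, j, k, l} : Finset (Fin (2 * n))) = 4 by
    rw [show ({i, j, k, l} : Finset (Fin (2 * n))) = insert i (insert j {k, l}) from rfl,
      Finset.card_insert_of_notMem hmem1, Finset.card_insert_of_notMem hmem2,
      Finset.card_pair hkl]]

lemma ite_and_split (P Q : Prop) [Decidable P] [Decidable Q] :
    (if P ∧ Q then (1:ℝ) else 0) = (if P then (1:ℝ) else 0) * (if Q then (1:ℝ) else 0) := by
  by_cases hp : P <;> by_cases hq : Q <;> simp [hp, hq]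

lemma sum_aa (hn : 0 < n) {i j k l : Fin (2 * n)} (hij : i ≠ j) (hkl : k ≠ l) :
    ∑ σ : Equiv.Perm (Fin (2 * n)), ind n σ i * ind n σ j * (ind n σ k * ind n σ l)
    = q n 4 + (q n 3 - q n 4) *
        ((if i = k then (1:ℝ) else 0) + (if i = l then (1:ℝ) else 0) +
         (if j = k then (1:ℝ) else 0) + (if j = l then (1:ℝ) else 0)) +
      (q n 2 - 2 * q n 3 + q n 4) *
        ((if i = k then (1:ℝ) else 0) * (if j = l then (1:ℝ) else 0) +
         (if i = l then (1:ℝ) else 0) * (if j = k then (1:ℝ) else 0)) := by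
  by_cases h1 : i = k <;> by_cases h2 : i = l <;> by_cases h3 : j = k <;>
    by_cases h4 : j = l
  · exact absurd (h1.symm.trans h2) hkl
  · exact absurd (h1.symm.trans h2) hkl
  · exact absurd (h1.symm.trans h2) hkl
  · exact absurd (h1.symm.trans h2) hkl
  · exact absurd (h3.symm.trans h4) hkl
  · exact absurd (h1.trans h3.symm) hij
  · -- i = k, j = l : q2 case
    subst h1; subst h4
    have e : ∑ σ : Equiv.Perm (Fin (2 * n)),
        ind n σ i * ind n σ j * (ind n σ i * ind n σ j)
        = ∑ σ : Equiv.Perm (Fin (2 * n)), ind n σ i * ind n σ j :=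
      Finset.sum_congr rfl fun σ _ => by unfold ind; split_ifs <;> ring
    rw [e, sum_ind_two hn hij]
    simp only [eq_self_iff_true, if_true, if_neg hij, if_neg (Ne.symm hij)]
    ring
  · -- i = k only : q3
    subst h1
    have e : ∑ σ : Equiv.Perm (Fin (2 * n)),
        ind n σ i * ind n σ j * (ind n σ i * ind n σ l)
        = ∑ σ : Equiv.Perm (Fin (2 * n)), ind n σ i * ind n σ j * ind n σ l :=
      Finset.sum_congr rfl fun σ _ => by unfold ind; split_ifs <;> ring
    rw [e, sum_ind_three hn hij h2 h4]
    simp only [eq_self_iff_true, if_true, if_neg h2, if_neg h3, if_neg h4]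
    ring
  · exact absurd (h3.symm.trans h4) hkl
  · -- i = l, j = k : q2
    subst h2; subst h3
    have e : ∑ σ : Equiv.Perm (Fin (2 * n)),
        ind n σ i * ind n σ j * (ind n σ j * ind n σ i)
        = ∑ σ : Equiv.Perm (Fin (2 * n)), ind n σ i * ind n σ j :=
      Finset.sum_congr rfl fun σ _ => by unfold ind; split_ifs <;> ring
    rw [e, sum_ind_two hn hij]
    simp only [eq_self_iff_true, if_true, if_neg hij, if_neg (Ne.symm hij)]
    ring
  · exact absurd (h2.trans h4.symm) hij
  · -- i = l only : q3
    subst h2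
    have e : ∑ σ : Equiv.Perm (Fin (2 * n)),
        ind n σ i * ind n σ j * (ind n σ k * ind n σ i)
        = ∑ σ : Equiv.Perm (Fin (2 * n)), ind n σ i * ind n σ j * ind n σ k :=
      Finset.sum_congr rfl fun σ _ => by unfold ind; split_ifs <;> ring
    rw [e, sum_ind_three hn hij h1 h3]
    simp only [eq_self_iff_true, if_true, if_neg h1, if_neg h3, if_neg h4]
    ring
  · exact absurd (h3.symm.trans h4) hkl
  · -- j = k only : q3
    subst h3
    have e : ∑ σ : Equiv.Perm (Fin (2 * n)),
        ind n σ i * ind n σ j * (ind n σ j * ind n σ l)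
        = ∑ σ : Equiv.Perm (Fin (2 * n)), ind n σ i * ind n σ j * ind n σ l :=
      Finset.sum_congr rfl fun σ _ => by unfold ind; split_ifs <;> ring
    rw [e, sum_ind_three hn hij h2 h4]
    simp only [eq_self_iff_true, if_true, if_neg h1, if_neg h2, if_neg h4]
    ring
  · -- j = l only : q3
    subst h4
    have e : ∑ σ : Equiv.Perm (Fin (2 * n)),
        ind n σ i * ind n σ j * (ind n σ k * ind n σ j)
        = ∑ σ : Equiv.Perm (Fin (2 * n)), ind n σ i * ind n σ j * ind n σ k :=
      Finset.sum_congr rfl fun σ _ => by unfold ind; split_ifs <;> ring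
    rw [e, sum_ind_three hn hij h1 h3]
    simp only [eq_self_iff_true, if_true, if_neg h1, if_neg h2, if_neg h3]
    ring
  · -- all distinct : q4
    rw [sum_ind_four hn hij h1 h2 h3 h4 hkl]
    simp only [if_neg h1, if_neg h2, if_neg h3, if_neg h4]
    ring

section Tlemmas

variable {α : Type*} [Fintype α] [DecidableEq α] {f : α → α → ℝ}

lemma T0 : (∑ i, ∑ k, ∑ j, ∑ l : α, f i j * f k l)
    = (∑ i, ∑ j, f i j) * (∑ i, ∑ j, f i j) := by
  rw [Finset.sum_mul_sum]
  refine Finset.sum_congr rfl fun i _ => Finset.sum_congr rfl fun k _ => ?_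
  exact (Finset.sum_mul_sum _ _ _ _).symm

lemma T1a : (∑ i, ∑ k, ∑ j, ∑ l : α, f i j * f k l * (if i = k then (1:ℝ) else 0))
    = ∑ i, (∑ j, f i j) * (∑ j, f i j) := by
  refine Finset.sum_congr rfl fun i _ => ?_
  have h1 : ∀ k : α, (∑ j, ∑ l : α, f i j * f k l * (if i = k then (1:ℝ) else 0))
      = (if i = k then (1:ℝ) else 0) * ((∑ j, f i j) * (∑ l, f k l)) := by
    intro k
    rw [Finset.sum_mul_sum, Finset.mul_sum]
    refine Finset.sum_congr rfl fun j _ => ?_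
    rw [Finset.mul_sum]
    refine Finset.sum_congr rfl fun l _ => ?_
    ring
  rw [Finset.sum_congr rfl fun k _ => h1 k]
  simp only [boole_mul]
  rw [Finset.sum_ite_eq]
  simp

lemma T1b (hsymm : ∀ a b, f a b = f b a) :
    (∑ i, ∑ k, ∑ j, ∑ l : α, f i j * f k l * (if i = l then (1:ℝ) else 0))
    = ∑ i, (∑ j, f i j) * (∑ j, f i j) := by
  refine Finset.sum_congr rfl fun i _ => ?_
  have h1 : ∀ k j : α, (∑ l : α, f i j * f k l * (if i = l then (1:ℝ) else 0))
      = f i j * f k i := by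
    intro k j
    simp only [mul_boole]
    rw [Finset.sum_ite_eq]
    simp
  rw [Finset.sum_congr rfl fun k _ => Finset.sum_congr rfl fun j _ => h1 k j]
  rw [Finset.sum_comm, Finset.sum_mul_sum]
  refine Finset.sum_congr rfl fun j _ => Finset.sum_congr rfl fun k _ => ?_
  rw [hsymm k i]

lemma T1c (hsymm : ∀ a b, f a b = f b a) :
    (∑ i, ∑ k, ∑ j, ∑ l : α, f i j * f k l * (if j = k then (1:ℝ) else 0))
    = ∑ i, (∑ j, f i j) * (∑ j, f i j) := by
  have h1 : ∀ i k j : α, (∑ l : α, f i j * f k l * (if j = k then (1:ℝ) else 0))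
      = (if j = k then (1:ℝ) else 0) * (f i j * ∑ l, f k l) := by
    intro i k j
    conv_rhs => rw [Finset.mul_sum, Finset.mul_sum]
    refine Finset.sum_congr rfl fun l _ => ?_
    ring
  rw [Finset.sum_congr rfl fun i _ => Finset.sum_congr rfl fun k _ =>
    Finset.sum_congr rfl fun j _ => h1 i k j]
  have h2 : ∀ i k : α, (∑ j : α, (if j = k then (1:ℝ) else 0) * (f i j * ∑ l, f k l))
      = f i k * ∑ l, f k l := by
    intro i k
    simp only [boole_mul]
    rw [Finset.sum_ite_eq']
    simp
  rw [Finset.sum_congr rfl fun i _ => Finset.sum_congr rfl fun k _ => h2 i k]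
  rw [Finset.sum_comm]
  refine Finset.sum_congr rfl fun k _ => ?_
  rw [← Finset.sum_mul]
  have h3 : (∑ i, f i k) = ∑ i, f k i := Finset.sum_congr rfl fun i _ => hsymm i k
  rw [h3]

lemma T1d (hsymm : ∀ a b, f a b = f b a) :
    (∑ i, ∑ k, ∑ j, ∑ l : α, f i j * f k l * (if j = l then (1:ℝ) else 0))
    = ∑ i, (∑ j, f i j) * (∑ j, f i j) := by
  have h1 : ∀ i k j : α, (∑ l : α, f i j * f k l * (if j = l then (1:ℝ) else 0))
      = f i j * f k j := by
    intro i k j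
    simp only [mul_boole]
    rw [Finset.sum_ite_eq]
    simp
  rw [Finset.sum_congr rfl fun i _ => Finset.sum_congr rfl fun k _ =>
    Finset.sum_congr rfl fun j _ => h1 i k j]
  rw [show (∑ i, ∑ k, ∑ j : α, f i j * f k j) = ∑ i, ∑ j, ∑ k : α, f i j * f k j from
    Finset.sum_congr rfl fun i _ => Finset.sum_comm]
  rw [Finset.sum_comm]
  refine Finset.sum_congr rfl fun j _ => ?_
  rw [show ((∑ i, f j i) * ∑ i, f j i) = ∑ i, ∑ k : α, f j i * f j k from
    Finset.sum_mul_sum _ _ _ _]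
  refine Finset.sum_congr rfl fun i _ => Finset.sum_congr rfl fun k _ => ?_
  rw [hsymm i j, hsymm k j]

lemma T2a (hb : ∀ a b, f a b * f a b = f a b) :
    (∑ i, ∑ k, ∑ j, ∑ l : α, f i j * f k l *
      ((if i = k then (1:ℝ) else 0) * (if j = l then (1:ℝ) else 0)))
    = ∑ i, ∑ j, f i j := by
  refine Finset.sum_congr rfl fun i _ => ?_
  have h1 : ∀ k j : α, (∑ l : α, f i j * f k l *
      ((if i = k then (1:ℝ) else 0) * (if j = l then (1:ℝ) else 0)))
      = f i j * f k j * (if i = k then (1:ℝ) else 0) := by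
    intro k j
    have hpt : ∀ l : α, f i j * f k l *
        ((if i = k then (1:ℝ) else 0) * (if j = l then (1:ℝ) else 0))
        = if j = l then f i j * f k l * (if i = k then (1:ℝ) else 0) else 0 := by
      intro l; split_ifs <;> ring
    rw [Finset.sum_congr rfl fun l _ => hpt l, Finset.sum_ite_eq]
    simp
  rw [Finset.sum_congr rfl fun k _ => Finset.sum_congr rfl fun j _ => h1 k j]
  have h2 : ∀ k : α, (∑ j : α, f i j * f k j * (if i = k then (1:ℝ) else 0))
      = (if i = k then (1:ℝ) else 0) * ∑ j, f i j * f k j := by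
    intro k
    rw [Finset.mul_sum]
    exact Finset.sum_congr rfl fun j _ => by ring
  rw [Finset.sum_congr rfl fun k _ => h2 k]
  simp only [boole_mul]
  rw [Finset.sum_ite_eq]
  simp only [mem_univ, if_true]
  exact Finset.sum_congr rfl fun j _ => hb i j

lemma T2b (hsymm : ∀ a b, f a b = f b a) (hb : ∀ a b, f a b * f a b = f a b) :
    (∑ i, ∑ k, ∑ j, ∑ l : α, f i j * f k l *
      ((if i = l then (1:ℝ) else 0) * (if j = k then (1:ℝ) else 0)))
    = ∑ i, ∑ j, f i j := by
  refine Finset.sum_congr rfl fun i _ => ?_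
  have h1 : ∀ k j : α, (∑ l : α, f i j * f k l *
      ((if i = l then (1:ℝ) else 0) * (if j = k then (1:ℝ) else 0)))
      = f i j * f k i * (if j = k then (1:ℝ) else 0) := by
    intro k j
    have hpt : ∀ l : α, f i j * f k l *
        ((if i = l then (1:ℝ) else 0) * (if j = k then (1:ℝ) else 0))
        = if i = l then f i j * f k l * (if j = k then (1:ℝ) else 0) else 0 := by
      intro l; split_ifs <;> ring
    rw [Finset.sum_congr rfl fun l _ => hpt l, Finset.sum_ite_eq]
    simp
  rw [Finset.sum_congr rfl fun k _ => Finset.sum_congr rfl fun j _ => h1 k j]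
  have h2 : ∀ k : α, (∑ j : α, f i j * f k i * (if j = k then (1:ℝ) else 0))
      = f i k * f k i := by
    intro k
    have hpt : ∀ j : α, f i j * f k i * (if j = k then (1:ℝ) else 0)
        = if j = k then f i j * f k i else 0 := by
      intro j; split_ifs <;> ring
    rw [Finset.sum_congr rfl fun j _ => hpt j, Finset.sum_ite_eq']
    simp
  rw [Finset.sum_congr rfl fun k _ => h2 k]
  refine Finset.sum_congr rfl fun k _ => ?_
  rw [hsymm k i]
  exact hb i k

end Tlemmas

lemma pull4 {β : Type*} [Fintype β] (c : ℝ) (g : β → β → β → β → ℝ) :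
    (∑ i, ∑ k, ∑ j, ∑ l, c * g i k j l) = c * ∑ i, ∑ k, ∑ j, ∑ l, g i k j l := by
  simp only [← Finset.mul_sum]

lemma sum_comm5 {β : Type*} [Fintype β]
    (g : Equiv.Perm (Fin (2 * n)) → β → β → β → β → ℝ) :
    (∑ σ : Equiv.Perm (Fin (2 * n)), ∑ i, ∑ k, ∑ j, ∑ l, g σ i k j l)
    = ∑ i, ∑ k, ∑ j, ∑ l, ∑ σ : Equiv.Perm (Fin (2 * n)), g σ i k j l := by
  rw [Finset.sum_comm]
  refine Finset.sum_congr rfl fun i _ => ?_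
  rw [Finset.sum_comm]
  refine Finset.sum_congr rfl fun k _ => ?_
  rw [Finset.sum_comm]
  refine Finset.sum_congr rfl fun j _ => ?_
  rw [Finset.sum_comm]

lemma inner_aa (hn : 0 < n) (G : SimpleGraph (Fin (2 * n))) [DecidableRel G.Adj]
    (i k j l : Fin (2 * n)) :
    (∑ σ : Equiv.Perm (Fin (2 * n)),
      (if G.Adj i j ∧ (σ i : ℕ) < n ∧ (σ j : ℕ) < n then (1:ℝ) else 0) *
      (if G.Adj k l ∧ (σ k : ℕ) < n ∧ (σ l : ℕ) < n then (1:ℝ) else 0))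
    = (if G.Adj i j then (1:ℝ) else 0) * (if G.Adj k l then (1:ℝ) else 0) *
      (q n 4 + (q n 3 - q n 4) *
        ((if i = k then (1:ℝ) else 0) + (if i = l then (1:ℝ) else 0) +
         (if j = k then (1:ℝ) else 0) + (if j = l then (1:ℝ) else 0)) +
       (q n 2 - 2 * q n 3 + q n 4) *
        ((if i = k then (1:ℝ) else 0) * (if j = l then (1:ℝ) else 0) +
         (if i = l then (1:ℝ) else 0) * (if j = k then (1:ℝ) else 0))) := by
  by_cases hA : G.Adj i j
  · by_cases hB : G.Adj k l
    · have hpt : ∀ σ : Equiv.Perm (Fin (2 * n)),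
          (if G.Adj i j ∧ (σ i : ℕ) < n ∧ (σ j : ℕ) < n then (1:ℝ) else 0) *
          (if G.Adj k l ∧ (σ k : ℕ) < n ∧ (σ l : ℕ) < n then (1:ℝ) else 0)
          = ind n σ i * ind n σ j * (ind n σ k * ind n σ l) := by
        intro σ
        unfold ind
        simp only [hA, hB, true_and]
        split_ifs <;> simp_all
      rw [Finset.sum_congr rfl fun σ _ => hpt σ,
        sum_aa hn (G.ne_of_adj hA) (G.ne_of_adj hB), if_pos hA, if_pos hB]
      ring
    · simp [hB]
  · simp [hA]

end Stmt15Aux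

open Stmt15Aux Finset

set_option maxHeartbeats 1000000 in
theorem stmt15 (n : ℕ) (hn : 3 ≤ n) (G : SimpleGraph (Fin (2 * n)))
    [DecidableRel G.Adj] (hG : G.IsTree)
    (R1 : Equiv.Perm (Fin (2 * n)) → ℝ)
    (hR1 : ∀ σ, R1 σ = (∑ i, ∑ j,
      if G.Adj i j ∧ (σ i : ℕ) < n ∧ (σ j : ℕ) < n then (1 : ℝ) else 0) / 2)
    (N C3 : ℝ) (hN : N = (2 * n : ℕ))
    (hC3 : C3 = ∑ v, ((G.degree v).choose 2 : ℝ)) :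
    (∑ σ : Equiv.Perm (Fin (2 * n)), (R1 σ) ^ 2) /
        (Fintype.card (Equiv.Perm (Fin (2 * n))) : ℝ) -
      ((∑ σ : Equiv.Perm (Fin (2 * n)), R1 σ) /
        (Fintype.card (Equiv.Perm (Fin (2 * n))) : ℝ)) ^ 2 =
    (1 / (16 * (N - 3))) *
      (-((N - 2) * (N - 6)) + 2 * C3 * (N * (N - 4) / (N - 1))) := by
  classical
  have hn0 : 0 < n := by omega
  have h3n : (3:ℝ) ≤ (n:ℝ) := by exact_mod_cast hn
  set F : ℝ := ((2 * n).factorial : ℝ) with hF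
  have hcardP : ((Fintype.card (Equiv.Perm (Fin (2 * n)))) : ℝ) = F := by
    rw [hF, Fintype.card_perm, Fintype.card_fin]
  have hsymm : ∀ a b : Fin (2 * n),
      (if G.Adj a b then (1:ℝ) else 0) = (if G.Adj b a then (1:ℝ) else 0) := by
    intro a b
    by_cases h : G.Adj a b
    · rw [if_pos h, if_pos h.symm]
    · rw [if_neg h, if_neg (fun h' => h h'.symm)]
  have hbo : ∀ a b : Fin (2 * n),
      (if G.Adj a b then (1:ℝ) else 0) * (if G.Adj a b then (1:ℝ) else 0)
        = (if G.Adj a b then (1:ℝ) else 0) := by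
    intro a b; split_ifs <;> ring
  set A : ℝ := ∑ i, ∑ j, (if G.Adj i j then (1:ℝ) else 0) with hAdef
  set D2 : ℝ := ∑ i, (∑ j, (if G.Adj i j then (1:ℝ) else 0)) *
      (∑ j, (if G.Adj i j then (1:ℝ) else 0)) with hD2def
  have hdeg : ∀ i, (∑ j, (if G.Adj i j then (1:ℝ) else 0)) = (G.degree i : ℝ) := by
    intro i
    rw [Finset.sum_boole]
    norm_cast
    rw [← SimpleGraph.neighborFinset_eq_filter]
    rfl
  have hedge : G.edgeFinset.card = 2 * n - 1 := by
    have h := hG.card_edgeFinset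
    rw [Fintype.card_fin] at h
    omega
  have hA : A = 4 * (n:ℝ) - 2 := by
    have h1 : A = ((∑ i, G.degree i : ℕ) : ℝ) := by
      rw [hAdef, Nat.cast_sum]
      exact Finset.sum_congr rfl fun i _ => hdeg i
    rw [h1, SimpleGraph.sum_degrees_eq_twice_card_edges, hedge]
    have h2 : (2 * (2 * n - 1) : ℕ) = 4 * n - 2 := by omega
    rw [h2, Nat.cast_sub (by omega : 2 ≤ 4 * n)]
    push_cast; ring
  have hD2 : D2 = 2 * C3 + A := by
    have hD2' : D2 = ∑ v, (G.degree v : ℝ) * (G.degree v : ℝ) := by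
      rw [hD2def]
      exact Finset.sum_congr rfl fun v _ => by rw [hdeg]
    have hA' : A = ∑ v, (G.degree v : ℝ) := by
      rw [hAdef]
      exact Finset.sum_congr rfl fun v _ => hdeg v
    rw [hD2', hC3, hA', Finset.mul_sum, ← Finset.sum_add_distrib]
    refine Finset.sum_congr rfl fun v _ => ?_
    rw [Nat.cast_choose_two]
    ring
  have d0 : (2 * (n:ℝ)) ≠ 0 := by intro h; nlinarith
  have d1 : (2 * (n:ℝ) - 1) ≠ 0 := by intro h; nlinarith
  have d2 : (2 * (n:ℝ) - 2) ≠ 0 := by intro h; nlinarith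
  have d3 : (2 * (n:ℝ) - 3) ≠ 0 := by intro h; nlinarith
  have hFne : F ≠ 0 := by
    rw [hF]
    exact_mod_cast Nat.factorial_ne_zero (2 * n)
  have h0 : q n 0 = F := q_zero
  have hs0 := q_step hn0 (n := n) (k := 0) (by omega)
  have hs1 := q_step hn0 (n := n) (k := 1) (by omega)
  have hs2 := q_step hn0 (n := n) (k := 2) (by omega)
  have hs3 := q_step hn0 (n := n) (k := 3) (by omega)
  norm_num at hs0 hs1 hs2 hs3
  rw [h0] at hs0
  have e1 : q n 1 = (n:ℝ) * F / (2 * (n:ℝ)) := by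
    rw [eq_div_iff d0]
    linear_combination hs0
  have e2 : q n 2 = (n:ℝ) * ((n:ℝ) - 1) * F / (2 * (n:ℝ) * (2 * (n:ℝ) - 1)) := by
    rw [e1] at hs1
    rw [eq_div_iff (mul_ne_zero d0 d1)]
    field_simp at hs1
    linear_combination (n:ℝ) * hs1
  have e3 : q n 3 = (n:ℝ) * ((n:ℝ) - 1) * ((n:ℝ) - 2) * F /
      (2 * (n:ℝ) * (2 * (n:ℝ) - 1) * (2 * (n:ℝ) - 2)) := by
    rw [e2] at hs2
    rw [eq_div_iff (mul_ne_zero (mul_ne_zero d0 d1) d2)]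
    field_simp at hs2
    linear_combination (n:ℝ) * hs2
  have e4 : q n 4 = (n:ℝ) * ((n:ℝ) - 1) * ((n:ℝ) - 2) * ((n:ℝ) - 3) * F /
      (2 * (n:ℝ) * (2 * (n:ℝ) - 1) * (2 * (n:ℝ) - 2) * (2 * (n:ℝ) - 3)) := by
    have h3' := (eq_div_iff (mul_ne_zero (mul_ne_zero d0 d1) d2)).1 e3
    rw [eq_div_iff (mul_ne_zero (mul_ne_zero (mul_ne_zero d0 d1) d2) d3)]
    linear_combination (2 * (n:ℝ) * (2 * (n:ℝ) - 1) * (2 * (n:ℝ) - 2)) * hs3 + ((n:ℝ) - 3) * h3'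
  have haij : ∀ i j : Fin (2 * n),
      (∑ σ : Equiv.Perm (Fin (2 * n)),
        (if G.Adj i j ∧ (σ i : ℕ) < n ∧ (σ j : ℕ) < n then (1:ℝ) else 0))
      = (if G.Adj i j then (1:ℝ) else 0) * q n 2 := by
    intro i j
    by_cases hAd : G.Adj i j
    · have hij := G.ne_of_adj hAd
      have hpt : ∀ σ : Equiv.Perm (Fin (2 * n)),
          (if G.Adj i j ∧ (σ i : ℕ) < n ∧ (σ j : ℕ) < n then (1:ℝ) else 0)
          = ind n σ i * ind n σ j := by
        intro σ
        unfold Stmt15Aux.ind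
        simp only [hAd, true_and]
        exact ite_and_split _ _
      rw [Finset.sum_congr rfl fun σ _ => hpt σ, sum_ind_two hn0 hij]
      simp [hAd]
    · simp [hAd]
  have hS1 : (∑ σ : Equiv.Perm (Fin (2 * n)), R1 σ) = A * q n 2 / 2 := by
    simp only [hR1]
    rw [← Finset.sum_div]
    congr 1
    rw [Finset.sum_comm]
    rw [Finset.sum_congr rfl fun i (_ : i ∈ univ) => Finset.sum_comm]
    rw [Finset.sum_congr rfl fun i (_ : i ∈ univ) =>
      Finset.sum_congr rfl fun j (_ : j ∈ univ) => haij i j]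
    simp only [← Finset.sum_mul]
    rw [← hAdef]
  have hS2 : (∑ σ : Equiv.Perm (Fin (2 * n)), (R1 σ) ^ 2)
      = (q n 4 * (A * A) + (q n 3 - q n 4) * (4 * D2)
          + (q n 2 - 2 * q n 3 + q n 4) * (2 * A)) / 4 := by
    simp only [hR1, div_pow]
    rw [← Finset.sum_div]
    rw [show ((2:ℝ)^2) = 4 from by norm_num]
    congr 1
    have hsq : ∀ σ : Equiv.Perm (Fin (2 * n)),
        (∑ i, ∑ j, (if G.Adj i j ∧ (σ i : ℕ) < n ∧ (σ j : ℕ) < n then (1:ℝ) else 0)) ^ 2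
        = ∑ i, ∑ k, ∑ j, ∑ l,
            (if G.Adj i j ∧ (σ i : ℕ) < n ∧ (σ j : ℕ) < n then (1:ℝ) else 0) *
            (if G.Adj k l ∧ (σ k : ℕ) < n ∧ (σ l : ℕ) < n then (1:ℝ) else 0) := by
      intro σ
      rw [sq, Finset.sum_mul_sum]
      refine Finset.sum_congr rfl fun i _ => Finset.sum_congr rfl fun k _ => ?_
      exact Finset.sum_mul_sum _ _ _ _
    rw [Finset.sum_congr rfl fun σ (_ : σ ∈ univ) => hsq σ, sum_comm5]
    rw [Finset.sum_congr rfl fun i (_ : i ∈ univ) =>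
      Finset.sum_congr rfl fun k (_ : k ∈ univ) =>
      Finset.sum_congr rfl fun j (_ : j ∈ univ) =>
      Finset.sum_congr rfl fun l (_ : l ∈ univ) => inner_aa hn0 G i k j l]
    have t0 := T0 (f := fun a b : Fin (2 * n) => if G.Adj a b then (1:ℝ) else 0)
    have t1a := T1a (f := fun a b : Fin (2 * n) => if G.Adj a b then (1:ℝ) else 0)
    have t1b := T1b (f := fun a b : Fin (2 * n) => if G.Adj a b then (1:ℝ) else 0) hsymm
    have t1c := T1c (f := fun a b : Fin (2 * n) => if G.Adj a b then (1:ℝ) else 0) hsymm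
    have t1d := T1d (f := fun a b : Fin (2 * n) => if G.Adj a b then (1:ℝ) else 0) hsymm
    have t2a := T2a (f := fun a b : Fin (2 * n) => if G.Adj a b then (1:ℝ) else 0) hbo
    have t2b := T2b (f := fun a b : Fin (2 * n) => if G.Adj a b then (1:ℝ) else 0) hsymm hbo
    have expand : ∀ i k j l : Fin (2 * n),
        (if G.Adj i j then (1:ℝ) else 0) * (if G.Adj k l then (1:ℝ) else 0) *
          (q n 4 + (q n 3 - q n 4) *
            ((if i = k then (1:ℝ) else 0) + (if i = l then (1:ℝ) else 0) +
             (if j = k then (1:ℝ) else 0) + (if j = l then (1:ℝ) else 0)) +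
           (q n 2 - 2 * q n 3 + q n 4) *
            ((if i = k then (1:ℝ) else 0) * (if j = l then (1:ℝ) else 0) +
             (if i = l then (1:ℝ) else 0) * (if j = k then (1:ℝ) else 0)))
        = q n 4 * ((if G.Adj i j then (1:ℝ) else 0) * (if G.Adj k l then (1:ℝ) else 0))
          + (q n 3 - q n 4) * ((if G.Adj i j then (1:ℝ) else 0) *
              (if G.Adj k l then (1:ℝ) else 0) * (if i = k then (1:ℝ) else 0))
          + (q n 3 - q n 4) * ((if G.Adj i j then (1:ℝ) else 0) *
              (if G.Adj k l then (1:ℝ) else 0) * (if i = l then (1:ℝ) else 0))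
          + (q n 3 - q n 4) * ((if G.Adj i j then (1:ℝ) else 0) *
              (if G.Adj k l then (1:ℝ) else 0) * (if j = k then (1:ℝ) else 0))
          + (q n 3 - q n 4) * ((if G.Adj i j then (1:ℝ) else 0) *
              (if G.Adj k l then (1:ℝ) else 0) * (if j = l then (1:ℝ) else 0))
          + (q n 2 - 2 * q n 3 + q n 4) * ((if G.Adj i j then (1:ℝ) else 0) *
              (if G.Adj k l then (1:ℝ) else 0) *
              ((if i = k then (1:ℝ) else 0) * (if j = l then (1:ℝ) else 0)))
          + (q n 2 - 2 * q n 3 + q n 4) * ((if G.Adj i j then (1:ℝ) else 0) *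
              (if G.Adj k l then (1:ℝ) else 0) *
              ((if i = l then (1:ℝ) else 0) * (if j = k then (1:ℝ) else 0))) := by
      intros; ring
    rw [Finset.sum_congr rfl fun i (_ : i ∈ univ) =>
      Finset.sum_congr rfl fun k (_ : k ∈ univ) =>
      Finset.sum_congr rfl fun j (_ : j ∈ univ) =>
      Finset.sum_congr rfl fun l (_ : l ∈ univ) => expand i k j l]
    simp only [Finset.sum_add_distrib]
    simp only [pull4]
    rw [t0, t1a, t1b, t1c, t1d, t2a, t2b]
    rw [← hAdef, ← hD2def]
    ring
  rw [hS1, hS2, hcardP, hD2, hA, e2, e3, e4]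
  have hN' : N = 2 * (n:ℝ) := by rw [hN]; push_cast; ring
  rw [hN']
  have d5 : (n:ℝ) ≠ 0 := by intro h; nlinarith
  have d6 : (n:ℝ) - 1 ≠ 0 := by intro h; nlinarith
  have d10 : (n:ℝ) - 2 ≠ 0 := by intro h; nlinarith
  have d11 : (n:ℝ) * 2 - 3 ≠ 0 := by intro h; nlinarith
  have d12 : (n:ℝ) * 2 - 1 ≠ 0 := by intro h; nlinarith
  field_simp
  ring
end
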